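/- arXiv:1511.09238 — 6 statements merged into one kernel-verified Lean document; each statement's English description precedes it below -/
import Mathlib

section
/- Let G be a totally disconnected locally compact Hausdorff topological group. Then the set P(G) = {g ∈ G : the closure of the cyclic subgroup ⟨g⟩ is compact} of periodic elements is closed in G. -/
open Set Subgroup Pointwise

section Aux

variable {G : Type*} [Group G]

/-- Covering lemma: if `S ≤ X` and the (finite) relative index of `T` in `S` equals that
of `T` in `X`, then every element of `X` factors as an element of `S` times an element of `T`. -/
theorem cover_of_relindex_eq {S X T : Subgroup G} (hSX : S ≤ X)
    (hne : T.relIndex X ≠ 0) (heq : T.relIndex S = T.relIndex X) :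
    ∀ x ∈ X, ∃ s ∈ S, s⁻¹ * x ∈ T := by
  intro x hx
  have hfin : Finite (X ⧸ T.subgroupOf X) := by
    have : (T.subgroupOf X).index ≠ 0 := hne
    rw [Subgroup.index_eq_card] at this
    exact (Nat.card_ne_zero.mp this).2
  have hinj := (Subgroup.quotientSubgroupOfEmbeddingOfLE T hSX).injective
  have hcard : Nat.card (S ⧸ T.subgroupOf S) = Nat.card (X ⧸ T.subgroupOf X) := by
    rw [← Subgroup.index_eq_card, ← Subgroup.index_eq_card]
    exact heq
  have hbij := (Nat.bijective_iff_injective_and_card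
      (Subgroup.quotientSubgroupOfEmbeddingOfLE T hSX)).mpr ⟨hinj, hcard⟩
  obtain ⟨sbar, hsbar⟩ := hbij.surjective (QuotientGroup.mk ⟨x, hx⟩)
  induction sbar using QuotientGroup.induction_on with
  | H s =>
    refine ⟨(s : G), s.2, ?_⟩
    rw [Subgroup.quotientSubgroupOfEmbeddingOfLE_apply_mk] at hsbar
    have := (QuotientGroup.eq (s := T.subgroupOf X)).mp hsbar
    simpa [Subgroup.mem_subgroupOf] using this

end Aux

section Aux

variable {G : Type*} [Group G] [TopologicalSpace G] [IsTopologicalGroup G] [T2Space G]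

/-- An open subgroup has finite index in a compact subgroup containing it. -/
theorem relindex_ne_zero_of_isOpen_of_isCompact {T X : Subgroup G}
    (hT : IsOpen (T : Set G)) (hX : IsCompact (X : Set G)) :
    T.relIndex X ≠ 0 := by
  have : CompactSpace X := isCompact_iff_compactSpace.mp hX
  have hopen : IsOpen ((T.subgroupOf X : Subgroup X) : Set X) := by
    have : ((T.subgroupOf X : Subgroup X) : Set X) = (Subtype.val) ⁻¹' (T : Set G) := rfl
    rw [this]
    exact hT.preimage continuous_subtype_val
  have : Finite (X ⧸ T.subgroupOf X) :=
    Subgroup.quotient_finite_of_isOpen (T.subgroupOf X) hopen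
  exact Subgroup.index_ne_zero_of_finite

/-- van Dantzig's theorem: a totally disconnected locally compact group
has a compact open subgroup. -/
theorem exists_isCompact_isOpen_subgroup
    [LocallyCompactSpace G] [TotallyDisconnectedSpace G] :
    ∃ U : Subgroup G, IsCompact (U : Set G) ∧ IsOpen (U : Set G) := by
  obtain ⟨C, hCcomp, hCnhds⟩ := exists_compact_mem_nhds (1 : G)
  obtain ⟨K, hKclopen, hK1, hKsub⟩ :
      ∃ K : Set G, IsClopen K ∧ (1 : G) ∈ K ∧ K ⊆ interior C := by
    have hbasis := loc_compact_Haus_tot_disc_of_zero_dim (H := G)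
    obtain ⟨K, hK, h1K, hKs⟩ := hbasis.mem_nhds_iff.mp
      (isOpen_interior.mem_nhds (mem_interior_iff_mem_nhds.mpr hCnhds))
    exact ⟨K, hK, h1K, hKs⟩
  have hKcomp : IsCompact K :=
    hCcomp.of_isClosed_subset hKclopen.isClosed (hKsub.trans interior_subset)
  obtain ⟨V, hVnhds, hVK⟩ := compact_open_separated_mul_left hKcomp hKclopen.isOpen
    (le_refl K)
  -- the stabilizer of K
  let U : Subgroup G :=
  { carrier := {x : G | x • K = K}
    one_mem' := by simp
    mul_mem' := by
      intro a b ha hb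
      simp only [Set.mem_setOf_eq] at *
      rw [mul_smul, hb, ha]
    inv_mem' := by
      intro a ha
      simp only [Set.mem_setOf_eq] at *
      conv_lhs => rw [← ha]
      rw [inv_smul_smul] }
  have hsub : ∀ x ∈ V ∩ V⁻¹, x ∈ U := by
    intro x hx
    have h1 : x • K ⊆ K := by
      rintro _ ⟨k, hk, rfl⟩
      exact hVK (Set.mul_mem_mul hx.1 hk)
    have h2 : x⁻¹ • K ⊆ K := by
      rintro _ ⟨k, hk, rfl⟩
      exact hVK (Set.mul_mem_mul hx.2 hk)
    have h3 : K ⊆ x • K := by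
      intro k hk
      rw [Set.mem_smul_set_iff_inv_smul_mem]
      exact h2 ⟨k, hk, rfl⟩
    exact le_antisymm h1 h3
  have hUopen : IsOpen (U : Set G) := by
    apply Subgroup.isOpen_of_mem_nhds
    filter_upwards [Filter.inter_mem hVnhds (inv_mem_nhds_one G hVnhds)] using hsub
  have hUK : (U : Set G) ⊆ K := by
    intro x hx
    have h := Set.smul_mem_smul_set (a := x) hK1
    rw [hx.out] at h
    simpa using h
  refine ⟨U, ?_, hUopen⟩
  exact hKcomp.of_isClosed_subset (U.isClosed_of_isOpen hUopen) hUK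

end Aux

section Windows

variable {G : Type*} [Group G]

/-- The conjugate subgroup `g^j U₀ g^(-j)`. -/
def conjW (g : G) (U₀ : Subgroup G) (j : ℤ) : Subgroup G :=
  U₀.comap ((MulAut.conj (g ^ (-j))).toMonoidHom)

theorem mem_conjW {g : G} {U₀ : Subgroup G} {j : ℤ} {x : G} :
    x ∈ conjW g U₀ j ↔ g ^ (-j) * x * g ^ j ∈ U₀ := by
  rw [conjW, Subgroup.mem_comap]
  have : (MulAut.conj (g ^ (-j))).toMonoidHom x = g ^ (-j) * x * g ^ j := by
    simp only [MulEquiv.coe_toMonoidHom, MulAut.conj_apply, zpow_neg, inv_inv]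
  rw [this]

theorem conjW_zero {g : G} {U₀ : Subgroup G} : conjW g U₀ 0 = U₀ := by
  ext x; simp [mem_conjW]

/-- Shifting: conjugation by `g^s` moves `conjW` indices. -/
theorem conj_mem_conjW_iff {g : G} {U₀ : Subgroup G} (s j : ℤ) {x : G} :
    g ^ s * x * g ^ (-s) ∈ conjW g U₀ j ↔ x ∈ conjW g U₀ (j - s) := by
  rw [mem_conjW, mem_conjW]
  constructor <;> intro h <;> [skip; skip]
  · have : g ^ (-(j - s)) * x * g ^ (j - s) =
        g ^ (-j) * (g ^ s * x * g ^ (-s)) * g ^ j := by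
      group
    rw [this]; exact h
  · have : g ^ (-j) * (g ^ s * x * g ^ (-s)) * g ^ j =
        g ^ (-(j - s)) * x * g ^ (j - s) := by
      group
    rw [this]; exact h

/-- The window subgroup `⋂_{a ≤ j ≤ b} g^j U₀ g^(-j)`. -/
def wnd (g : G) (U₀ : Subgroup G) (a b : ℤ) : Subgroup G :=
  ⨅ j ∈ Set.Icc a b, conjW g U₀ j

/-- `⋂_{j ≥ a} g^j U₀ g^(-j)`. -/
def wge (g : G) (U₀ : Subgroup G) (a : ℤ) : Subgroup G :=
  ⨅ j ∈ Set.Ici a, conjW g U₀ j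

/-- `⋂_{j ≤ b} g^j U₀ g^(-j)`. -/
def wle (g : G) (U₀ : Subgroup G) (b : ℤ) : Subgroup G :=
  ⨅ j ∈ Set.Iic b, conjW g U₀ j

theorem mem_wnd {g : G} {U₀ : Subgroup G} {a b : ℤ} {x : G} :
    x ∈ wnd g U₀ a b ↔ ∀ j, a ≤ j → j ≤ b → x ∈ conjW g U₀ j := by
  simp [wnd, Subgroup.mem_iInf, Set.mem_Icc, and_imp]

theorem mem_wge {g : G} {U₀ : Subgroup G} {a : ℤ} {x : G} :
    x ∈ wge g U₀ a ↔ ∀ j, a ≤ j → x ∈ conjW g U₀ j := by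
  simp [wge, Subgroup.mem_iInf, Set.mem_Ici]

theorem mem_wle {g : G} {U₀ : Subgroup G} {b : ℤ} {x : G} :
    x ∈ wle g U₀ b ↔ ∀ j, j ≤ b → x ∈ conjW g U₀ j := by
  simp [wle, Subgroup.mem_iInf, Set.mem_Iic]

theorem wnd_le_wnd {g : G} {U₀ : Subgroup G} {a b a' b' : ℤ} (ha : a ≤ a') (hb : b' ≤ b) :
    wnd g U₀ a b ≤ wnd g U₀ a' b' := fun x hx => by
  rw [mem_wnd] at *
  exact fun j hj hj' => hx j (ha.trans hj) (hj'.trans hb)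

theorem wge_le_wnd {g : G} {U₀ : Subgroup G} {a a' b' : ℤ} (ha : a ≤ a') :
    wge g U₀ a ≤ wnd g U₀ a' b' := fun x hx => by
  rw [mem_wge] at hx; rw [mem_wnd]
  exact fun j hj _ => hx j (ha.trans hj)

theorem wle_le_wnd {g : G} {U₀ : Subgroup G} {b a' b' : ℤ} (hb : b' ≤ b) :
    wle g U₀ b ≤ wnd g U₀ a' b' := fun x hx => by
  rw [mem_wle] at hx; rw [mem_wnd]
  exact fun j _ hj => hx j (hj.trans hb)

theorem wge_le_wge {g : G} {U₀ : Subgroup G} {a a' : ℤ} (h : a ≤ a') :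
    wge g U₀ a ≤ wge g U₀ a' := fun x hx => by
  rw [mem_wge] at *
  exact fun j hj => hx j (h.trans hj)

theorem wle_le_wle {g : G} {U₀ : Subgroup G} {b b' : ℤ} (h : b' ≤ b) :
    wle g U₀ b ≤ wle g U₀ b' := fun x hx => by
  rw [mem_wle] at *
  exact fun j hj => hx j (hj.trans h)

/-- Conjugation shift for windows. -/
theorem conj_mem_wnd_iff {g : G} {U₀ : Subgroup G} (s : ℤ) {a b : ℤ} {x : G} :
    g ^ s * x * g ^ (-s) ∈ wnd g U₀ a b ↔ x ∈ wnd g U₀ (a - s) (b - s) := by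
  rw [mem_wnd, mem_wnd]
  constructor
  · intro h j hj hj'
    have := h (j + s) (by omega) (by omega)
    rw [conj_mem_conjW_iff] at this
    simpa using this
  · intro h j hj hj'
    rw [conj_mem_conjW_iff]
    exact h (j - s) (by omega) (by omega)

theorem conj_mem_wge_iff {g : G} {U₀ : Subgroup G} (s : ℤ) {a : ℤ} {x : G} :
    g ^ s * x * g ^ (-s) ∈ wge g U₀ a ↔ x ∈ wge g U₀ (a - s) := by
  rw [mem_wge, mem_wge]
  constructor
  · intro h j hj
    have := h (j + s) (by omega)
    rw [conj_mem_conjW_iff] at this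
    simpa using this
  · intro h j hj
    rw [conj_mem_conjW_iff]
    exact h (j - s) (by omega)

theorem conj_mem_wle_iff {g : G} {U₀ : Subgroup G} (s : ℤ) {b : ℤ} {x : G} :
    g ^ s * x * g ^ (-s) ∈ wle g U₀ b ↔ x ∈ wle g U₀ (b - s) := by
  rw [mem_wle, mem_wle]
  constructor
  · intro h j hj
    have := h (j + s) (by omega)
    rw [conj_mem_conjW_iff] at this
    simpa using this
  · intro h j hj
    rw [conj_mem_conjW_iff]
    exact h (j - s) (by omega)

/-- The relative index of windows is invariant under shifting. -/
theorem relindex_wnd_shift {g : G} {U₀ : Subgroup G} (s : ℤ) (a b c d : ℤ) :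
    (wnd g U₀ (a + s) (b + s)).relIndex (wnd g U₀ (c + s) (d + s)) =
      (wnd g U₀ a b).relIndex (wnd g U₀ c d) := by
  have hcomap : ∀ a b : ℤ, (wnd g U₀ a b).comap ((MulAut.conj (g ^ s)).toMonoidHom) =
      wnd g U₀ (a - s) (b - s) := by
    intro a b
    ext x
    rw [Subgroup.mem_comap]
    have : (MulAut.conj (g ^ s)).toMonoidHom x = g ^ s * x * g ^ (-s) := by
      simp only [MulEquiv.coe_toMonoidHom, MulAut.conj_apply, zpow_neg]
    rw [this, conj_mem_wnd_iff]
  have h1 : wnd g U₀ a b =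
      (wnd g U₀ (a + s) (b + s)).comap ((MulAut.conj (g ^ s)).toMonoidHom) := by
    rw [hcomap]; congr 1 <;> ring
  have h2 : wnd g U₀ c d =
      (wnd g U₀ (c + s) (d + s)).comap ((MulAut.conj (g ^ s)).toMonoidHom) := by
    rw [hcomap]; congr 1 <;> ring
  rw [h1, h2, Subgroup.relIndex_comap,
    Subgroup.map_comap_eq_self_of_surjective (MulAut.conj (g ^ s)).surjective]

end Windows
-- [paste-marker: assumes w3 content above in final file]
section WindowsTopo

variable {G : Type*} [Group G] [TopologicalSpace G] [IsTopologicalGroup G] [T2Space G]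
variable {g : G} {U₀ : Subgroup G}

theorem conjW_carrier_eq (j : ℤ) :
    ((Subgroup.comap ((MulAut.conj (g ^ (-j))).toMonoidHom) U₀ : Subgroup G) : Set G) =
      (fun x => g ^ (-j) * x * g ^ j) ⁻¹' (U₀ : Set G) := by
  ext x
  simp only [Set.mem_preimage, SetLike.mem_coe, Subgroup.mem_comap]
  have : (MulAut.conj (g ^ (-j))).toMonoidHom x = g ^ (-j) * x * g ^ j := by
    simp only [MulEquiv.coe_toMonoidHom, MulAut.conj_apply, zpow_neg, inv_inv]
  rw [this]

theorem isOpen_conjW (hU : IsOpen (U₀ : Set G)) (j : ℤ) :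
    IsOpen ((conjW g U₀ j : Subgroup G) : Set G) := by
  rw [conjW, conjW_carrier_eq]
  exact hU.preimage (by continuity)

theorem isClosed_conjW (hU : IsCompact (U₀ : Set G)) (j : ℤ) :
    IsClosed ((conjW g U₀ j : Subgroup G) : Set G) := by
  rw [conjW, conjW_carrier_eq]
  exact hU.isClosed.preimage (by continuity)

theorem isCompact_conjW (hU : IsCompact (U₀ : Set G)) (j : ℤ) :
    IsCompact ((conjW g U₀ j : Subgroup G) : Set G) := by
  have himg : ((conjW g U₀ j : Subgroup G) : Set G) =
      (fun u => g ^ j * u * g ^ (-j)) '' (U₀ : Set G) := by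
    ext y
    constructor
    · intro hy
      rw [SetLike.mem_coe, mem_conjW] at hy
      exact ⟨g ^ (-j) * y * g ^ j, hy, by group⟩
    · rintro ⟨u, hu, rfl⟩
      rw [SetLike.mem_coe, mem_conjW]
      have : g ^ (-j) * (g ^ j * u * g ^ (-j)) * g ^ j = u := by group
      rw [this]; exact hu
  rw [himg]
  exact hU.image (by continuity)

theorem wnd_carrier_eq (a b : ℤ) :
    ((wnd g U₀ a b : Subgroup G) : Set G) =
      ⋂ j ∈ Finset.Icc a b, ((conjW g U₀ j : Subgroup G) : Set G) := by
  ext x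
  simp only [SetLike.mem_coe, Set.mem_iInter, Finset.mem_Icc, mem_wnd]
  constructor
  · intro h j hj; exact h j hj.1 hj.2
  · intro h j h1 h2; exact h j ⟨h1, h2⟩

theorem isOpen_wnd (hU : IsOpen (U₀ : Set G)) (a b : ℤ) :
    IsOpen ((wnd g U₀ a b : Subgroup G) : Set G) := by
  rw [wnd_carrier_eq]
  exact isOpen_biInter_finset fun j _ => isOpen_conjW hU j

theorem isClosed_wnd (hU : IsCompact (U₀ : Set G)) (a b : ℤ) :
    IsClosed ((wnd g U₀ a b : Subgroup G) : Set G) := by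
  rw [wnd_carrier_eq]
  exact isClosed_biInter fun j _ => isClosed_conjW hU j

theorem isCompact_wnd (hU : IsCompact (U₀ : Set G)) {a b : ℤ} (hab : a ≤ b) :
    IsCompact ((wnd g U₀ a b : Subgroup G) : Set G) := by
  refine (isCompact_conjW (g := g) hU a).of_isClosed_subset (isClosed_wnd hU a b) ?_
  intro x hx
  rw [SetLike.mem_coe, mem_wnd] at hx
  exact hx a le_rfl hab

theorem isClosed_wge (hU : IsCompact (U₀ : Set G)) (a : ℤ) :
    IsClosed ((wge g U₀ a : Subgroup G) : Set G) := by
  have : ((wge g U₀ a : Subgroup G) : Set G) =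
      ⋂ j ∈ Set.Ici a, ((conjW g U₀ j : Subgroup G) : Set G) := by
    ext x
    simp only [SetLike.mem_coe, Set.mem_iInter, Set.mem_Ici, mem_wge]
  rw [this]
  exact isClosed_biInter fun j _ => isClosed_conjW hU j

theorem isClosed_wle (hU : IsCompact (U₀ : Set G)) (b : ℤ) :
    IsClosed ((wle g U₀ b : Subgroup G) : Set G) := by
  have : ((wle g U₀ b : Subgroup G) : Set G) =
      ⋂ j ∈ Set.Iic b, ((conjW g U₀ j : Subgroup G) : Set G) := by
    ext x
    simp only [SetLike.mem_coe, Set.mem_iInter, Set.mem_Iic, mem_wle]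
  rw [this]
  exact isClosed_biInter fun j _ => isClosed_conjW hU j

end WindowsTopo

section TA
set_option linter.unusedSectionVars false

variable {G : Type*} [Group G] [TopologicalSpace G] [IsTopologicalGroup G] [T2Space G]
variable {g : G} {U₀ : Subgroup G}

theorem wnd_inf_eq {a b c d : ℤ} (hac : a ≤ c) (hdb : d ≤ b) (hov : c ≤ d + 1) :
    wnd g U₀ c b ⊓ wnd g U₀ a d = wnd g U₀ a b := by
  ext x
  simp only [Subgroup.mem_inf, mem_wnd]
  constructor
  · rintro ⟨h1, h2⟩ j hj hj'
    rcases le_or_gt c j with h | h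
    · exact h1 j h hj'
    · exact h2 j hj (by omega)
  · intro h
    exact ⟨fun j hj hj' => h j (by omega) hj', fun j hj hj' => h j hj (by omega)⟩

theorem relindex_wnd_shift' {s a b c d a' b' c' d' : ℤ}
    (h1 : a' = a - s) (h2 : b' = b - s) (h3 : c' = c - s) (h4 : d' = d - s) :
    (wnd g U₀ a b).relIndex (wnd g U₀ c d) =
      (wnd g U₀ a' b').relIndex (wnd g U₀ c' d') := by
  subst h1 h2 h3 h4
  have := relindex_wnd_shift (g := g) (U₀ := U₀) s (a - s) (b - s) (c - s) (d - s)
  rw [← this]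
  congr 1 <;> congr 1 <;> omega

/-- Existence of a "TA" window: a window `V = wnd g U₀ 0 N` which factors as
`V = V₋ V₊`. This is (the key part of) Willis's tidying procedure. -/
theorem exists_TA (hUo : IsOpen (U₀ : Set G)) (hUc : IsCompact (U₀ : Set G)) :
    ∃ N : ℤ, 0 ≤ N ∧ ∀ x ∈ wnd g U₀ 0 N,
      ∃ p ∈ wle g U₀ N, ∃ q ∈ wge g U₀ 0, x = p * q := by
  classical
  set r : ℕ → ℕ := fun n => (wnd g U₀ 0 ((n : ℤ) + 1)).relIndex (wnd g U₀ 0 (n : ℤ)) with hr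
  have hrsucc : ∀ n : ℕ, r (n + 1) =
      (wnd g U₀ 0 ((n : ℤ) + 2)).relIndex (wnd g U₀ 0 ((n : ℤ) + 1)) := by
    intro n
    rw [hr]
    simp only []
    congr 1 <;> congr 1 <;> push_cast <;> ring
  have hne : ∀ a b a' b' : ℤ, a' ≤ b' →
      (wnd g U₀ a b).relIndex (wnd g U₀ a' b') ≠ 0 := fun a b a' b' h =>
    relindex_ne_zero_of_isOpen_of_isCompact (isOpen_wnd hUo a b) (isCompact_wnd hUc h)
  have hshift : ∀ n : ℕ,
      (wnd g U₀ 1 ((n : ℤ) + 2)).relIndex (wnd g U₀ 1 ((n : ℤ) + 1)) = r n := by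
    intro n
    rw [hr]
    exact relindex_wnd_shift' (s := 1) (by omega) (by omega) (by omega) (by omega)
  have hinf : ∀ n : ℕ, wnd g U₀ 1 ((n : ℤ) + 2) ⊓ wnd g U₀ 0 ((n : ℤ) + 1) =
      wnd g U₀ 0 ((n : ℤ) + 2) :=
    fun n => wnd_inf_eq (by omega) (by omega) (by omega)
  have hrform : ∀ n : ℕ,
      (wnd g U₀ 1 ((n : ℤ) + 2)).relIndex (wnd g U₀ 0 ((n : ℤ) + 1)) = r (n + 1) := by
    intro n
    rw [hrsucc n, ← hinf n, Subgroup.inf_relIndex_right]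
  have hmono : ∀ n : ℕ, r (n + 1) ≤ r n := by
    intro n
    rw [← hrform n, ← hshift n]
    exact Subgroup.relIndex_le_of_le_right
      (wnd_le_wnd (by omega) (le_refl _))
      (hne 1 ((n : ℤ) + 2) 1 ((n : ℤ) + 1) (by omega))
  have hanti : ∀ m n : ℕ, m ≤ n → r n ≤ r m :=
    fun m n h => antitone_nat_of_succ_le hmono h
  obtain ⟨N, hstab⟩ : ∃ N : ℕ, ∀ n : ℕ, N ≤ n → r n = r N := by
    obtain ⟨N, hN⟩ := Nat.sInf_mem (Set.range_nonempty r)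
    exact ⟨N, fun n hn => le_antisymm (hanti N n hn)
      (hN ▸ Nat.sInf_le (Set.mem_range_self n))⟩
  -- the base splitting identity, unshifted
  have base0 : ∀ n : ℕ, N ≤ n → ∀ x ∈ wnd g U₀ 1 ((n : ℤ) + 1),
      ∃ y ∈ wnd g U₀ 0 ((n : ℤ) + 1), y⁻¹ * x ∈ wnd g U₀ 1 ((n : ℤ) + 2) := by
    intro n hn x hx
    have heq : (wnd g U₀ 1 ((n : ℤ) + 2)).relIndex (wnd g U₀ 0 ((n : ℤ) + 1)) =
        (wnd g U₀ 1 ((n : ℤ) + 2)).relIndex (wnd g U₀ 1 ((n : ℤ) + 1)) := by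
      rw [hrform n, hshift n, hstab (n + 1) (by omega), hstab n hn]
    exact cover_of_relindex_eq (wnd_le_wnd (by omega) (le_refl _))
      (hne 1 ((n : ℤ) + 2) 1 ((n : ℤ) + 1) (by omega)) heq x hx
  -- shifted base identity
  have base : ∀ a b : ℤ, a + (N : ℤ) ≤ b → ∀ x ∈ wnd g U₀ a b,
      ∃ y ∈ wnd g U₀ (a - 1) b, y⁻¹ * x ∈ wnd g U₀ a (b + 1) := by
    intro a b hab x hx
    set s : ℤ := a - 1 with hs
    set n : ℕ := (b - a).toNat with hn
    have hnZ : (n : ℤ) = b - a := by omega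
    have hNn : N ≤ n := by omega
    set x' : G := g ^ (-s) * x * g ^ s with hx'
    have hxeq : g ^ s * x' * g ^ (-s) = x := by rw [hx']; group
    have hx'mem : x' ∈ wnd g U₀ 1 ((n : ℤ) + 1) := by
      have h := (conj_mem_wnd_iff (g := g) (U₀ := U₀) s (a := a) (b := b) (x := x')).mp
        (by rw [hxeq]; exact hx)
      have e1 : a - s = 1 := by omega
      have e2 : b - s = (n : ℤ) + 1 := by omega
      rwa [e1, e2] at h
    obtain ⟨y', hy', hyx'⟩ := base0 n hNn x' hx'mem
    refine ⟨g ^ s * y' * g ^ (-s), ?_, ?_⟩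
    · rw [conj_mem_wnd_iff]
      have e1 : a - 1 - s = 0 := by omega
      have e2 : b - s = (n : ℤ) + 1 := by omega
      rwa [e1, e2]
    · have hprod : (g ^ s * y' * g ^ (-s))⁻¹ * x = g ^ s * (y'⁻¹ * x') * g ^ (-s) := by
        rw [← hxeq]; group
      rw [hprod, conj_mem_wnd_iff]
      have e1 : a - s = 1 := by omega
      have e2 : b + 1 - s = (n : ℤ) + 2 := by omega
      rwa [e1, e2]
  -- one-sided infinite splitting
  have R1 : ∀ a b : ℤ, a + (N : ℤ) ≤ b → ∀ x ∈ wnd g U₀ a b,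
      ∃ y ∈ wnd g U₀ (a - 1) b, y⁻¹ * x ∈ wge g U₀ a := by
    intro a b hab x hx
    set E : ℕ → Set G := fun k =>
      {y | y ∈ (wnd g U₀ (a - 1) b : Set G) ∧ y⁻¹ * x ∈ wnd g U₀ a (b + k)} with hE
    have hEdec : ∀ k : ℕ, E (k + 1) ⊆ E k := by
      intro k y hy
      exact ⟨hy.1, wnd_le_wnd (le_refl _) (by push_cast; omega) hy.2⟩
    have hEne : ∀ k : ℕ, (E k).Nonempty := by
      intro k
      induction k with
      | zero =>
        refine ⟨1, one_mem (wnd g U₀ (a-1) b), ?_⟩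
        have h1 : (1:G)⁻¹ * x = x := by group
        have h2 : b + ((0:ℕ):ℤ) = b := by omega
        rw [h1, h2]
        exact hx
      | succ k ih =>
        obtain ⟨y, hy1, hy2⟩ := ih
        obtain ⟨z, hz1, hz2⟩ := base a (b + k) (by omega) (y⁻¹ * x) hy2
        refine ⟨y * z, mul_mem hy1 (wnd_le_wnd (le_refl _) (by omega) hz1), ?_⟩
        have h3 : (y * z)⁻¹ * x = z⁻¹ * (y⁻¹ * x) := by group
        have h4 : b + ((k+1 : ℕ) : ℤ) = b + (k:ℤ) + 1 := by omega
        rw [h3, h4]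
        exact hz2
    have hEclosed : ∀ k : ℕ, IsClosed (E k) := by
      intro k
      apply IsClosed.inter (isClosed_wnd hUc _ _)
      exact (isClosed_wnd hUc a (b+k)).preimage (by continuity)
    have hEcomp : IsCompact (E 0) :=
      (isCompact_wnd hUc (by omega : a - 1 ≤ b)).of_isClosed_subset (hEclosed 0)
        (fun y hy => hy.1)
    obtain ⟨y, hy⟩ := IsCompact.nonempty_iInter_of_sequence_nonempty_isCompact_isClosed
      E hEdec hEne hEcomp hEclosed
    simp only [Set.mem_iInter] at hy
    refine ⟨y, (hy 0).1, ?_⟩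
    rw [mem_wge]
    intro j hj
    have ⟨k, hk⟩ : ∃ k : ℕ, j ≤ b + (k:ℤ) := ⟨(j - b).toNat, by omega⟩
    have := (hy k).2
    rw [mem_wnd] at this
    exact this j hj hk
  -- two-sided splitting: the TA property
  refine ⟨(N : ℤ), by omega, ?_⟩
  intro x hx
  set F : ℕ → Set G := fun m =>
    {y | y ∈ (wnd g U₀ (-(m:ℤ) - 1) (N:ℤ) : Set G) ∧ y⁻¹ * x ∈ wge g U₀ 0} with hF
  have hFdec : ∀ m : ℕ, F (m + 1) ⊆ F m := by
    intro m y hy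
    exact ⟨wnd_le_wnd (by push_cast; omega) (le_refl _) hy.1, hy.2⟩
  have hFne : ∀ m : ℕ, (F m).Nonempty := by
    intro m
    induction m with
    | zero =>
      obtain ⟨y, hy1, hy2⟩ := R1 0 (N:ℤ) (by omega) x hx
      refine ⟨y, ?_, ?_⟩
      · have h0 : -((0:ℕ):ℤ) - 1 = (0:ℤ) - 1 := by omega
        rw [h0]
        exact hy1
      · exact hy2
    | succ m ih =>
      obtain ⟨y, hy1, hy2⟩ := ih
      obtain ⟨z, hz1, hz2⟩ := R1 (-(m:ℤ) - 1) (N:ℤ) (by omega) y hy1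
      refine ⟨z, ?_, ?_⟩
      · have h0 : -((m+1:ℕ):ℤ) - 1 = -(m:ℤ) - 1 - 1 := by omega
        rw [h0]
        exact hz1
      · have h3 : z⁻¹ * x = (z⁻¹ * y) * (y⁻¹ * x) := by group
        show z⁻¹ * x ∈ wge g U₀ 0
        rw [h3]
        exact mul_mem (wge_le_wge (by omega) hz2) hy2
  have hFclosed : ∀ m : ℕ, IsClosed (F m) := by
    intro m
    apply IsClosed.inter (isClosed_wnd hUc _ _)
    exact (isClosed_wge hUc 0).preimage (by continuity)
  have hFcomp : IsCompact (F 0) :=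
    (isCompact_wnd hUc (by omega : -((0:ℕ):ℤ) - 1 ≤ (N:ℤ))).of_isClosed_subset (hFclosed 0)
      (fun y hy => hy.1)
  obtain ⟨p, hp⟩ := IsCompact.nonempty_iInter_of_sequence_nonempty_isCompact_isClosed
    F hFdec hFne hFcomp hFclosed
  simp only [Set.mem_iInter] at hp
  refine ⟨p, ?_, p⁻¹ * x, (hp 0).2, by group⟩
  rw [mem_wle]
  intro j hj
  have ⟨m, hm⟩ : ∃ m : ℕ, -(m:ℤ) - 1 ≤ j := ⟨(-j).toNat, by omega⟩
  have := (hp m).1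
  rw [SetLike.mem_coe, mem_wnd] at this
  exact this j hm hj

end TA

section Final
set_option linter.unusedSectionVars false

variable {G : Type*} [Group G] [TopologicalSpace G] [IsTopologicalGroup G] [T2Space G]

/-- Multiplicativity: using the TA factorization, positive powers of elements of `gV`
lie in `V g^k V`. -/
theorem pow_factorization {g : G} {U₀ : Subgroup G} {N : ℤ}
    (TA : ∀ x ∈ wnd g U₀ 0 N, ∃ p ∈ wle g U₀ N, ∃ q ∈ wge g U₀ 0, x = p * q)
    {v : G} (hv : v ∈ wnd g U₀ 0 N) :
    ∀ k : ℕ, 1 ≤ k →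
      ∃ w₁ ∈ wnd g U₀ 0 N, ∃ w₂ ∈ wnd g U₀ 0 N, (g * v) ^ k = w₁ * g ^ (k : ℤ) * w₂ := by
  intro k hk
  induction k, hk using Nat.le_induction with
  | base =>
    refine ⟨1, one_mem _, v, hv, ?_⟩
    rw [pow_one]
    norm_num
  | succ k hk ih =>
    obtain ⟨w₁, hw₁, w₂, hw₂, hfac⟩ := ih
    obtain ⟨p, hp, q, hq, hw2eq⟩ := TA w₂ hw₂
    have hp' : g ^ (k : ℤ) * p * g ^ (-(k : ℤ)) ∈ wle g U₀ N := by
      rw [conj_mem_wle_iff]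
      exact wle_le_wle (by omega) hp
    have hq' : g ^ (-1 : ℤ) * q * g ^ (1 : ℤ) ∈ wge g U₀ 0 := by
      have h := (conj_mem_wge_iff (g := g) (U₀ := U₀) (-1 : ℤ) (a := (0 : ℤ))
        (x := q)).mpr (wge_le_wge (by omega) hq)
      norm_num at h
      convert h using 2 <;> norm_num [zpow_one]
    refine ⟨w₁ * (g ^ (k : ℤ) * p * g ^ (-(k : ℤ))),
      mul_mem hw₁ (wle_le_wnd (le_refl N) hp'),
      (g ^ (-1 : ℤ) * q * g ^ (1 : ℤ)) * v,
      mul_mem (wge_le_wnd (le_refl (0 : ℤ)) hq') hv, ?_⟩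
    have hc : ((k + 1 : ℕ) : ℤ) = (k : ℤ) + 1 := by omega
    rw [pow_succ, hfac, hw2eq, hc]
    group

/-- Pigeonhole: an element generating a relatively compact subgroup has a positive
power in any open subgroup. -/
theorem exists_pow_mem_of_isCompact_closure {H : Subgroup G} (hHo : IsOpen (H : Set G))
    {h : G} (hper : IsCompact (_root_.closure ((Subgroup.zpowers h : Subgroup G) : Set G))) :
    ∃ k : ℕ, 1 ≤ k ∧ h ^ k ∈ H := by
  classical
  have hcover : _root_.closure ((Subgroup.zpowers h : Subgroup G) : Set G) ⊆
      ⋃ x : G, x • (H : Set G) := by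
    intro y _
    exact Set.mem_iUnion.mpr ⟨y, 1, one_mem H, by simp⟩
  obtain ⟨t, ht⟩ := hper.elim_finite_subcover (fun x : G => x • (H : Set G))
    (fun x => hHo.smul x) hcover
  have hmem : ∀ n : ℕ, ∃ x ∈ t, h ^ n ∈ x • (H : Set G) := by
    intro n
    have : h ^ n ∈ _root_.closure ((Subgroup.zpowers h : Subgroup G) : Set G) :=
      subset_closure (Subgroup.npow_mem_zpowers h n)
    have := ht this
    simpa using this
  choose f hf1 hf2 using hmem
  have : ¬ Function.Injective fun n : ℕ => (⟨f n, hf1 n⟩ : {x // x ∈ t}) :=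
    not_injective_infinite_finite _
  rw [Function.not_injective_iff] at this
  obtain ⟨a, b, hab, hne⟩ := this
  have key : ∀ a b : ℕ, a < b → f a = f b → ∃ k : ℕ, 1 ≤ k ∧ h ^ k ∈ H := by
    intro a b hlt hfeq
    refine ⟨b - a, by omega, ?_⟩
    have ha := hf2 a
    have hb := hf2 b
    rw [hfeq] at ha
    rw [Set.mem_smul_set_iff_inv_smul_mem, smul_eq_mul] at ha hb
    have : h ^ (b - a) = ((f b)⁻¹ * h ^ a)⁻¹ * ((f b)⁻¹ * h ^ b) := by
      rw [mul_inv_rev, inv_inv]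
      have : h ^ b = h ^ a * h ^ (b - a) := by
        rw [← pow_add]
        congr 1
        omega
      rw [this]
      group
    rw [this]
    exact mul_mem (inv_mem ha) hb
  have hab' : f a = f b := by simpa using congrArg Subtype.val hab
  rcases lt_or_gt_of_ne hne with h1 | h1
  · exact key a b h1 hab'
  · exact key b a h1 hab'.symm

end Final

/-- In a totally disconnected locally compact group, the set of periodic
elements (those generating a relatively compact cyclic subgroup) is closed. -/
theorem isClosed_periodic_elements
    {G : Type*} [Group G] [TopologicalSpace G] [IsTopologicalGroup G] [LocallyCompactSpace G]
    [T2Space G] [TotallyDisconnectedSpace G] :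
    IsClosed {g : G | IsCompact (closure ((Subgroup.zpowers g : Subgroup G) : Set G))} := by
  classical
  set P := {g : G | IsCompact (closure ((Subgroup.zpowers g : Subgroup G) : Set G))} with hP
  refine isClosed_of_closure_subset ?_
  intro g hg
  obtain ⟨U₀, hUc, hUo⟩ := exists_isCompact_isOpen_subgroup (G := G)
  obtain ⟨N, hN0, TA⟩ := exists_TA (g := g) hUo hUc
  set V := wnd g U₀ 0 N with hV
  have hVo : IsOpen (V : Set G) := isOpen_wnd hUo 0 N
  have hVc : IsCompact (V : Set G) := isCompact_wnd hUc hN0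
  -- find a periodic element h ∈ g • V
  have hne : ((g • (V : Set G)) ∩ P).Nonempty := by
    have hopen : IsOpen (g • (V : Set G)) := hVo.smul g
    have hgmem : g ∈ g • (V : Set G) := ⟨1, one_mem V, by simp⟩
    exact mem_closure_iff.mp hg _ hopen hgmem
  obtain ⟨h, hhV, hhP⟩ := hne
  obtain ⟨v, hv, hveq⟩ : ∃ v ∈ (V : Set G), g * v = h := by
    obtain ⟨v, hv, hveq⟩ := hhV
    exact ⟨v, hv, hveq⟩
  -- h has a positive power in V
  obtain ⟨k, hk1, hkmem⟩ := exists_pow_mem_of_isCompact_closure hVo hhP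
  -- hence g^k ∈ V
  obtain ⟨w₁, hw₁, w₂, hw₂, hfact⟩ := pow_factorization TA hv k hk1
  have hgk : g ^ (k : ℤ) ∈ V := by
    have hEq : g ^ (k : ℤ) = w₁⁻¹ * (g * v) ^ k * w₂⁻¹ := by
      rw [hfact]; group
    rw [hEq, hveq]
    exact mul_mem (mul_mem (inv_mem hw₁) hkmem) (inv_mem hw₂)
  -- conclude that ⟨g⟩ is relatively compact
  set C : Set G := ⋃ i ∈ Finset.range k, (g ^ i) • (V : Set G) with hC
  have hkpos : (0 : ℤ) < (k : ℤ) := by exact_mod_cast hk1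
  have hCc : IsCompact C :=
    (Finset.range k).finite_toSet.isCompact_biUnion fun i _ => hVc.smul (g ^ i)
  have hCcl : IsClosed C :=
    (Finset.range k).finite_toSet.isClosed_biUnion fun i _ =>
      (hVc.isClosed).smul (g ^ i)
  have hsub : ((Subgroup.zpowers g : Subgroup G) : Set G) ⊆ C := by
    intro x hx
    obtain ⟨n, rfl⟩ := Subgroup.mem_zpowers_iff.mp hx
    have h0r : 0 ≤ n % (k : ℤ) := Int.emod_nonneg n (by omega)
    have hrk : n % (k : ℤ) < (k : ℤ) := Int.emod_lt_of_pos n hkpos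
    have hdm := Int.mul_ediv_add_emod n (k : ℤ)
    have hsplit : g ^ n = g ^ (n % (k : ℤ)) * (g ^ (k : ℤ)) ^ (n / (k : ℤ)) := by
      rw [← zpow_mul, ← zpow_add]
      congr 1
      omega
    rw [hsplit]
    have hmem1 : (n % (k : ℤ)).toNat ∈ (↑(Finset.range k) : Set ℕ) := by
      simp only [Finset.coe_range, Set.mem_Iio]
      omega
    have hcast : g ^ ((n % (k : ℤ)).toNat) = g ^ (n % (k : ℤ)) := by
      rw [← zpow_natCast]
      congr 1
      omega
    refine Set.mem_biUnion hmem1 ⟨(g ^ (k : ℤ)) ^ (n / (k : ℤ)), Subgroup.zpow_mem V hgk _, ?_⟩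
    simp only [smul_eq_mul]
    rw [hcast]
  show IsCompact (closure ((Subgroup.zpowers g : Subgroup G) : Set G))
  exact hCc.of_isClosed_subset isClosed_closure (closure_minimal hsub hCcl)
end

section
/- Let G be a totally disconnected locally compact Hausdorff topological group, g ∈ G, and U a compact open subgroup of G. Define L̃_U = {x ∈ G : x ∈ gⁿUg⁻ⁿ for all but finitely many n ∈ ℤ}. Then L̃_U is a subgroup of G, it is normalised by g (i.e., g L̃_U g⁻¹ = L̃_U), and it is relatively compact (its closure in G is compact). -/
open MeasureTheory Pointwise

variable {G : Type*}

/-- The conjugate subgroup `gUg⁻¹`. -/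
def conjSubgroup [Group G] (g : G) (U : Subgroup G) : Subgroup G :=
  U.map (MulAut.conj g).toMonoidHom

/-- A subgroup is compact open if its carrier set is compact and open. -/
def Subgroup.IsCompactOpen [Group G] [TopologicalSpace G] (U : Subgroup G) : Prop :=
  IsCompact (U : Set G) ∧ IsOpen (U : Set G)

namespace PreLAux

variable [Group G]

theorem mem_conjSubgroup {h x : G} {U : Subgroup G} :
    x ∈ conjSubgroup h U ↔ h⁻¹ * x * h ∈ U := by
  simp only [conjSubgroup, Subgroup.mem_map, MulEquiv.coe_toMonoidHom, MulAut.conj_apply]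
  constructor
  · rintro ⟨u, hu, rfl⟩
    have he : h⁻¹ * (h * u * h⁻¹) * h = u := by group
    rwa [he]
  · intro hx
    exact ⟨h⁻¹ * x * h, hx, by group⟩

variable (g : G) (U : Subgroup G)

def AA (n : ℤ) : Subgroup G := conjSubgroup (g ^ n) U

theorem mem_AA {x : G} {n : ℤ} : x ∈ AA g U n ↔ (g ^ n)⁻¹ * x * g ^ n ∈ U :=
  mem_conjSubgroup

theorem AA_zero {x : G} : x ∈ AA g U 0 ↔ x ∈ U := by
  rw [mem_AA]; simp

theorem AA_shift {x : G} {n t : ℤ} :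
    (g ^ t)⁻¹ * x * g ^ t ∈ AA g U n ↔ x ∈ AA g U (n + t) := by
  rw [mem_AA, mem_AA]
  have h : (g ^ n)⁻¹ * ((g ^ t)⁻¹ * x * g ^ t) * g ^ n
      = (g ^ (n + t))⁻¹ * x * g ^ (n + t) := by
    rw [zpow_add]; group
  rw [h]

/-- `X m = (⋂_{n ≥ 0} A n) ∩ (⋂_{n ≤ -m} A n)`. -/
def XX (m : ℤ) : Subgroup G where
  carrier := {x | (∀ n : ℤ, 0 ≤ n → x ∈ AA g U n) ∧ ∀ n : ℤ, n ≤ -m → x ∈ AA g U n}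
  one_mem' := ⟨fun n _ => one_mem _, fun n _ => one_mem _⟩
  mul_mem' := fun ha hb =>
    ⟨fun n hn => mul_mem (ha.1 n hn) (hb.1 n hn), fun n hn => mul_mem (ha.2 n hn) (hb.2 n hn)⟩
  inv_mem' := fun ha => ⟨fun n hn => inv_mem (ha.1 n hn), fun n hn => inv_mem (ha.2 n hn)⟩

theorem mem_XX {x : G} {m : ℤ} :
    x ∈ XX g U m ↔ (∀ n : ℤ, 0 ≤ n → x ∈ AA g U n) ∧ ∀ n : ℤ, n ≤ -m → x ∈ AA g U n :=
  Iff.rfl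

theorem XX_mono {m m' : ℤ} (h : m ≤ m') {x : G} (hx : x ∈ XX g U m) : x ∈ XX g U m' :=
  ⟨hx.1, fun n hn => hx.2 n (by omega)⟩

theorem XX_le_U {m : ℤ} {x : G} (hx : x ∈ XX g U m) : x ∈ U :=
  (AA_zero g U).1 (hx.1 0 le_rfl)

/-- conjugating `X k` by `g^{-t}` (t ≥ 0) lands in `X (k+t)`. -/
theorem XX_cshift {x : G} {k : ℤ} (t : ℤ) (ht : 0 ≤ t) (hx : x ∈ XX g U k) :
    (g ^ t)⁻¹ * x * g ^ t ∈ XX g U (k + t) := by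
  rw [mem_XX]
  constructor
  · intro n hn
    rw [AA_shift]
    exact hx.1 (n + t) (by omega)
  · intro n hn
    rw [AA_shift]
    exact hx.2 (n + t) (by omega)

/-- conjugating an element of `X (k+1) ∩ A (-1)` by `g` lands in `X k`. -/
theorem XX_cid {x : G} {k : ℤ} (hx : x ∈ XX g U (k + 1)) (hx1 : x ∈ AA g U (-1)) :
    g * x * g⁻¹ ∈ XX g U k := by
  have key : ∀ n : ℤ, g * x * g⁻¹ ∈ AA g U n ↔ x ∈ AA g U (n - 1) := by
    intro n
    have h := AA_shift g U (x := g * x * g⁻¹) (n := n - 1) (t := 1)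
    have he : (g ^ (1:ℤ))⁻¹ * (g * x * g⁻¹) * g ^ (1:ℤ) = x := by
      rw [zpow_one]; group
    rw [he, sub_add_cancel] at h
    exact h.symm
  rw [mem_XX]
  constructor
  · intro n hn
    rw [key]
    rcases eq_or_lt_of_le hn with h | h
    · rw [show n - 1 = -1 by omega]; exact hx1
    · exact hx.1 (n - 1) (by omega)
  · intro n hn
    rw [key]
    exact hx.2 (n - 1) (by omega)

section Topology

variable [TopologicalSpace G] [IsTopologicalGroup G] [T2Space G]

theorem AA_coe (n : ℤ) :
    (AA g U n : Set G) = (fun x => g ^ n * x * (g ^ n)⁻¹) '' (U : Set G) := by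
  ext x
  simp only [SetLike.mem_coe, Set.mem_image]
  rw [mem_AA]
  constructor
  · intro hx
    exact ⟨(g ^ n)⁻¹ * x * g ^ n, hx, by group⟩
  · rintro ⟨u, hu, rfl⟩
    have he : (g ^ n)⁻¹ * (g ^ n * u * (g ^ n)⁻¹) * g ^ n = u := by group
    rwa [he]

theorem AA_isOpen (hU : IsOpen (U : Set G)) (n : ℤ) : IsOpen (AA g U n : Set G) := by
  rw [AA_coe]
  exact ((Homeomorph.mulLeft (g ^ n)).trans (Homeomorph.mulRight (g ^ n)⁻¹)).isOpenMap _ hU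

theorem AA_isCompact (hU : IsCompact (U : Set G)) (n : ℤ) : IsCompact (AA g U n : Set G) := by
  rw [AA_coe]
  exact hU.image ((continuous_mul_left (g ^ n)).mul continuous_const)

theorem XX_coe (m : ℤ) : (XX g U m : Set G) =
    (⋂ (n : ℤ) (_ : 0 ≤ n), (AA g U n : Set G)) ∩ ⋂ (n : ℤ) (_ : n ≤ -m), (AA g U n : Set G) := by
  ext x
  simp only [Set.mem_inter_iff, Set.mem_iInter, SetLike.mem_coe]
  exact Iff.rfl

theorem XX_isCompact (hU : U.IsCompactOpen) (m : ℤ) : IsCompact (XX g U m : Set G) := by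
  have hclosed : IsClosed (XX g U m : Set G) := by
    rw [XX_coe]
    exact IsClosed.inter
      (isClosed_iInter fun n => isClosed_iInter fun _ => (AA_isCompact g U hU.1 n).isClosed)
      (isClosed_iInter fun n => isClosed_iInter fun _ => (AA_isCompact g U hU.1 n).isClosed)
  exact hU.1.of_isClosed_subset hclosed (fun x hx => XX_le_U g U hx)

theorem finite_quot_image (B : Subgroup G) (hB : IsOpen (B : Set G)) {C : Set G}
    (hC : IsCompact C) : (QuotientGroup.mk '' C : Set (G ⧸ B)).Finite := by
  obtain ⟨t, ht⟩ := hC.elim_finite_subcover (fun x : G => x • (B : Set G))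
    (fun x => hB.smul x)
    (fun c hc => Set.mem_iUnion.2 ⟨c, ⟨1, B.one_mem, by simp⟩⟩)
  refine Set.Finite.subset (t.finite_toSet.image QuotientGroup.mk) ?_
  rintro q ⟨c, hc, rfl⟩
  have hmem := ht hc
  simp only [Set.mem_iUnion] at hmem
  obtain ⟨x, hxt, hcx⟩ := hmem
  obtain ⟨b, hb, rfl⟩ := hcx
  refine ⟨x, hxt, ?_⟩
  show (QuotientGroup.mk x : G ⧸ B) = QuotientGroup.mk (x * b)
  exact (QuotientGroup.mk_mul_of_mem x hb).symm

/-- The stabilization lemma: for large `k`, every element of `X (k+1)` is an element of `X k`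
times an element of `A (-1)`. -/
theorem exists_sat (hU : U.IsCompactOpen) :
    ∃ k₁ : ℤ, 2 ≤ k₁ ∧ ∀ k : ℤ, k₁ ≤ k → ∀ x ∈ XX g U (k + 1),
      ∃ y ∈ XX g U k, y⁻¹ * x ∈ AA g U (-1) := by
  classical
  set B := AA g U (-1) with hBdef
  have hBopen : IsOpen (B : Set G) := AA_isOpen g U hU.2 _
  set T : ℤ → Set (G ⧸ B) := fun k => QuotientGroup.mk '' (XX g U k : Set G) with hT
  have hmono : ∀ {k k' : ℤ}, k ≤ k' → T k ⊆ T k' := fun h =>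
    Set.image_mono (fun x hx => XX_mono g U h hx)
  have hfinU : (QuotientGroup.mk '' (U : Set G) : Set (G ⧸ B)).Finite :=
    finite_quot_image B hBopen hU.1
  have hsub : ∀ k, T k ⊆ QuotientGroup.mk '' (U : Set G) :=
    fun k => Set.image_mono (fun x hx => XX_le_U g U hx)
  have hUn : (⋃ k : ℤ, T k).Finite := hfinU.subset (Set.iUnion_subset hsub)
  have key : ∀ s : Set (G ⧸ B), s.Finite → s ⊆ (⋃ k : ℤ, T k) → ∃ K : ℤ, s ⊆ T K := by
    intro s hs
    refine Set.Finite.induction_on s hs (motive := fun s _ => s ⊆ (⋃ k : ℤ, T k) → ∃ K : ℤ, s ⊆ T K) (fun _ => ⟨0, by simp⟩) ?_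
    rintro a s' ha hs'fin ih hsub2
    obtain ⟨K₁, hK₁⟩ := ih (fun y hy => hsub2 (Set.mem_insert_of_mem a hy))
    obtain ⟨K₂, hK₂⟩ := Set.mem_iUnion.1 (hsub2 (Set.mem_insert a s'))
    refine ⟨max K₁ K₂, ?_⟩
    rintro y (rfl | hy)
    · exact hmono (le_max_right _ _) hK₂
    · exact hmono (le_max_left _ _) (hK₁ hy)
  obtain ⟨K, hK⟩ := key _ hUn subset_rfl
  refine ⟨max K 2, le_max_right _ _, ?_⟩
  intro k hk x hx
  have h1 : (QuotientGroup.mk x : G ⧸ B) ∈ T (k + 1) := ⟨x, hx, rfl⟩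
  have h2 : (QuotientGroup.mk x : G ⧸ B) ∈ T k :=
    hmono (le_trans (le_max_left K 2) hk) (hK (Set.mem_iUnion.2 ⟨k + 1, h1⟩))
  obtain ⟨y, hy, hyx⟩ := h2
  exact ⟨y, hy, QuotientGroup.eq.1 hyx⟩

end Topology

section Unroll

variable {g} {U}
variable {k₁ : ℤ}
  (hsat : ∀ k : ℤ, k₁ ≤ k → ∀ x ∈ XX g U (k + 1), ∃ y ∈ XX g U k, y⁻¹ * x ∈ AA g U (-1))

include hsat

/-- `X m = X k₁ · (X m ∩ A (-1))` for all `m ≥ k₁`. -/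
theorem top_lemma : ∀ m : ℤ, k₁ ≤ m → ∀ x ∈ XX g U m,
    ∃ y ∈ XX g U k₁, ∃ w ∈ XX g U m, w ∈ AA g U (-1) ∧ x = y * w := by
  refine Int.le_induction ?_ ?_
  · intro x hx
    exact ⟨x, hx, 1, one_mem _, one_mem _, (mul_one x).symm⟩
  · intro m hm ih
    intro x hx
    obtain ⟨y, hy, hw⟩ := hsat m hm x hx
    obtain ⟨y', hy', w', hw', hw'1, rfl⟩ := ih y hy
    refine ⟨y', hy', w' * ((y' * w')⁻¹ * x), ?_, ?_, ?_⟩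
    · exact mul_mem (XX_mono g U (by omega) hw')
        (mul_mem (inv_mem (XX_mono g U (by omega) hy)) hx)
    · exact mul_mem hw'1 hw
    · group

/-- Iterated unrolling: `X m = X (k₁+i) · g^{-(i+1)} X (m-i-1) g^{i+1}`. -/
theorem indb : ∀ i : ℕ, ∀ m : ℤ, k₁ ≤ m - i - 1 → ∀ x ∈ XX g U m,
    ∃ a ∈ XX g U (k₁ + i), ∃ z ∈ XX g U (m - i - 1),
      x = a * ((g ^ ((i : ℤ) + 1))⁻¹ * z * g ^ ((i : ℤ) + 1)) := by
  intro i
  induction i with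
  | zero =>
    intro m hm x hx
    obtain ⟨y, hy, w, hwX, hw1, rfl⟩ := top_lemma hsat m (by omega) x hx
    have hwX' : w ∈ XX g U ((m - 1) + 1) := by rwa [sub_add_cancel]
    refine ⟨y, by simpa using hy, g * w * g⁻¹, ?_, ?_⟩
    · have := XX_cid g U hwX' hw1
      simpa using this
    · have hcast : (((0 : ℕ) : ℤ) + 1) = (1 : ℤ) := by norm_num
      rw [hcast, zpow_one]
      group
  | succ i ih =>
    intro m hm x hx
    obtain ⟨a, ha, z, hz, rfl⟩ := ih m (by push_cast; push_cast at hm; omega) x hx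
    obtain ⟨y, hy, w, hwX, hw1, rfl⟩ :=
      top_lemma hsat (m - i - 1) (by push_cast at hm ⊢; omega) _ hz
    refine ⟨a * ((g ^ ((i : ℤ) + 1))⁻¹ * y * g ^ ((i : ℤ) + 1)), ?_, g * w * g⁻¹, ?_, ?_⟩
    · have h1 : a ∈ XX g U (k₁ + (i : ℤ) + 1) := XX_mono g U (by omega) ha
      have h2 : (g ^ ((i : ℤ) + 1))⁻¹ * y * g ^ ((i : ℤ) + 1) ∈ XX g U (k₁ + ((i : ℤ) + 1)) :=
        XX_cshift g U ((i : ℤ) + 1) (by omega) hy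
      have h3 := mul_mem h1 (by rwa [← add_assoc] at h2)
      have : (k₁ + (i : ℤ) + 1) = k₁ + ((i : ℕ) + 1 : ℕ) := by push_cast; ring
      rwa [this] at h3
    · have hwX' : w ∈ XX g U ((m - i - 2) + 1) := by
        have : m - i - 1 = (m - i - 2) + 1 := by ring
        rwa [this] at hwX
      have h4 := XX_cid g U hwX' hw1
      have : (m - (i : ℤ) - 2) = m - ((i : ℕ) + 1 : ℕ) - 1 := by push_cast; ring
      rwa [this] at h4
    · have hcast : (((i : ℕ) + 1 : ℕ) : ℤ) + 1 = ((i : ℤ) + 1) + 1 := by push_cast; ring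
      rw [hcast]
      have hexp : g ^ (((i : ℤ) + 1) + 1) = g ^ ((i : ℤ) + 1) * g := by
        rw [zpow_add_one]
      rw [hexp]
      group

end Unroll

end PreLAux



open PreLAux

/-- `L̃_U = {x : x ∈ gⁿUg⁻ⁿ for all but finitely many n ∈ ℤ}` is a subgroup
normalised by `g` which is relatively compact. -/
theorem preL_subgroup_normalised_relatively_compact
    [Group G] [TopologicalSpace G] [IsTopologicalGroup G] [LocallyCompactSpace G] [T2Space G]
    [TotallyDisconnectedSpace G]
    (g : G) (U : Subgroup G) (hU : U.IsCompactOpen) :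
    ∃ H : Subgroup G,
      (H : Set G) = {x : G | {n : ℤ | x ∉ conjSubgroup (g ^ n) U}.Finite} ∧
      conjSubgroup g H = H ∧
      IsCompact (closure {x : G | {n : ℤ | x ∉ conjSubgroup (g ^ n) U}.Finite}) := by
  classical
  refine ⟨{ carrier := {x : G | {n : ℤ | x ∉ conjSubgroup (g ^ n) U}.Finite}
          , one_mem' := ?_, mul_mem' := ?_, inv_mem' := ?_ }, rfl, ?_, ?_⟩
  · -- mul_mem
    intro a b ha hb
    refine Set.Finite.subset (Set.Finite.union ha hb) ?_
    intro n hn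
    simp only [Set.mem_setOf_eq, Set.mem_union] at *
    by_contra hcon
    push_neg at hcon
    exact hn (mul_mem hcon.1 hcon.2)
  · -- one_mem
    have h : {n : ℤ | (1 : G) ∉ conjSubgroup (g ^ n) U} = ∅ := by
      ext n; simp [one_mem]
    show {n : ℤ | (1 : G) ∉ conjSubgroup (g ^ n) U}.Finite
    rw [h]; exact Set.finite_empty
  · -- inv_mem
    intro a ha
    have h : {n : ℤ | a⁻¹ ∉ conjSubgroup (g ^ n) U} = {n : ℤ | a ∉ conjSubgroup (g ^ n) U} := by
      ext n; simp [inv_mem_iff]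
    simp only [Set.mem_setOf_eq] at *
    rw [h]; exact ha
  · -- normalised by g
    apply Subgroup.ext
    intro x
    rw [PreLAux.mem_conjSubgroup]
    show {n : ℤ | g⁻¹ * x * g ∉ AA g U n}.Finite ↔ {n : ℤ | x ∉ AA g U n}.Finite
    have hshift : ∀ n : ℤ, g⁻¹ * x * g ∈ AA g U n ↔ x ∈ AA g U (n + 1) := by
      intro n
      have h := AA_shift g U (x := x) (n := n) (t := 1)
      rwa [zpow_one] at h
    constructor
    · intro h
      have heq : {n : ℤ | x ∉ AA g U n} = (fun n : ℤ => n - 1) ⁻¹' {n : ℤ | g⁻¹ * x * g ∉ AA g U n} := by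
        ext n
        simp only [Set.mem_setOf_eq, Set.mem_preimage, hshift, sub_add_cancel]
      rw [heq]
      exact h.preimage (fun p _ q _ hpq => by omega)
    · intro h
      have heq : {n : ℤ | g⁻¹ * x * g ∉ AA g U n} = (fun n : ℤ => n + 1) ⁻¹' {n : ℤ | x ∉ AA g U n} := by
        ext n
        simp only [Set.mem_setOf_eq, Set.mem_preimage, hshift]
      rw [heq]
      exact h.preimage (fun p _ q _ hpq => by omega)
  · -- relative compactness
    obtain ⟨k₁, hk₁2, hsat⟩ := exists_sat g U hU
    have hEcomp : IsCompact (XX g U (2 * k₁ - 2) : Set G) := XX_isCompact g U hU _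
    set CF : Set G := (fun p : G × G × G =>
        p.1 * (g ^ (k₁ - 1) * p.2.1 * (g ^ (k₁ - 1))⁻¹) * p.2.2) ''
        ((U : Set G) ×ˢ ((XX g U (2 * k₁ - 2) : Set G) ×ˢ (U : Set G))) with hCFdef
    have hCFc : IsCompact CF := by
      refine IsCompact.image (hU.1.prod (hEcomp.prod hU.1)) ?_
      fun_prop
    have hsubset : {x : G | {n : ℤ | x ∉ conjSubgroup (g ^ n) U}.Finite} ⊆ CF := by
      intro x hx
      have hfin : {n : ℤ | x ∉ AA g U n}.Finite := hx
      obtain ⟨hi, hhi⟩ := hfin.bddAbove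
      obtain ⟨lo, hlo⟩ := hfin.bddBelow
      set N : ℤ := max k₁ (max (hi + 1) (1 - lo)) with hNdef
      have hNk : k₁ ≤ N := le_max_left _ _
      have hNhi : hi + 1 ≤ N := le_trans (le_max_left _ _) (le_max_right _ _)
      have hNlo : 1 - lo ≤ N := le_trans (le_max_right _ _) (le_max_right _ _)
      have hmem : ∀ n : ℤ, N ≤ n ∨ n ≤ -N → x ∈ AA g U n := by
        intro n hn
        by_contra hcon
        have h1 : n ≤ hi := hhi hcon
        have h2 : lo ≤ n := hlo hcon
        omega
      -- y ∈ X (2N)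
      have hyX : (g ^ N)⁻¹ * x * g ^ N ∈ XX g U (2 * N) := by
        rw [mem_XX]
        constructor
        · intro n hn
          rw [AA_shift]
          exact hmem _ (Or.inl (by omega))
        · intro n hn
          rw [AA_shift]
          exact hmem _ (Or.inr (by omega))
      set i₁ : ℕ := (N - k₁).toNat with hi₁def
      have hi₁z : (i₁ : ℤ) = N - k₁ := Int.toNat_of_nonneg (by omega)
      obtain ⟨a, ha, z, hz, hxz⟩ := indb hsat i₁ (2 * N) (by omega) _ hyX
      set i₂ : ℕ := (k₁ - 2).toNat with hi₂def
      have hi₂z : (i₂ : ℤ) = k₁ - 2 := Int.toNat_of_nonneg (by omega)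
      obtain ⟨cc, hcc, d, hd, hzc⟩ := indb hsat i₂ (2 * N - i₁ - 1) (by omega) _ hz
      -- rewrite indices
      have haN : a ∈ XX g U N := by rwa [show k₁ + (i₁ : ℤ) = N by omega] at ha
      have hccE : cc ∈ XX g U (2 * k₁ - 2) := by
        rwa [show k₁ + (i₂ : ℤ) = 2 * k₁ - 2 by omega] at hcc
      have hdN : d ∈ XX g U N := by
        rwa [show 2 * N - (i₁ : ℤ) - 1 - (i₂ : ℤ) - 1 = N by omega] at hd
      rw [show ((i₁ : ℤ) + 1) = N - k₁ + 1 by omega] at hxz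
      rw [show ((i₂ : ℤ) + 1) = k₁ - 1 by omega] at hzc
      -- memberships
      have hu1 : g ^ N * a * (g ^ N)⁻¹ ∈ U := by
        have h0 : a ∈ AA g U (-N) := haN.2 (-N) le_rfl
        have h1 : a ∈ AA g U (0 + -N) := by rwa [zero_add]
        have h2 := (AA_shift g U (x := a) (n := 0) (t := -N)).2 h1
        rw [zpow_neg, inv_inv] at h2
        exact (AA_zero g U).1 h2
      have hdU : d ∈ U := XX_le_U g U hdN
      -- final equation
      have hfinal : x = (g ^ N * a * (g ^ N)⁻¹) * (g ^ (k₁ - 1) * cc * (g ^ (k₁ - 1))⁻¹) * d := by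
        have hxy : x = g ^ N * ((g ^ N)⁻¹ * x * g ^ N) * (g ^ N)⁻¹ := by group
        rw [hxy, hxz, hzc]
        have hNsum : g ^ N = g ^ (N - k₁ + 1) * g ^ (k₁ - 1) := by
          rw [← zpow_add]
          congr 1
          ring
        rw [hNsum]
        group
      refine ⟨(g ^ N * a * (g ^ N)⁻¹, cc, d), ⟨hu1, hccE, hdU⟩, hfinal.symm⟩
    exact hCFc.of_isClosed_subset isClosed_closure (closure_minimal hsubset hCFc.isClosed)
end

section
/- Let G be a totally disconnected locally compact Hausdorff topological group, g ∈ G, and U a compact open subgroup that is tidy above for g. Then U is tidy for g if and only if L_U ⊆ U, where L_U is the closure of L̃_U = {x ∈ G : x ∈ gⁿUg⁻ⁿ for all but finitely many n ∈ ℤ}. -/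
open MeasureTheory Pointwise

variable {G : Type*}

/-- `U₊ = ⋂_{n ≥ 0} gⁿ U g⁻ⁿ`. -/
def plusSubgroup [Group G] (g : G) (U : Subgroup G) : Subgroup G :=
  ⨅ n : ℕ, conjSubgroup (g ^ n) U

/-- `U₋ = ⋂_{n ≥ 0} g⁻ⁿ U gⁿ`. -/
def minusSubgroup [Group G] (g : G) (U : Subgroup G) : Subgroup G :=
  ⨅ n : ℕ, conjSubgroup (g⁻¹ ^ n) U

/-- `U` is tidy above for `g` if `[gU₊g⁻¹ : U₊] = [gUg⁻¹ : gUg⁻¹ ∩ U]`. -/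
def TidyAbove [Group G] (g : G) (U : Subgroup G) : Prop :=
  (plusSubgroup g U).relIndex (conjSubgroup g (plusSubgroup g U)) = U.relIndex (conjSubgroup g U)

/-- `U₊₊ = ⋃_{n ≥ 0} gⁿ U₊ g⁻ⁿ` as a set. -/
def plusPlusSet [Group G] (g : G) (U : Subgroup G) : Set G :=
  ⋃ n : ℕ, ((conjSubgroup (g ^ n) (plusSubgroup g U) : Subgroup G) : Set G)

/-- `U₋₋ = ⋃_{n ≥ 0} g⁻ⁿ U₋ gⁿ` as a set. -/
def minusMinusSet [Group G] (g : G) (U : Subgroup G) : Set G :=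
  ⋃ n : ℕ, ((conjSubgroup (g⁻¹ ^ n) (minusSubgroup g U) : Subgroup G) : Set G)

/-- `U` is tidy below for `g` if `U₊₊` and `U₋₋` are closed. -/
def TidyBelow [Group G] [TopologicalSpace G] (g : G) (U : Subgroup G) : Prop :=
  IsClosed (plusPlusSet g U) ∧ IsClosed (minusMinusSet g U)

/-- `U` is tidy for `g` if it is tidy above and tidy below for `g`. -/
def Tidy [Group G] [TopologicalSpace G] (g : G) (U : Subgroup G) : Prop :=
  TidyAbove g U ∧ TidyBelow g U

namespace TidyAux

section GroupOnly

variable [Group G]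

theorem mem_conjSubgroup {g x : G} {U : Subgroup G} :
    x ∈ conjSubgroup g U ↔ g⁻¹ * x * g ∈ U := by
  constructor
  · rintro ⟨y, hy, rfl⟩; simpa [mul_assoc] using hy
  · intro h; exact ⟨g⁻¹ * x * g, h, by simp [mul_assoc]⟩

theorem conjSubgroup_conjSubgroup (a b : G) (U : Subgroup G) :
    conjSubgroup a (conjSubgroup b U) = conjSubgroup (a * b) U := by
  ext x
  rw [mem_conjSubgroup, mem_conjSubgroup, mem_conjSubgroup]
  have : b⁻¹ * (a⁻¹ * x * a) * b = (a*b)⁻¹ * x * (a*b) := by group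
  rw [this]

@[simp] theorem conjSubgroup_one (U : Subgroup G) : conjSubgroup 1 U = U := by
  ext x; simp [mem_conjSubgroup]

theorem conjSubgroup_mono (a : G) {H K : Subgroup G} (h : H ≤ K) :
    conjSubgroup a H ≤ conjSubgroup a K := Subgroup.map_mono h

theorem conjSubgroup_inf (a : G) (H K : Subgroup G) :
    conjSubgroup a (H ⊓ K) = conjSubgroup a H ⊓ conjSubgroup a K := by
  ext x; simp [mem_conjSubgroup, Subgroup.mem_inf]

theorem conjSubgroup_eq_comap (a : G) (H : Subgroup G) :
    conjSubgroup a H = Subgroup.comap (MulAut.conj a⁻¹).toMonoidHom H := by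
  ext x; simp [mem_conjSubgroup, Subgroup.mem_comap, mul_assoc]

theorem relindex_conj (a : G) (H K : Subgroup G) :
    (conjSubgroup a H).relIndex (conjSubgroup a K) = H.relIndex K := by
  rw [conjSubgroup_eq_comap a H, Subgroup.relIndex_comap]
  congr 1
  show conjSubgroup a⁻¹ (conjSubgroup a K) = K
  rw [conjSubgroup_conjSubgroup, inv_mul_cancel, conjSubgroup_one]

theorem coe_conjSubgroup (a : G) (U : Subgroup G) :
    (conjSubgroup a U : Set G) = (fun x => a * x * a⁻¹) '' (U : Set G) := by
  rw [conjSubgroup, Subgroup.coe_map]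
  rfl

-- key product decomposition lemma
theorem exists_mul_of_relindex_eq {A T S : Subgroup G} (hA : A ≤ S) (_hT : T ≤ S)
    (h0 : T.relIndex S ≠ 0) (heq : T.relIndex A = T.relIndex S) :
    ∀ s ∈ S, ∃ a ∈ A, ∃ t ∈ T, a * t = s := by
  haveI : Finite (S ⧸ T.subgroupOf S) := by
    have : Nat.card (S ⧸ T.subgroupOf S) ≠ 0 := h0
    exact (Nat.card_ne_zero.mp this).2
  intro s hs
  set F := Subgroup.quotientSubgroupOfEmbeddingOfLE T hA with hF
  have hbij : Function.Bijective F := by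
    rw [Nat.bijective_iff_injective_and_card]
    exact ⟨F.injective, heq⟩
  obtain ⟨q, hq⟩ := hbij.2 (QuotientGroup.mk (⟨s, hs⟩ : S))
  obtain ⟨x, rfl⟩ := QuotientGroup.mk_surjective q
  rw [Subgroup.quotientSubgroupOfEmbeddingOfLE_apply_mk, QuotientGroup.eq] at hq
  refine ⟨(x : G), x.2, (x : G)⁻¹ * s, ?_, by group⟩
  simpa [Subgroup.mem_subgroupOf] using hq

-- === plus subgroup basics ===
theorem mem_plusSubgroup {g x : G} {U : Subgroup G} :
    x ∈ plusSubgroup g U ↔ ∀ n : ℕ, x ∈ conjSubgroup (g ^ n) U := Subgroup.mem_iInf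

theorem minusSubgroup_eq (g : G) (U : Subgroup G) :
    minusSubgroup g U = plusSubgroup g⁻¹ U := rfl

theorem minusSubgroup_inv (g : G) (U : Subgroup G) :
    minusSubgroup g⁻¹ U = plusSubgroup g U := by
  rw [minusSubgroup_eq, inv_inv]

theorem minusMinusSet_eq (g : G) (U : Subgroup G) :
    minusMinusSet g U = plusPlusSet g⁻¹ U := rfl

theorem plus_le (g : G) (U : Subgroup G) : plusSubgroup g U ≤ U := by
  intro x hx
  have := mem_plusSubgroup.mp hx 0
  simpa using this

theorem conj_pow_succ (g : G) (n : ℕ) (U : Subgroup G) :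
    conjSubgroup (g ^ (n+1)) U = conjSubgroup g (conjSubgroup (g ^ n) U) := by
  rw [conjSubgroup_conjSubgroup, ← pow_succ']

theorem conj_pow_succ' (g : G) (n : ℕ) (U : Subgroup G) :
    conjSubgroup (g ^ (n+1)) U = conjSubgroup (g ^ n) (conjSubgroup g U) := by
  rw [conjSubgroup_conjSubgroup, ← pow_succ]

theorem plus_le_conj_plus (g : G) (U : Subgroup G) :
    plusSubgroup g U ≤ conjSubgroup g (plusSubgroup g U) := by
  intro x hx
  rw [mem_conjSubgroup]
  rw [mem_plusSubgroup]
  intro n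
  have := mem_plusSubgroup.mp hx (n+1)
  rw [conj_pow_succ, mem_conjSubgroup] at this
  exact this

theorem conj_plus_inf (g : G) (U : Subgroup G) :
    conjSubgroup g (plusSubgroup g U) ⊓ U = plusSubgroup g U := by
  apply le_antisymm
  · intro x hx
    rw [Subgroup.mem_inf] at hx
    obtain ⟨h1, h2⟩ := hx
    rw [mem_plusSubgroup]
    intro n
    cases n with
    | zero => simpa using h2
    | succ n =>
      rw [conj_pow_succ, mem_conjSubgroup]
      rw [mem_conjSubgroup] at h1
      exact mem_plusSubgroup.mp h1 n
  · exact le_inf (plus_le_conj_plus g U) (plus_le g U)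

theorem conj_pow_plus_mono (g : G) (U : Subgroup G) {n m : ℕ} (h : n ≤ m) :
    conjSubgroup (g ^ n) (plusSubgroup g U) ≤ conjSubgroup (g ^ m) (plusSubgroup g U) := by
  induction m with
  | zero => simpa [Nat.le_zero.mp h] using le_refl _
  | succ m ih =>
    rcases Nat.lt_or_ge n (m+1) with hlt | hge
    · have := ih (Nat.lt_succ_iff.mp hlt)
      refine le_trans this ?_
      rw [conj_pow_succ']
      exact conjSubgroup_mono _ (plus_le_conj_plus g U)
    · have : n = m + 1 := le_antisymm h hge
      subst this; exact le_refl _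

theorem plus_le_conj_pow (g : G) (U : Subgroup G) (n : ℕ) :
    plusSubgroup g U ≤ conjSubgroup (g ^ n) (plusSubgroup g U) := by
  have := conj_pow_plus_mono g U (Nat.zero_le n)
  simpa using this

theorem conj_inv_plus_le (g : G) (U : Subgroup G) :
    conjSubgroup g⁻¹ (plusSubgroup g U) ≤ plusSubgroup g U := by
  have := conjSubgroup_mono g⁻¹ (plus_le_conj_plus g U)
  rw [conjSubgroup_conjSubgroup, inv_mul_cancel, conjSubgroup_one] at this
  exact this

theorem conj_inv_pow_plus_le (g : G) (U : Subgroup G) (n : ℕ) :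
    conjSubgroup ((g ^ n)⁻¹) (plusSubgroup g U) ≤ plusSubgroup g U := by
  induction n with
  | zero => simp
  | succ n ih =>
    have h1 : (g ^ (n+1))⁻¹ = (g^n)⁻¹ * g⁻¹ := by rw [pow_succ']; group
    rw [h1, ← conjSubgroup_conjSubgroup]
    exact le_trans (conjSubgroup_mono _ (conj_inv_plus_le g U)) ih

theorem conj_minus_le (g : G) (U : Subgroup G) :
    conjSubgroup g (minusSubgroup g U) ≤ minusSubgroup g U := by
  rw [minusSubgroup_eq]
  have := conj_inv_plus_le g⁻¹ U
  rwa [inv_inv] at this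

theorem conj_pow_minus_le (g : G) (U : Subgroup G) (n : ℕ) :
    conjSubgroup (g ^ n) (minusSubgroup g U) ≤ minusSubgroup g U := by
  rw [minusSubgroup_eq]
  have := conj_inv_pow_plus_le g⁻¹ U n
  rwa [inv_pow, inv_inv] at this

theorem minus_le (g : G) (U : Subgroup G) : minusSubgroup g U ≤ U := plus_le g⁻¹ U

theorem mem_inf_plus_minus {g x : G} {U : Subgroup G} :
    x ∈ plusSubgroup g U ⊓ minusSubgroup g U ↔ ∀ n : ℤ, x ∈ conjSubgroup (g ^ n) U := by
  constructor
  · rintro ⟨h1, h2⟩ n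
    rcases n with n | n
    · have := mem_plusSubgroup.mp h1 n
      simpa [zpow_natCast] using this
    · have := mem_plusSubgroup.mp h2 (n+1)
      rw [zpow_negSucc, ← inv_pow]
      exact this
  · intro h
    refine Subgroup.mem_inf.mpr ⟨?_, ?_⟩
    · rw [mem_plusSubgroup]; intro n
      have := h n
      rwa [zpow_natCast] at this
    · rw [minusSubgroup_eq, mem_plusSubgroup]; intro n
      have := h (-n)
      rwa [zpow_neg, zpow_natCast, ← inv_pow] at this

theorem conj_inf_plus_minus (g : G) (U : Subgroup G) :
    conjSubgroup g (plusSubgroup g U ⊓ minusSubgroup g U)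
      = plusSubgroup g U ⊓ minusSubgroup g U := by
  ext x
  rw [mem_conjSubgroup, mem_inf_plus_minus, mem_inf_plus_minus]
  constructor
  · intro h n
    have := h (n - 1)
    rw [mem_conjSubgroup] at this ⊢
    have e : (g ^ n)⁻¹ * x * g ^ n = (g ^ (n-1))⁻¹ * (g⁻¹ * x * g) * g ^ (n-1) := by group
    rw [e]; exact this
  · intro h n
    have := h (n + 1)
    rw [mem_conjSubgroup] at this ⊢
    have e : (g ^ n)⁻¹ * (g⁻¹ * x * g) * g ^ n = (g ^ (n+1))⁻¹ * x * g ^ (n+1) := by group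
    rw [e]; exact this

theorem conj_pow_inf_plus_minus (g : G) (U : Subgroup G) (k : ℕ) :
    conjSubgroup (g ^ k) (plusSubgroup g U ⊓ minusSubgroup g U)
      = plusSubgroup g U ⊓ minusSubgroup g U := by
  induction k with
  | zero => simp
  | succ k ih => rw [conj_pow_succ, ih, conj_inf_plus_minus]

theorem conj_inv_pow_inf_plus_minus (g : G) (U : Subgroup G) (k : ℕ) :
    conjSubgroup ((g ^ k)⁻¹) (plusSubgroup g U ⊓ minusSubgroup g U)
      = plusSubgroup g U ⊓ minusSubgroup g U := by
  conv_lhs => rw [← conj_pow_inf_plus_minus g U k]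
  rw [conjSubgroup_conjSubgroup, inv_mul_cancel, conjSubgroup_one]


-- === the set L̃ ===
/-- The set of elements lying in all but finitely many conjugates `gⁿUg⁻ⁿ`. -/
def Lset (g : G) (U : Subgroup G) : Set G :=
  {x : G | {n : ℤ | x ∉ conjSubgroup (g ^ n) U}.Finite}

theorem Lset_inv (g : G) (U : Subgroup G) : Lset g⁻¹ U = Lset g U := by
  have key : ∀ n : ℤ, conjSubgroup (g⁻¹ ^ n) U = conjSubgroup (g ^ (-n)) U := by
    intro n; rw [inv_zpow, ← zpow_neg]
  ext x
  simp only [Lset, Set.mem_setOf_eq]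
  have hset : {n : ℤ | x ∉ conjSubgroup (g⁻¹ ^ n) U}
      = (fun n : ℤ => -n) ⁻¹' {n : ℤ | x ∉ conjSubgroup (g ^ n) U} := by
    ext m; simp [key m]
  constructor
  · intro h
    have : {n : ℤ | x ∉ conjSubgroup (g ^ n) U}
        = (fun n : ℤ => -n) ⁻¹' {n : ℤ | x ∉ conjSubgroup (g⁻¹ ^ n) U} := by
      rw [hset]; ext m; simp
    rw [this]
    exact Set.Finite.preimage (neg_injective.injOn) h
  · intro h
    rw [hset]
    exact Set.Finite.preimage (neg_injective.injOn) h

theorem Lset_shift {g : G} {U : Subgroup G} {x : G} (hx : x ∈ Lset g U) (m : ℤ) :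
    (g ^ m)⁻¹ * x * g ^ m ∈ Lset g U := by
  have key : ∀ n : ℤ, (g ^ m)⁻¹ * x * g ^ m ∈ conjSubgroup (g ^ n) U
      ↔ x ∈ conjSubgroup (g ^ (n + m)) U := by
    intro n
    rw [mem_conjSubgroup, mem_conjSubgroup]
    have e : (g ^ (n+m))⁻¹ * x * g ^ (n+m)
        = (g ^ n)⁻¹ * ((g ^ m)⁻¹ * x * g ^ m) * g ^ n := by group
    rw [e]
  have hsub : {n : ℤ | (g ^ m)⁻¹ * x * g ^ m ∉ conjSubgroup (g ^ n) U}
      ⊆ (fun n : ℤ => n + m) ⁻¹' {n : ℤ | x ∉ conjSubgroup (g ^ n) U} := by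
    intro n hn
    simp only [Set.mem_setOf_eq, key n] at hn
    exact hn
  exact Set.Finite.subset (Set.Finite.preimage ((add_left_injective m).injOn) hx) hsub

theorem Lset_subset_inf {g : G} {U : Subgroup G} (hLU : ∀ x ∈ Lset g U, x ∈ U) :
    ∀ x ∈ Lset g U, x ∈ plusSubgroup g U ⊓ minusSubgroup g U := by
  intro x hx
  rw [mem_inf_plus_minus]
  intro m
  rw [mem_conjSubgroup]
  have : (g ^ m)⁻¹ * x * g ^ m ∈ Lset g U := Lset_shift hx m
  exact hLU _ this

theorem mem_Lset_of_conj_plus_of_minus {g : G} {U : Subgroup G} {b : G} (n : ℕ)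
    (hb1 : b ∈ conjSubgroup (g ^ n) (plusSubgroup g U)) (hb2 : b ∈ minusSubgroup g U) :
    b ∈ Lset g U := by
  apply Set.Finite.subset (Set.finite_Ioo (0 : ℤ) (n : ℤ))
  intro m hm
  simp only [Set.mem_setOf_eq] at hm
  rw [Set.mem_Ioo]
  by_contra hc
  push_neg at hc
  apply hm
  rcases le_or_gt m 0 with hle | hpos
  · -- use b ∈ U₋
    have hk : g ^ m = g⁻¹ ^ ((-m).toNat) := by
      rw [inv_pow, ← zpow_natCast, ← zpow_neg]
      congr 1
      omega
    rw [hk]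
    rw [minusSubgroup_eq] at hb2
    exact mem_plusSubgroup.mp hb2 _
  · -- m ≥ n
    have hge : (n : ℤ) ≤ m := hc hpos
    have hk : g ^ m = g ^ ((n + (m - (n:ℤ)).toNat : ℕ)) := by
      rw [← zpow_natCast]
      congr 1
      omega
    rw [hk, pow_add, ← conjSubgroup_conjSubgroup]
    have hP : plusSubgroup g U ≤ conjSubgroup (g ^ ((m - (n:ℤ)).toNat)) U :=
      fun y hy => mem_plusSubgroup.mp hy _
    exact conjSubgroup_mono _ hP hb1

end GroupOnly

section Top

variable [Group G] [TopologicalSpace G] [IsTopologicalGroup G]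

def conjHomeo (a : G) : G ≃ₜ G := (Homeomorph.mulLeft a).trans (Homeomorph.mulRight a⁻¹)

theorem coe_conjSubgroup' (a : G) (U : Subgroup G) :
    (conjSubgroup a U : Set G) = (conjHomeo a) '' (U : Set G) := coe_conjSubgroup a U

theorem isCompact_conj {U : Subgroup G} (h : IsCompact (U : Set G)) (a : G) :
    IsCompact (conjSubgroup a U : Set G) := by
  rw [coe_conjSubgroup']
  exact h.image (conjHomeo a).continuous

theorem isOpen_conj {U : Subgroup G} (h : IsOpen (U : Set G)) (a : G) :
    IsOpen (conjSubgroup a U : Set G) := by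
  rw [coe_conjSubgroup']
  exact (conjHomeo a).isOpen_image.mpr h

theorem isClosed_conj {U : Subgroup G} (h : IsClosed (U : Set G)) (a : G) :
    IsClosed (conjSubgroup a U : Set G) := by
  rw [coe_conjSubgroup']
  exact (conjHomeo a).isClosedMap _ h

theorem relindex_ne_zero_of_isOpen_of_isCompact {H K : Subgroup G}
    (hH : IsOpen (H : Set G)) (hK : IsCompact (K : Set G)) : H.relIndex K ≠ 0 := by
  haveI : CompactSpace K := isCompact_iff_compactSpace.mp hK
  have hopen : IsOpen ((H.subgroupOf K : Subgroup K) : Set K) := by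
    rw [Subgroup.coe_subgroupOf]
    exact hH.preimage continuous_subtype_val
  haveI : Finite (K ⧸ H.subgroupOf K) := Subgroup.quotient_finite_of_isOpen _ hopen
  have hne : Nonempty (K ⧸ H.subgroupOf K) := inferInstance
  simp only [Subgroup.relIndex, Subgroup.index]
  rw [Nat.card_ne_zero]
  exact ⟨hne, inferInstance⟩

theorem isClosed_plus {U : Subgroup G} (hU : IsClosed (U : Set G)) (g : G) :
    IsClosed (plusSubgroup g U : Set G) := by
  show IsClosed ((⨅ n : ℕ, conjSubgroup (g ^ n) U : Subgroup G) : Set G)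
  rw [Subgroup.coe_iInf]
  exact isClosed_iInter fun n => isClosed_conj hU _

theorem isCompact_plus {U : Subgroup G} (hU : U.IsCompactOpen) (g : G) :
    IsCompact (plusSubgroup g U : Set G) :=
  IsCompact.of_isClosed_subset hU.1 (isClosed_plus (U.isClosed_of_isOpen hU.2) g)
    (SetLike.coe_subset_coe.mpr (plus_le g U))

theorem isClosed_minus {U : Subgroup G} (hU : IsClosed (U : Set G)) (g : G) :
    IsClosed (minusSubgroup g U : Set G) := isClosed_plus hU g⁻¹

-- a set closed under group operations whose trace on an open subgroup is closed, is closed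
theorem isClosed_of_isClosed_inter {S : Set G} {U : Subgroup G} (hUo : IsOpen (U : Set G))
    (hmul : ∀ a ∈ S, ∀ b ∈ S, a * b ∈ S) (hinv : ∀ a ∈ S, a⁻¹ ∈ S)
    (hcl : IsClosed (S ∩ (U : Set G))) : IsClosed S := by
  rw [← closure_subset_iff_isClosed]
  intro x hx
  have hopen : IsOpen (x • (U : Set G)) := hUo.smul x
  have hxmem : x ∈ x • (U : Set G) := ⟨1, U.one_mem, mul_one x⟩
  obtain ⟨p, hpo, hpS⟩ := mem_closure_iff.mp hx _ hopen hxmem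
  obtain ⟨u, hu, hup⟩ := hpo
  have hpu : p = x * u := by rw [← hup]; rfl
  have hpx : p⁻¹ * x ∈ (U : Set G) := by
    have : p⁻¹ * x = u⁻¹ := by rw [hpu]; group
    rw [this]; exact U.inv_mem hu
  have hmemcl : p⁻¹ * x ∈ closure (S ∩ (U : Set G)) := by
    rw [mem_closure_iff]
    intro o ho hoo
    have hopen2 : IsOpen ((fun y => p⁻¹ * y) ⁻¹' (o ∩ (U : Set G))) :=
      (ho.inter hUo).preimage (continuous_const.mul continuous_id)
    have hxmem2 : x ∈ (fun y => p⁻¹ * y) ⁻¹' (o ∩ (U : Set G)) := ⟨hoo, hpx⟩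
    obtain ⟨q, hq1, hq2⟩ := mem_closure_iff.mp hx _ hopen2 hxmem2
    exact ⟨p⁻¹ * q, hq1.1, hmul _ (hinv _ hpS) _ hq2, hq1.2⟩
  rw [hcl.closure_eq] at hmemcl
  have : x = p * (p⁻¹ * x) := by group
  rw [this]
  exact hmul _ hpS _ hmemcl.1

theorem mem_plusPlusSet {g x : G} {U : Subgroup G} :
    x ∈ plusPlusSet g U ↔ ∃ n : ℕ, x ∈ conjSubgroup (g ^ n) (plusSubgroup g U) := by
  simp [plusPlusSet]

theorem plusPlusSet_mul {g : G} {U : Subgroup G} {a b : G} (ha : a ∈ plusPlusSet g U)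
    (hb : b ∈ plusPlusSet g U) : a * b ∈ plusPlusSet g U := by
  obtain ⟨n, hn⟩ := mem_plusPlusSet.mp ha
  obtain ⟨m, hm⟩ := mem_plusPlusSet.mp hb
  refine mem_plusPlusSet.mpr ⟨max n m, Subgroup.mul_mem _ ?_ ?_⟩
  · exact conj_pow_plus_mono g U (le_max_left n m) hn
  · exact conj_pow_plus_mono g U (le_max_right n m) hm

theorem plusPlusSet_inv {g : G} {U : Subgroup G} {a : G} (ha : a ∈ plusPlusSet g U) :
    a⁻¹ ∈ plusPlusSet g U := by
  obtain ⟨n, hn⟩ := mem_plusPlusSet.mp ha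
  exact mem_plusPlusSet.mpr ⟨n, Subgroup.inv_mem _ hn⟩

theorem plusPlusSet_one (g : G) (U : Subgroup G) : (1 : G) ∈ plusPlusSet g U :=
  mem_plusPlusSet.mpr ⟨0, Subgroup.one_mem _⟩

theorem plus_subset_plusPlusSet (g : G) (U : Subgroup G) {x : G}
    (h : x ∈ plusSubgroup g U) : x ∈ plusPlusSet g U :=
  mem_plusPlusSet.mpr ⟨0, by simpa using h⟩

-- === Baire category stabilization ===
theorem exists_stab [T2Space G] (g : G) (U : Subgroup G) (hU : U.IsCompactOpen)
    (hclosed : IsClosed (plusPlusSet g U)) :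
    ∃ M : ℕ, ∀ n : ℕ, ∀ x, x ∈ conjSubgroup (g ^ n) (plusSubgroup g U) → x ∈ U →
      x ∈ conjSubgroup (g ^ M) (plusSubgroup g U) := by
  classical
  set P := plusSubgroup g U with hP
  have hUclosed : IsClosed (U : Set G) := U.isClosed_of_isOpen hU.2
  set V : Set G := plusPlusSet g U ∩ (U : Set G) with hV
  have hVclosed : IsClosed V := hclosed.inter hUclosed
  have hVc : IsCompact V := IsCompact.of_isClosed_subset hU.1 hVclosed Set.inter_subset_right
  have h1V : (1 : G) ∈ V := ⟨plusPlusSet_one g U, U.one_mem⟩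
  have hVmul : ∀ a ∈ V, ∀ b ∈ V, a * b ∈ V := fun a ha b hb =>
    ⟨plusPlusSet_mul ha.1 hb.1, U.mul_mem ha.2 hb.2⟩
  have hVinv : ∀ a ∈ V, a⁻¹ ∈ V := fun a ha => ⟨plusPlusSet_inv ha.1, U.inv_mem ha.2⟩
  haveI : Nonempty ↥V := ⟨⟨1, h1V⟩⟩
  haveI : CompactSpace ↥V := isCompact_iff_compactSpace.mp hVc
  -- the closed pieces
  set Hn : ℕ → Subgroup G := fun n => conjSubgroup (g ^ n) P ⊓ U with hHn
  have hHn_mono : ∀ {n m : ℕ}, n ≤ m → Hn n ≤ Hn m := fun {n m} h =>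
    inf_le_inf_right U (conj_pow_plus_mono g U h)
  have hHnV : ∀ n, (Hn n : Set G) ⊆ V := by
    intro n x hx
    have hx' : x ∈ conjSubgroup (g ^ n) P ⊓ U := hx
    rw [Subgroup.mem_inf] at hx'
    exact ⟨mem_plusPlusSet.mpr ⟨n, hx'.1⟩, hx'.2⟩
  have hHn_closed : ∀ n, IsClosed (Hn n : Set G) := by
    intro n
    have : (Hn n : Set G) = (conjSubgroup (g ^ n) P : Set G) ∩ (U : Set G) := rfl
    rw [this]
    exact (isClosed_conj (isClosed_plus hUclosed g) _).inter hUclosed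
  have hcover : ⋃ n : ℕ, (Subtype.val ⁻¹' (Hn n : Set G) : Set ↥V) = Set.univ := by
    ext v
    simp only [Set.mem_iUnion, Set.mem_univ, iff_true, Set.mem_preimage]
    obtain ⟨hpp, hUU⟩ := v.2
    obtain ⟨n, hn⟩ := mem_plusPlusSet.mp hpp
    exact ⟨n, Subgroup.mem_inf.mpr ⟨hn, hUU⟩⟩
  obtain ⟨N, hNint⟩ := nonempty_interior_of_iUnion_of_closed
    (fun n => (hHn_closed n).preimage continuous_subtype_val) hcover
  obtain ⟨x₀, hx₀⟩ := hNint
  rw [mem_interior] at hx₀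
  obtain ⟨t, htsub, hto, hxt⟩ := hx₀
  rw [isOpen_induced_iff] at hto
  obtain ⟨O, hOopen, hOt⟩ := hto
  have hx₀O : (x₀ : G) ∈ O := by rw [← hOt] at hxt; exact hxt
  have hx₀H : (x₀ : G) ∈ Hn N := htsub hxt
  have hkey : ∀ z ∈ O, z ∈ V → z ∈ Hn N := by
    intro z hzO hzV
    have : (⟨z, hzV⟩ : ↥V) ∈ t := by rw [← hOt]; exact hzO
    exact htsub this
  -- open cover of V by translates
  have hcov2 : V ⊆ ⋃ v : ↥V, (fun y => (x₀ : G) * (v : G)⁻¹ * y) ⁻¹' O := by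
    intro z hz
    refine Set.mem_iUnion.mpr ⟨⟨z, hz⟩, ?_⟩
    show (x₀ : G) * z⁻¹ * z ∈ O
    simpa using hx₀O
  obtain ⟨s, hs⟩ := hVc.elim_finite_subcover _
    (fun v : ↥V => hOopen.preimage (continuous_const.mul continuous_id)) hcov2
  -- choose levels for the finitely many centers
  have hchoice : ∀ v : ↥V, ∃ n : ℕ, (v : G) ∈ conjSubgroup (g ^ n) P :=
    fun v => mem_plusPlusSet.mp v.2.1
  set nv : ↥V → ℕ := fun v => (hchoice v).choose with hnv
  set M : ℕ := max N (s.sup nv) with hM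
  refine ⟨M, ?_⟩
  have main : ∀ z ∈ V, z ∈ conjSubgroup (g ^ M) P := by
    intro z hz
    obtain ⟨v, hvs, hvz⟩ := Set.mem_iUnion₂.mp (hs hz)
    have hq : (x₀ : G) * (v : G)⁻¹ * z ∈ V :=
      hVmul _ (hVmul _ x₀.2 _ (hVinv _ v.2)) _ hz
    have hqH : (x₀ : G) * (v : G)⁻¹ * z ∈ Hn N := hkey _ hvz hq
    have hvM : (v : G) ∈ conjSubgroup (g ^ M) P := by
      have h1 : (v : G) ∈ conjSubgroup (g ^ nv v) P := (hchoice v).choose_spec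
      exact conj_pow_plus_mono g U (le_trans (Finset.le_sup hvs) (le_max_right _ _)) h1
    have hxq : (x₀ : G)⁻¹ * ((x₀ : G) * (v : G)⁻¹ * z) ∈ Hn M := by
      refine Subgroup.mul_mem _ (Subgroup.inv_mem _ ?_) ?_
      · exact hHn_mono (le_max_left _ _) hx₀H
      · exact hHn_mono (le_max_left _ _) hqH
    have hz_eq : z = (v : G) * ((x₀ : G)⁻¹ * ((x₀ : G) * (v : G)⁻¹ * z)) := by group
    rw [hz_eq]
    refine Subgroup.mul_mem _ hvM ?_
    exact (Subgroup.mem_inf.mp hxq).1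
  intro n x hx hxU
  exact main x ⟨mem_plusPlusSet.mpr ⟨n, hx⟩, hxU⟩

-- ==== the finite approximation chain and Lemma 1 (tidy above => U = U₊U₋) ====

def chainQ (g : G) (U : Subgroup G) : ℕ → Subgroup G
  | 0 => U
  | n+1 => conjSubgroup g (chainQ g U n) ⊓ U

theorem chainQ_le_U (g : G) (U : Subgroup G) : ∀ n, chainQ g U n ≤ U
  | 0 => le_refl U
  | _+1 => inf_le_right

theorem chainQ_antitone (g : G) (U : Subgroup G) : ∀ n, chainQ g U (n+1) ≤ chainQ g U n
  | 0 => inf_le_right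
  | n+1 => inf_le_inf_right U (conjSubgroup_mono g (chainQ_antitone g U n))

theorem chainQ_le_conj_pow (g : G) (U : Subgroup G) :
    ∀ n, chainQ g U n ≤ conjSubgroup (g ^ n) U
  | 0 => by simp [chainQ]
  | n+1 => by
    rw [conj_pow_succ]
    exact le_trans inf_le_left (conjSubgroup_mono g (chainQ_le_conj_pow g U n))

theorem plus_le_chainQ (g : G) (U : Subgroup G) : ∀ n, plusSubgroup g U ≤ chainQ g U n
  | 0 => plus_le g U
  | n+1 => le_inf
      (le_trans (plus_le_conj_plus g U) (conjSubgroup_mono g (plus_le_chainQ g U n)))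
      (plus_le g U)

theorem chainQ_succ_le_conj (g : G) (U : Subgroup G) (n : ℕ) :
    chainQ g U (n+1) ≤ conjSubgroup g (chainQ g U n) := inf_le_left

theorem chainQ_succ_succ (g : G) (U : Subgroup G) (n : ℕ) :
    chainQ g U (n+2) = chainQ g U (n+1) ⊓ conjSubgroup g (chainQ g U (n+1)) := by
  apply le_antisymm
  · refine le_inf ?_ ?_
    · show conjSubgroup g (chainQ g U (n+1)) ⊓ U ≤ chainQ g U (n+1)
      show conjSubgroup g (chainQ g U (n+1)) ⊓ U ≤ conjSubgroup g (chainQ g U n) ⊓ U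
      exact inf_le_inf_right U (conjSubgroup_mono g (chainQ_antitone g U n))
    · exact inf_le_left
  · show chainQ g U (n+1) ⊓ conjSubgroup g (chainQ g U (n+1))
        ≤ conjSubgroup g (chainQ g U (n+1)) ⊓ U
    exact le_inf inf_le_right (le_trans inf_le_left (chainQ_le_U g U (n+1)))

theorem conj_plus_inf_chainQ (g : G) (U : Subgroup G) (n : ℕ) :
    conjSubgroup g (plusSubgroup g U) ⊓ chainQ g U (n+1) = plusSubgroup g U := by
  show conjSubgroup g (plusSubgroup g U) ⊓ (conjSubgroup g (chainQ g U n) ⊓ U)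
      = plusSubgroup g U
  rw [← inf_assoc, ← conjSubgroup_inf, inf_eq_left.mpr (plus_le_chainQ g U n),
    conj_plus_inf]

theorem chainQ_isOpen {U : Subgroup G} (hU : U.IsCompactOpen) (g : G) :
    ∀ n, IsOpen (chainQ g U n : Set G)
  | 0 => hU.2
  | n+1 => by
    have : (chainQ g U (n+1) : Set G)
        = (conjSubgroup g (chainQ g U n) : Set G) ∩ (U : Set G) := rfl
    rw [this]
    exact (isOpen_conj (chainQ_isOpen hU g n) g).inter hU.2

theorem chainQ_isCompact [T2Space G] {U : Subgroup G} (hU : U.IsCompactOpen) (g : G) (n : ℕ) :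
    IsCompact (chainQ g U n : Set G) := by
  apply IsCompact.of_isClosed_subset hU.1
  · exact Subgroup.isClosed_of_isOpen _ (chainQ_isOpen hU g n)
  · exact SetLike.coe_subset_coe.mpr (chainQ_le_U g U n)

theorem chainQ_relindex [T2Space G] {U : Subgroup G} (hU : U.IsCompactOpen) {g : G}
    (hta : TidyAbove g U) (n : ℕ) :
    (chainQ g U (n+1)).relIndex (conjSubgroup g (chainQ g U n))
      = (plusSubgroup g U).relIndex (conjSubgroup g (plusSubgroup g U)) := by
  set P := plusSubgroup g U with hP
  set sN : ℕ → ℕ := fun n => (chainQ g U (n+1)).relIndex (conjSubgroup g (chainQ g U n))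
    with hsN
  have hfin : ∀ n, sN n ≠ 0 := fun n =>
    relindex_ne_zero_of_isOpen_of_isCompact (chainQ_isOpen hU g (n+1))
      (isCompact_conj (chainQ_isCompact hU g n) g)
  have hs0 : sN 0 = U.relIndex (conjSubgroup g U) := by
    have e : chainQ g U 1 = conjSubgroup g U ⊓ U := rfl
    have e2 : chainQ g U 0 = U := rfl
    rw [hsN]
    show (chainQ g U 1).relIndex (conjSubgroup g (chainQ g U 0)) = _
    rw [e, e2]
    exact Subgroup.inf_relIndex_left (H := conjSubgroup g U) (K := U)
  have hinf_eq : ∀ n, (chainQ g U (n+1)).relIndex (conjSubgroup g P)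
      = P.relIndex (conjSubgroup g P) := by
    intro n
    rw [← Subgroup.inf_relIndex_right]
    rw [inf_comm, conj_plus_inf_chainQ g U n]
  have hgeinf : ∀ n, P.relIndex (conjSubgroup g P) ≤ sN n := by
    intro n
    rw [← hinf_eq n]
    exact Subgroup.relIndex_le_of_le_right
      (conjSubgroup_mono g (plus_le_chainQ g U n)) (hfin n)
  have hle1 : ∀ n, sN (n+1) ≤ sN n := by
    intro n
    have e1 : sN (n+1) = (chainQ g U (n+1)).relIndex (conjSubgroup g (chainQ g U (n+1))) := by
      show (chainQ g U (n+2)).relIndex _ = _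
      rw [chainQ_succ_succ, Subgroup.inf_relIndex_right]
    rw [e1]
    exact Subgroup.relIndex_le_of_le_right
      (conjSubgroup_mono g (chainQ_antitone g U n)) (hfin n)
  have hle0 : ∀ n, sN n ≤ sN 0 := by
    intro n
    induction n with
    | zero => exact le_refl _
    | succ n ih => exact le_trans (hle1 n) ih
  have : sN n = P.relIndex (conjSubgroup g P) := by
    apply le_antisymm
    · calc sN n ≤ sN 0 := hle0 n
        _ = U.relIndex (conjSubgroup g U) := hs0
        _ = P.relIndex (conjSubgroup g P) := hta.symm
    · exact hgeinf n
  exact this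

theorem chainQ_step [T2Space G] {U : Subgroup G} (hU : U.IsCompactOpen) {g : G}
    (hta : TidyAbove g U) (n : ℕ) :
    ∀ x ∈ chainQ g U n, ∃ a ∈ plusSubgroup g U,
      ∃ t ∈ conjSubgroup g⁻¹ (chainQ g U (n+1)), a * t = x := by
  set P := plusSubgroup g U with hP
  have h0 : (chainQ g U (n+1)).relIndex (conjSubgroup g (chainQ g U n)) ≠ 0 :=
    relindex_ne_zero_of_isOpen_of_isCompact (chainQ_isOpen hU g (n+1))
      (isCompact_conj (chainQ_isCompact hU g n) g)
  have heq : (chainQ g U (n+1)).relIndex (conjSubgroup g P)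
      = (chainQ g U (n+1)).relIndex (conjSubgroup g (chainQ g U n)) := by
    rw [chainQ_relindex hU hta n, ← Subgroup.inf_relIndex_right, inf_comm,
      conj_plus_inf_chainQ g U n]
  have key := exists_mul_of_relindex_eq
    (conjSubgroup_mono g (plus_le_chainQ g U n)) (chainQ_succ_le_conj g U n) h0 heq
  intro x hx
  have hy : g * x * g⁻¹ ∈ conjSubgroup g (chainQ g U n) := by
    rw [mem_conjSubgroup]
    have e : g⁻¹ * (g * x * g⁻¹) * g = x := by group
    rw [e]; exact hx
  obtain ⟨a, ha, t, ht, hat⟩ := key _ hy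
  refine ⟨g⁻¹ * a * g, ?_, g⁻¹ * t * g, ?_, ?_⟩
  · rw [mem_conjSubgroup] at ha; exact ha
  · rw [mem_conjSubgroup]
    have e : g⁻¹⁻¹ * (g⁻¹ * t * g) * g⁻¹ = t := by group
    rw [e]; exact ht
  · have : (g⁻¹ * a * g) * (g⁻¹ * t * g) = g⁻¹ * (a * t) * g := by group
    rw [this, hat]; group

-- the decreasing right-hand chain
def chainR (g : G) (U : Subgroup G) (m : ℕ) : Subgroup G :=
  conjSubgroup ((g ^ m)⁻¹) (chainQ g U m)

theorem chainR_zero (g : G) (U : Subgroup G) : chainR g U 0 = U := by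
  show conjSubgroup ((g ^ 0)⁻¹) U = U
  rw [pow_zero, inv_one, conjSubgroup_one]

theorem chainR_le_U (g : G) (U : Subgroup G) (m : ℕ) : chainR g U m ≤ U := by
  have h := conjSubgroup_mono ((g ^ m)⁻¹) (chainQ_le_conj_pow g U m)
  refine le_trans h ?_
  rw [conjSubgroup_conjSubgroup, inv_mul_cancel, conjSubgroup_one]

theorem chainR_antitone (g : G) (U : Subgroup G) (m : ℕ) :
    chainR g U (m+1) ≤ chainR g U m := by
  have h := conjSubgroup_mono ((g ^ (m+1))⁻¹) (chainQ_succ_le_conj g U m)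
  refine le_trans h ?_
  rw [conjSubgroup_conjSubgroup]
  have e : (g ^ (m+1))⁻¹ * g = (g ^ m)⁻¹ := by
    rw [← inv_pow, ← inv_pow, pow_succ]
    group
  rw [e]
  exact le_refl _

theorem conj_pow_minus_le_chainQ (g : G) (U : Subgroup G) :
    ∀ m, conjSubgroup (g ^ m) (minusSubgroup g U) ≤ chainQ g U m
  | 0 => by simpa [chainQ] using minus_le g U
  | m+1 => by
    refine le_inf ?_ ?_
    · rw [conj_pow_succ]
      exact conjSubgroup_mono g (conj_pow_minus_le_chainQ g U m)
    · exact le_trans (conj_pow_minus_le g U (m+1)) (minus_le g U)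

theorem minus_le_chainR (g : G) (U : Subgroup G) (m : ℕ) :
    minusSubgroup g U ≤ chainR g U m := by
  have h := conjSubgroup_mono ((g ^ m)⁻¹) (conj_pow_minus_le_chainQ g U m)
  rwa [conjSubgroup_conjSubgroup, inv_mul_cancel, conjSubgroup_one] at h

theorem chainR_subset_minus (g : G) (U : Subgroup G) {x : G}
    (h : ∀ m, x ∈ chainR g U m) : x ∈ minusSubgroup g U := by
  rw [minusSubgroup_eq, mem_plusSubgroup]
  intro m
  have h1 : x ∈ conjSubgroup ((g ^ m)⁻¹) U :=
    conjSubgroup_mono _ (chainQ_le_U g U m) (h m)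
  rwa [← inv_pow] at h1

theorem chainR_isClosed [T2Space G] {U : Subgroup G} (hU : U.IsCompactOpen) (g : G) (m : ℕ) :
    IsClosed (chainR g U m : Set G) :=
  isClosed_conj (Subgroup.isClosed_of_isOpen _ (chainQ_isOpen hU g m)) _

theorem chainR_isCompact [T2Space G] {U : Subgroup G} (hU : U.IsCompactOpen) (g : G) (m : ℕ) :
    IsCompact (chainR g U m : Set G) :=
  isCompact_conj (chainQ_isCompact hU g m) _

theorem chainR_step [T2Space G] {U : Subgroup G} (hU : U.IsCompactOpen) {g : G}
    (hta : TidyAbove g U) (m : ℕ) :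
    ∀ x ∈ U, ∃ a ∈ plusSubgroup g U, ∃ b ∈ chainR g U m, a * b = x := by
  induction m with
  | zero =>
    intro x hx
    refine ⟨1, Subgroup.one_mem _, x, ?_, one_mul x⟩
    rw [chainR_zero]; exact hx
  | succ m ih =>
    intro x hx
    obtain ⟨a, ha, b, hb, hab⟩ := ih x hx
    have hbQ : g ^ m * b * (g ^ m)⁻¹ ∈ chainQ g U m := by
      have := hb
      rw [chainR] at this
      rw [mem_conjSubgroup] at this
      have e : ((g^m)⁻¹)⁻¹ * b * (g^m)⁻¹ = g ^ m * b * (g ^ m)⁻¹ := by group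
      rwa [e] at this
    obtain ⟨a', ha', t', ht', hat'⟩ := chainQ_step hU hta m _ hbQ
    set c := (g ^ m)⁻¹ * a' * g ^ m with hc
    set d := (g ^ m)⁻¹ * t' * g ^ m with hd
    have hcP : c ∈ plusSubgroup g U := by
      apply conj_inv_pow_plus_le g U m
      rw [mem_conjSubgroup]
      have e : ((g^m)⁻¹)⁻¹ * c * (g^m)⁻¹ = a' := by rw [hc]; group
      rw [e]; exact ha'
    have hdR : d ∈ chainR g U (m+1) := by
      have h1 : d ∈ conjSubgroup ((g ^ m)⁻¹) (conjSubgroup g⁻¹ (chainQ g U (m+1))) := by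
        rw [mem_conjSubgroup]
        have e : ((g^m)⁻¹)⁻¹ * d * (g^m)⁻¹ = t' := by rw [hd]; group
        rw [e]; exact ht'
      rw [conjSubgroup_conjSubgroup] at h1
      have e : (g ^ m)⁻¹ * g⁻¹ = (g ^ (m+1))⁻¹ := by
        rw [← inv_pow, ← inv_pow, pow_succ]
      rwa [chainR, ← e]
    have hbd : b = c * d := by
      have e1 : c * d = (g ^ m)⁻¹ * (a' * t') * g ^ m := by rw [hc, hd]; group
      rw [e1, hat']
      group
    refine ⟨a * c, Subgroup.mul_mem _ ha hcP, d, hdR, ?_⟩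
    rw [← hab, hbd]
    group

/-- Lemma 1 : tidy above implies `U = U₊ U₋`. -/
theorem exists_plus_mul_minus [T2Space G] {U : Subgroup G} (hU : U.IsCompactOpen) {g : G}
    (hta : TidyAbove g U) :
    ∀ x ∈ U, ∃ a ∈ plusSubgroup g U, ∃ b ∈ minusSubgroup g U, a * b = x := by
  intro x hx
  set F : ℕ → Set G := fun m =>
    (chainR g U m : Set G) ∩ {b : G | x * b⁻¹ ∈ plusSubgroup g U} with hF
  have hdecr : ∀ m, F (m+1) ⊆ F m := fun m =>
    Set.inter_subset_inter_left _ (SetLike.coe_subset_coe.mpr (chainR_antitone g U m))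
  have hne : ∀ m, (F m).Nonempty := by
    intro m
    obtain ⟨a, ha, b, hb, hab⟩ := chainR_step hU hta m x hx
    refine ⟨b, hb, ?_⟩
    have e : x * b⁻¹ = a := by rw [← hab]; group
    show x * b⁻¹ ∈ plusSubgroup g U
    rw [e]; exact ha
  have hclsd : ∀ m, IsClosed (F m) := by
    intro m
    apply (chainR_isClosed hU g m).inter
    have : {b : G | x * b⁻¹ ∈ plusSubgroup g U}
        = (fun b : G => x * b⁻¹) ⁻¹' (plusSubgroup g U : Set G) := rfl
    rw [this]
    exact (isClosed_plus (Subgroup.isClosed_of_isOpen _ hU.2) g).preimage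
      (continuous_const.mul continuous_inv)
  have hcmp : IsCompact (F 0) :=
    IsCompact.of_isClosed_subset (chainR_isCompact hU g 0) (hclsd 0) Set.inter_subset_left
  obtain ⟨b, hb⟩ := IsCompact.nonempty_iInter_of_sequence_nonempty_isCompact_isClosed
    F hdecr hne hcmp hclsd
  rw [Set.mem_iInter] at hb
  have hbm : b ∈ minusSubgroup g U := chainR_subset_minus g U (fun m => (hb m).1)
  refine ⟨x * b⁻¹, (hb 0).2, b, hbm, by group⟩

-- ==== relindex of P in conj (g^M) P is nonzero, under tidy-above ====
theorem relindex_plus_conj_pow_ne_zero {U : Subgroup G} {g : G}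
    (hs : (plusSubgroup g U).relIndex (conjSubgroup g (plusSubgroup g U)) ≠ 0) :
    ∀ M : ℕ, (plusSubgroup g U).relIndex (conjSubgroup (g ^ M) (plusSubgroup g U)) ≠ 0 := by
  intro M
  induction M with
  | zero =>
    have e : conjSubgroup (g ^ 0) (plusSubgroup g U) = plusSubgroup g U := by
      rw [pow_zero, conjSubgroup_one]
    rw [e, Subgroup.relIndex_self]
    exact one_ne_zero
  | succ M ih =>
    have h1 : plusSubgroup g U ≤ conjSubgroup (g ^ M) (plusSubgroup g U) :=
      plus_le_conj_pow g U M
    have h2 : conjSubgroup (g ^ M) (plusSubgroup g U)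
        ≤ conjSubgroup (g ^ (M+1)) (plusSubgroup g U) := conj_pow_plus_mono g U (Nat.le_succ M)
    have tower := Subgroup.relIndex_mul_relIndex _ _ _ h1 h2
    rw [← tower]
    apply mul_ne_zero ih
    have e : conjSubgroup (g ^ (M+1)) (plusSubgroup g U)
        = conjSubgroup (g ^ M) (conjSubgroup g (plusSubgroup g U)) := conj_pow_succ' g _ _
    rw [e, relindex_conj]
    exact hs

-- ==== forward direction : tidiness forces L ⊆ U₀₀ ====
theorem Lset_subset_of_isClosed [T2Space G] {U : Subgroup G} (hU : U.IsCompactOpen) {g : G}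
    (hs : (plusSubgroup g U).relIndex (conjSubgroup g (plusSubgroup g U)) ≠ 0)
    (hclosed : IsClosed (plusPlusSet g U)) :
    ∀ x ∈ Lset g U, x ∈ plusSubgroup g U ⊓ minusSubgroup g U := by
  classical
  obtain ⟨M, hM⟩ := exists_stab g U hU hclosed
  set P := plusSubgroup g U with hP
  set Um := minusSubgroup g U with hUm
  set C : Subgroup G := conjSubgroup (g ^ M) P ⊓ Um with hC
  set Z : Subgroup G := P ⊓ Um with hZ
  have hCU : C ≤ U := le_trans inf_le_right (minus_le g U)
  have hZC : Z ≤ C := le_inf (le_trans inf_le_left (plus_le_conj_pow g U M)) inf_le_right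
  have hPC : P ⊓ C = Z := by
    apply le_antisymm
    · exact le_inf inf_le_left (le_trans inf_le_right inf_le_right)
    · exact le_inf inf_le_left hZC
  have hCconj : conjSubgroup g C ≤ C := by
    intro x hx
    rw [hC, conjSubgroup_inf] at hx
    rw [Subgroup.mem_inf] at hx
    obtain ⟨hx1, hx2⟩ := hx
    have hxm : x ∈ Um := conj_minus_le g U hx2
    have hx1' : x ∈ conjSubgroup (g ^ (M+1)) P := by
      rw [conj_pow_succ]
      exact hx1
    have hxU : x ∈ U := minus_le g U hxm
    have := hM (M+1) x hx1' hxU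
    exact Subgroup.mem_inf.mpr ⟨this, hxm⟩
  have hcne : P.relIndex C ≠ 0 := by
    intro h0
    exact relindex_plus_conj_pow_ne_zero hs M
      (Subgroup.relIndex_eq_zero_of_le_right inf_le_left h0)
  have hZconj : conjSubgroup g Z = Z := conj_inf_plus_minus g U
  have hZgC : Z ≤ conjSubgroup g C := by
    rw [← hZconj]
    exact conjSubgroup_mono g hZC
  have e1 : Z.relIndex C = P.relIndex C := by
    rw [← hPC]
    exact Subgroup.inf_relIndex_right P C
  have e2 : Z.relIndex (conjSubgroup g C) = P.relIndex C := by
    have einf : conjSubgroup g P ⊓ conjSubgroup g C = Z := by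
      rw [← conjSubgroup_inf, hPC, hZconj]
    calc Z.relIndex (conjSubgroup g C)
        = (conjSubgroup g P ⊓ conjSubgroup g C).relIndex (conjSubgroup g C) := by rw [einf]
      _ = (conjSubgroup g P).relIndex (conjSubgroup g C) := Subgroup.inf_relIndex_right _ _
      _ = P.relIndex C := relindex_conj g P C
  have tower := Subgroup.relIndex_mul_relIndex Z (conjSubgroup g C) C hZgC hCconj
  rw [e1, e2] at tower
  have hd1 : (conjSubgroup g C).relIndex C = 1 := by
    have := tower
    have hpos : 0 < P.relIndex C := Nat.pos_of_ne_zero hcne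
    nlinarith [this, hpos]
  have hCled : C ≤ conjSubgroup g C := Subgroup.relIndex_eq_one.mp hd1
  have hCeq : conjSubgroup g C = C := le_antisymm hCconj hCled
  have hCn : ∀ n : ℕ, conjSubgroup (g ^ n) C = C := by
    intro n
    induction n with
    | zero => rw [pow_zero, conjSubgroup_one]
    | succ n ih => rw [conj_pow_succ, ih, hCeq]
  have hCP : C ≤ P := by
    intro x hx
    rw [hP, mem_plusSubgroup]
    intro n
    have : x ∈ conjSubgroup (g ^ n) C := by rw [hCn n]; exact hx
    exact conjSubgroup_mono _ hCU this
  -- now the main argument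
  intro x hx
  obtain ⟨bA, hbA⟩ := Set.Finite.bddAbove hx
  obtain ⟨bB, hbB⟩ := Set.Finite.bddBelow hx
  set N : ℕ := bA.toNat + (-bB).toNat + 1 with hN
  have habove : ∀ n : ℤ, (N : ℤ) ≤ n → x ∈ conjSubgroup (g ^ n) U := by
    intro n hn
    by_contra hmem
    have h1 : n ≤ bA := hbA hmem
    have h2 : bA ≤ (bA.toNat : ℤ) := Int.self_le_toNat bA
    omega
  have hbelow : ∀ n : ℤ, n ≤ -(N : ℤ) → x ∈ conjSubgroup (g ^ n) U := by
    intro n hn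
    by_contra hmem
    have h1 : bB ≤ n := hbB hmem
    have h2 : -bB ≤ ((-bB).toNat : ℤ) := Int.self_le_toNat (-bB)
    omega
  set z : G := g ^ N * x * (g ^ N)⁻¹ with hz
  have hzm : z ∈ Um := by
    rw [hUm, minusSubgroup_eq, mem_plusSubgroup]
    intro k
    rw [mem_conjSubgroup]
    have hmem := hbelow (-((N : ℤ) + (k : ℤ))) (by omega)
    rw [mem_conjSubgroup] at hmem
    have e : ((g⁻¹) ^ k)⁻¹ * z * (g⁻¹) ^ k
        = (g ^ (-((N : ℤ) + (k : ℤ))))⁻¹ * x * g ^ (-((N : ℤ) + (k : ℤ))) := by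
      rw [hz]; group
    rw [e]
    exact hmem
  have hzpp : z ∈ conjSubgroup (g ^ (2 * N)) P := by
    rw [mem_conjSubgroup, hP, mem_plusSubgroup]
    intro k
    rw [mem_conjSubgroup]
    have hmem := habove ((N : ℤ) + (k : ℤ)) (by omega)
    rw [mem_conjSubgroup] at hmem
    have e : (g ^ k)⁻¹ * ((g ^ (2 * N))⁻¹ * z * g ^ (2 * N)) * g ^ k
        = (g ^ ((N : ℤ) + (k : ℤ)))⁻¹ * x * g ^ ((N : ℤ) + (k : ℤ)) := by
      rw [hz]
      have e2 : (2 : ℕ) * N = N + N := by ring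
      rw [e2]
      group
    rw [e]
    exact hmem
  have hzU : z ∈ U := minus_le g U hzm
  have hzC : z ∈ C := Subgroup.mem_inf.mpr ⟨hM (2 * N) z hzpp hzU, hzm⟩
  have hzZ : z ∈ Z := Subgroup.mem_inf.mpr ⟨hCP hzC, hzm⟩
  have : x ∈ conjSubgroup ((g ^ N)⁻¹) Z := by
    rw [mem_conjSubgroup]
    have e : ((g ^ N)⁻¹)⁻¹ * x * (g ^ N)⁻¹ = z := by rw [hz]; group
    rw [e]
    exact hzZ
  rw [hZ] at this
  rwa [conj_inv_pow_inf_plus_minus] at this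

-- ==== backward direction : closedness of U₊₊ ====
theorem isClosed_plusPlusSet_of [T2Space G] {U : Subgroup G} (hU : U.IsCompactOpen) {g : G}
    (hprod : ∀ x ∈ U, ∃ a ∈ plusSubgroup g U, ∃ b ∈ minusSubgroup g U, a * b = x)
    (hLP : ∀ x ∈ Lset g U, x ∈ plusSubgroup g U) :
    IsClosed (plusPlusSet g U) := by
  have hkey : ∀ n : ℕ, ∀ x, x ∈ conjSubgroup (g ^ n) (plusSubgroup g U) → x ∈ U →
      x ∈ plusSubgroup g U := by
    intro n x hx hxU
    obtain ⟨a, ha, b, hb, hab⟩ := hprod x hxU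
    have hbconj : b ∈ conjSubgroup (g ^ n) (plusSubgroup g U) := by
      have hxa : a ∈ conjSubgroup (g ^ n) (plusSubgroup g U) := plus_le_conj_pow g U n ha
      have e : b = a⁻¹ * x := by rw [← hab]; group
      rw [e]
      exact Subgroup.mul_mem _ (Subgroup.inv_mem _ hxa) hx
    have hbL : b ∈ Lset g U := mem_Lset_of_conj_plus_of_minus n hbconj hb
    have hbP : b ∈ plusSubgroup g U := hLP b hbL
    rw [← hab]
    exact Subgroup.mul_mem _ ha hbP
  have htrace : plusPlusSet g U ∩ (U : Set G) = (plusSubgroup g U : Set G) := by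
    ext x
    constructor
    · rintro ⟨hpp, hxU⟩
      obtain ⟨n, hn⟩ := mem_plusPlusSet.mp hpp
      exact hkey n x hn hxU
    · intro hx
      exact ⟨plus_subset_plusPlusSet g U hx, plus_le g U hx⟩
  apply isClosed_of_isClosed_inter hU.2
    (fun a ha b hb => plusPlusSet_mul ha hb) (fun a ha => plusPlusSet_inv ha)
  rw [htrace]
  exact isClosed_plus (Subgroup.isClosed_of_isOpen _ hU.2) g

end Top

end TidyAux

/-- If `U` is tidy above for `g`, then `U` is tidy for `g` iff
`L_U = closure L̃_U ⊆ U`. -/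
theorem tidy_iff_LU_subset
    [Group G] [TopologicalSpace G] [IsTopologicalGroup G] [LocallyCompactSpace G] [T2Space G]
    [TotallyDisconnectedSpace G]
    (g : G) (U : Subgroup G) (hU : U.IsCompactOpen) (hta : TidyAbove g U) :
    Tidy g U ↔
      closure {x : G | {n : ℤ | x ∉ conjSubgroup (g ^ n) U}.Finite} ⊆ (U : Set G) := by
  open TidyAux in
  constructor
  · rintro ⟨_, hpp, _⟩
    have hs : (plusSubgroup g U).relIndex (conjSubgroup g (plusSubgroup g U)) ≠ 0 := by
      rw [hta]
      exact TidyAux.relindex_ne_zero_of_isOpen_of_isCompact hU.2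
        (TidyAux.isCompact_conj hU.1 g)
    have hsub := TidyAux.Lset_subset_of_isClosed hU hs hpp
    have hZclosed : IsClosed ((plusSubgroup g U ⊓ minusSubgroup g U : Subgroup G) : Set G) := by
      have hUcl : IsClosed (U : Set G) := Subgroup.isClosed_of_isOpen _ hU.2
      rw [Subgroup.coe_inf]
      exact (TidyAux.isClosed_plus hUcl g).inter (TidyAux.isClosed_minus hUcl g)
    show closure (TidyAux.Lset g U) ⊆ (U : Set G)
    refine le_trans (closure_minimal (fun x hx => hsub x hx) hZclosed) ?_
    exact SetLike.coe_subset_coe.mpr (le_trans inf_le_left (TidyAux.plus_le g U))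
  · intro hcl
    have hLU : ∀ x ∈ TidyAux.Lset g U, x ∈ U := fun x hx => hcl (subset_closure hx)
    have hLZ := TidyAux.Lset_subset_inf hLU
    have hprod := TidyAux.exists_plus_mul_minus hU hta
    refine ⟨hta, ?_, ?_⟩
    · exact TidyAux.isClosed_plusPlusSet_of hU hprod
        (fun x hx => (Subgroup.mem_inf.mp (hLZ x hx)).1)
    · rw [TidyAux.minusMinusSet_eq]
      apply TidyAux.isClosed_plusPlusSet_of (g := g⁻¹) hU
      · intro x hxU
        obtain ⟨a, ha, b, hb, hab⟩ := hprod x⁻¹ (U.inv_mem hxU)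
        refine ⟨b⁻¹, ?_, a⁻¹, ?_, ?_⟩
        · show b⁻¹ ∈ plusSubgroup g⁻¹ U
          rw [← TidyAux.minusSubgroup_eq]
          exact Subgroup.inv_mem _ hb
        · rw [TidyAux.minusSubgroup_inv]
          exact Subgroup.inv_mem _ ha
        · rw [← mul_inv_rev, hab, inv_inv]
      · intro x hx
        rw [TidyAux.Lset_inv] at hx
        show x ∈ plusSubgroup g⁻¹ U
        rw [← TidyAux.minusSubgroup_eq]
        exact (Subgroup.mem_inf.mp (hLZ x hx)).2
end

section
/- Let G be a totally disconnected locally compact Hausdorff topological group, α a bicontinuous group automorphism of G, and U a compact open subgroup of G that is tidy for α. Then the set U⋆ = ⋃_{i≥0} αⁱ(U) is both open and closed in G. -/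
open Pointwise
set_option linter.unusedSectionVars false


variable {G : Type*}

/-- `U₊ = ⋂_{n ≥ 0} αⁿ(U)`. -/
def autPlus [Group G] (α : MulAut G) (U : Subgroup G) : Subgroup G :=
  ⨅ n : ℕ, U.map (α ^ n : MulAut G).toMonoidHom

/-- `U₋ = ⋂_{n ≥ 0} α⁻ⁿ(U)`. -/
def autMinus [Group G] (α : MulAut G) (U : Subgroup G) : Subgroup G :=
  ⨅ n : ℕ, U.map (α⁻¹ ^ n : MulAut G).toMonoidHom

/-- `U` is tidy above for `α` if `[α(U₊) : U₊] = [α(U) : α(U) ∩ U]`. -/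
def AutTidyAbove [Group G] (α : MulAut G) (U : Subgroup G) : Prop :=
  (autPlus α U).relIndex ((autPlus α U).map α.toMonoidHom) = U.relIndex (U.map α.toMonoidHom)

/-- `U` is tidy below for `α` if `U₊₊ = ⋃_{n≥0} αⁿ(U₊)` and `U₋₋ = ⋃_{n≥0} α⁻ⁿ(U₋)` are closed. -/
def AutTidyBelow [Group G] [TopologicalSpace G] (α : MulAut G) (U : Subgroup G) : Prop :=
  IsClosed (⋃ n : ℕ, (((autPlus α U).map (α ^ n : MulAut G).toMonoidHom : Subgroup G) : Set G)) ∧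
  IsClosed (⋃ n : ℕ, (((autMinus α U).map (α⁻¹ ^ n : MulAut G).toMonoidHom : Subgroup G) : Set G))

/-- `U` is tidy for `α` if it is tidy above and tidy below for `α`. -/
def AutTidy [Group G] [TopologicalSpace G] (α : MulAut G) (U : Subgroup G) : Prop :=
  AutTidyAbove α U ∧ AutTidyBelow α U

section Aux
variable [Group G]

lemma mulAut_pow_coe (α : MulAut G) (n : ℕ) : ⇑(α ^ (n+1) : MulAut G) = ⇑α ∘ ⇑(α ^ n : MulAut G) := by
  ext x
  rw [pow_succ']
  rfl

lemma mulAut_cont [TopologicalSpace G] {α : MulAut G} (hα : Continuous α) (n : ℕ) :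
    Continuous ⇑(α ^ n : MulAut G) := by
  induction n with
  | zero => simpa using continuous_id
  | succ n ih => rw [mulAut_pow_coe]; exact hα.comp ih

lemma mem_map_aut {α : MulAut G} {H : Subgroup G} {x : G} :
    x ∈ H.map α.toMonoidHom ↔ α⁻¹ x ∈ H := by
  rw [Subgroup.mem_map_equiv]; rfl

lemma map_aut_one (H : Subgroup G) : H.map (1 : MulAut G).toMonoidHom = H := by
  ext x; simp [mem_map_aut]

lemma map_aut_map_aut (α β : MulAut G) (H : Subgroup G) :
    (H.map β.toMonoidHom).map α.toMonoidHom = H.map (α * β).toMonoidHom := by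
  rw [Subgroup.map_map]; rfl

end Aux
section Aux2
variable [Group G] {α : MulAut G} {U : Subgroup G}

lemma mem_autPlus {x : G} : x ∈ autPlus α U ↔ ∀ n : ℕ, (α⁻¹ ^ n : MulAut G) x ∈ U := by
  simp only [autPlus, Subgroup.mem_iInf, mem_map_aut, inv_pow]

lemma mem_autMinus {x : G} : x ∈ autMinus α U ↔ ∀ n : ℕ, (α ^ n : MulAut G) x ∈ U := by
  simp only [autMinus, Subgroup.mem_iInf, mem_map_aut, inv_pow, inv_inv]

lemma pow_succ_apply (β : MulAut G) (n : ℕ) (x : G) :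
    (β ^ (n+1) : MulAut G) x = (β ^ n : MulAut G) (β x) := by
  rw [pow_succ]; rfl

lemma autPlus_le : autPlus α U ≤ U := fun x hx => by
  have := mem_autPlus.mp hx 0; simpa using this

lemma autMinus_le : autMinus α U ≤ U := fun x hx => by
  have := mem_autMinus.mp hx 0; simpa using this

lemma autPlus_le_map : autPlus α U ≤ (autPlus α U).map α.toMonoidHom := fun x hx => by
  rw [mem_map_aut, mem_autPlus]
  intro n
  have := mem_autPlus.mp hx (n+1)
  rwa [pow_succ_apply] at this

lemma autPlus_le_mapU : autPlus α U ≤ U.map α.toMonoidHom := fun x hx => by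
  rw [mem_map_aut]
  have := mem_autPlus.mp hx 1
  simpa using this

lemma map_autPlus_inf : ((autPlus α U).map α.toMonoidHom) ⊓ U = autPlus α U := by
  ext x
  simp only [Subgroup.mem_inf, mem_map_aut, mem_autPlus]
  constructor
  · rintro ⟨h1, h2⟩ n
    cases n with
    | zero => simpa using h2
    | succ n => rw [pow_succ_apply]; exact h1 n
  · intro h
    exact ⟨fun n => by rw [← pow_succ_apply]; exact h (n+1), by simpa using h 0⟩

end Aux2
set_option linter.unusedSectionVars false
section Aux3
variable [Group G] [TopologicalSpace G] [IsTopologicalGroup G] [T2Space G]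
variable {α : MulAut G} {U : Subgroup G}

lemma cont_inv_pow (hα' : Continuous α.symm) (n : ℕ) :
    Continuous ⇑(α⁻¹ ^ n : MulAut G) :=
  mulAut_cont (show Continuous ⇑(α⁻¹ : MulAut G) from hα') n

lemma coe_map_aut (β : MulAut G) (H : Subgroup G) :
    ((H.map β.toMonoidHom : Subgroup G) : Set G) = ⇑β '' (H : Set G) :=
  Subgroup.coe_map _ _

lemma isCompact_map_aut (hUc : IsCompact (U : Set G)) {β : MulAut G} (hβ : Continuous β) :
    IsCompact ((U.map β.toMonoidHom : Subgroup G) : Set G) := by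
  rw [coe_map_aut]; exact hUc.image hβ

lemma isOpen_map_aut (hUo : IsOpen (U : Set G)) {β : MulAut G} (hβ' : Continuous β.symm) :
    IsOpen ((U.map β.toMonoidHom : Subgroup G) : Set G) := by
  rw [coe_map_aut, show ⇑β '' (U : Set G) = ⇑β.symm ⁻¹' (U : Set G) from β.toEquiv.image_eq_preimage_symm _]
  exact hUo.preimage hβ'

lemma isCompact_autPlus (hUc : IsCompact (U : Set G)) (hα : Continuous α) :
    IsCompact ((autPlus α U : Subgroup G) : Set G) := by
  have hcl : IsClosed ((autPlus α U : Subgroup G) : Set G) := by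
    rw [autPlus, Subgroup.coe_iInf]
    exact isClosed_iInter fun n => (isCompact_map_aut hUc (mulAut_cont hα n)).isClosed
  exact hUc.of_isClosed_subset hcl (autPlus_le (α := α))

lemma tidyAbove_step (hα : Continuous α) (hU : U.IsCompactOpen) (hta : AutTidyAbove α U) :
    ∀ u ∈ U, ∃ p ∈ autPlus α U, ∃ y : G, y ∈ U ∧ α y ∈ U ∧ u = p * y := by
  classical
  set V := U.map α.toMonoidHom with hV
  set P := autPlus α U with hP
  set Pα := P.map α.toMonoidHom with hPα
  have hPle : P ≤ Pα := autPlus_le_map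
  have hPαV : Pα ≤ V := Subgroup.map_mono autPlus_le
  have hPU : P ≤ U := autPlus_le
  -- finiteness of the quotient V ⧸ U.subgroupOf V
  have hVc : IsCompact (V : Set G) := isCompact_map_aut hU.1 hα
  haveI : CompactSpace V := isCompact_iff_compactSpace.mp hVc
  have hopen : IsOpen ((U.subgroupOf V : Subgroup V) : Set V) := by
    have : ((U.subgroupOf V : Subgroup V) : Set V) = (Subtype.val : V → G) ⁻¹' (U : Set G) := rfl
    rw [this]
    exact hU.2.preimage continuous_subtype_val
  haveI hfin : Finite (V ⧸ U.subgroupOf V) := Subgroup.quotient_finite_of_isOpen _ hopen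
  -- the natural injection between coset spaces
  let f : Pα → V := fun x => ⟨x.1, hPαV x.2⟩
  let ψ : Pα ⧸ P.subgroupOf Pα → V ⧸ U.subgroupOf V :=
    Quotient.map' f (by
      intro a b hab
      rw [QuotientGroup.leftRel_apply] at hab ⊢
      exact hPU hab)
  have hinj : Function.Injective ψ := by
    intro a b
    induction a using Quotient.inductionOn'
    induction b using Quotient.inductionOn'
    rename_i a b
    intro h
    unfold ψ at h
    rw [Quotient.map'_mk'', Quotient.map'_mk'', Quotient.eq''] at h
    rw [Quotient.eq'']
    rw [QuotientGroup.leftRel_apply] at h ⊢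
    -- h : (f a)⁻¹ * f b ∈ U.subgroupOf V
    have hmem : (a : G)⁻¹ * (b : G) ∈ U := h
    have hmem2 : (a : G)⁻¹ * (b : G) ∈ Pα := mul_mem (inv_mem a.2) b.2
    have : (a : G)⁻¹ * (b : G) ∈ Pα ⊓ U := ⟨hmem2, hmem⟩
    rw [map_autPlus_inf] at this
    exact this
  have hcard : Nat.card (Pα ⧸ P.subgroupOf Pα) = Nat.card (V ⧸ U.subgroupOf V) := hta
  have hbij : Function.Bijective ψ :=
    (Nat.bijective_iff_injective_and_card ψ).mpr ⟨hinj, hcard⟩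
  -- surjectivity gives V ⊆ Pα * U
  have hsurj : ∀ v ∈ V, ∃ x ∈ Pα, (x : G)⁻¹ * v ∈ U := by
    intro v hv
    obtain ⟨a, ha⟩ := hbij.2 (Quotient.mk'' ⟨v, hv⟩)
    induction a using Quotient.inductionOn'
    rename_i x
    unfold ψ at ha
    rw [Quotient.map'_mk'', Quotient.eq'', QuotientGroup.leftRel_apply] at ha
    exact ⟨(x : G), x.2, ha⟩
  -- translate back through α
  intro u hu
  have huV : α u ∈ V := ⟨u, hu, rfl⟩
  obtain ⟨x, hx, hxu⟩ := hsurj (α u) huV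
  refine ⟨α⁻¹ x, mem_map_aut.mp hx, α⁻¹ (x⁻¹ * α u), ?_, ?_, ?_⟩
  · have : α⁻¹ (x⁻¹ * α u) = (α⁻¹ x)⁻¹ * u := by
      rw [map_mul, map_inv]
      simp
    rw [this]
    exact mul_mem (inv_mem (hPU (mem_map_aut.mp hx))) hu
  · show α (α⁻¹ (x⁻¹ * α u)) ∈ U
    simpa using hxu
  · rw [← map_mul]
    simp

lemma pow_add_apply (β : MulAut G) (m n : ℕ) (x : G) :
    (β ^ (m+n) : MulAut G) x = (β ^ m : MulAut G) ((β ^ n : MulAut G) x) := by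
  rw [pow_add]; rfl

lemma pow_cancel (α : MulAut G) (n : ℕ) (x : G) :
    (α ^ n : MulAut G) ((α⁻¹ ^ n : MulAut G) x) = x := by
  rw [inv_pow]
  exact (α ^ n : MulAut G).apply_symm_apply x

lemma pow_cancel' (α : MulAut G) (n : ℕ) (x : G) :
    (α⁻¹ ^ n : MulAut G) ((α ^ n : MulAut G) x) = x := by
  rw [inv_pow]
  exact (α ^ n : MulAut G).symm_apply_apply x

/-- `D n = ⋂_{k ≤ n} α⁻ᵏ(U)`. -/
def Dm (α : MulAut G) (U : Subgroup G) (n : ℕ) : Subgroup G :=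
  ⨅ k : Fin (n+1), U.map ((α⁻¹ ^ (k : ℕ) : MulAut G)).toMonoidHom

lemma mem_Dm {n : ℕ} {x : G} :
    x ∈ Dm α U n ↔ ∀ k : ℕ, k ≤ n → (α ^ k : MulAut G) x ∈ U := by
  simp only [Dm, Subgroup.mem_iInf, mem_map_aut, inv_pow, inv_inv]
  constructor
  · intro h k hk; exact h ⟨k, Nat.lt_succ_of_le hk⟩
  · intro h k; exact h k (Nat.lt_succ_iff.mp k.2)

lemma Dm_le {n : ℕ} : Dm α U n ≤ U := fun x hx => by
  have := mem_Dm.mp hx 0 (Nat.zero_le n); simpa using this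

lemma Dm_antitone {n : ℕ} : Dm α U (n+1) ≤ Dm α U n := fun x hx => by
  rw [mem_Dm] at hx ⊢
  exact fun k hk => hx k (hk.trans (Nat.le_succ n))

lemma Dm_zero : Dm α U 0 = U := by
  ext x
  rw [mem_Dm]
  constructor
  · intro h; simpa using h 0 le_rfl
  · intro h k hk; interval_cases k; simpa using h

lemma isClosed_Dm (hUc : IsCompact (U : Set G)) (hα' : Continuous α.symm) (n : ℕ) :
    IsClosed ((Dm α U n : Subgroup G) : Set G) := by
  rw [Dm, Subgroup.coe_iInf]
  exact isClosed_iInter fun k => (isCompact_map_aut hUc (cont_inv_pow hα' (k : ℕ))).isClosed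

lemma mem_autMinus_of_forall_Dm {x : G} (h : ∀ n, x ∈ Dm α U n) : x ∈ autMinus α U := by
  rw [mem_autMinus]
  intro n
  exact mem_Dm.mp (h n) n le_rfl

/-- step of the induction: `D n ⊆ U₊ · D (n+1)` -/
lemma Dm_step (hα : Continuous α) (hU : U.IsCompactOpen) (hta : AutTidyAbove α U) {n : ℕ}
    {b : G} (hb : b ∈ Dm α U n) :
    ∃ p ∈ autPlus α U, ∃ d ∈ Dm α U (n+1), b = p * d := by
  have hc : ∀ k : ℕ, k ≤ n → (α⁻¹ ^ k : MulAut G) ((α ^ n : MulAut G) b) ∈ U := by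
    intro k hk
    obtain ⟨j, rfl⟩ := Nat.exists_eq_add_of_le hk
    rw [pow_add_apply, pow_cancel']
    exact mem_Dm.mp hb j (by omega)
  have hcU : (α ^ n : MulAut G) b ∈ U := by simpa using hc 0 (Nat.zero_le n)
  obtain ⟨p, hp, y, hyU, hαy, hdecomp⟩ := tidyAbove_step hα hU hta _ hcU
  refine ⟨(α⁻¹ ^ n : MulAut G) p, ?_, (α⁻¹ ^ n : MulAut G) y, ?_, ?_⟩
  · rw [mem_autPlus]
    intro m
    rw [← pow_add_apply]
    exact mem_autPlus.mp hp (m + n)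
  · rw [mem_Dm]
    intro k hk
    rcases Nat.lt_or_ge k (n+1) with hkn | hkn
    · -- k ≤ n : α^k (α⁻¹^n y) = α⁻¹^(n-k) y ∈ U
      have hkn' : k ≤ n := Nat.lt_succ_iff.mp hkn
      obtain ⟨j, rfl⟩ := Nat.exists_eq_add_of_le hkn'
      have : (α ^ k : MulAut G) ((α⁻¹ ^ (k + j) : MulAut G) y) = (α⁻¹ ^ j : MulAut G) y := by
        rw [pow_add_apply (α⁻¹) k j, pow_cancel]
      rw [this]
      -- y = p⁻¹ * (αⁿ b)
      have hy' : y = p⁻¹ * (α ^ (k+j) : MulAut G) b := by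
        rw [hdecomp]; group
      rw [hy', map_mul, map_inv]
      have h1 : (α⁻¹ ^ j : MulAut G) p ∈ U := mem_autPlus.mp hp j
      have h2 : (α⁻¹ ^ j : MulAut G) ((α ^ (k+j) : MulAut G) b) = (α ^ k : MulAut G) b := by
        rw [show k + j = j + k by omega, pow_add_apply, pow_cancel']
      rw [h2]
      exact mul_mem (inv_mem h1) (mem_Dm.mp hb k (by omega))
    · -- k = n+1
      have : k = n + 1 := le_antisymm hk hkn
      subst this
      have : (α ^ (n+1) : MulAut G) ((α⁻¹ ^ n : MulAut G) y) = α y := by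
        rw [show n + 1 = 1 + n by omega, pow_add_apply, pow_cancel, pow_one]
      rw [this]
      exact hαy
  · rw [← map_mul, ← hdecomp, pow_cancel']

/-- `U = U₊ U₋` (the inclusion we need). -/
lemma U_decomp (hα : Continuous α) (hα' : Continuous α.symm) (hU : U.IsCompactOpen)
    (hta : AutTidyAbove α U) :
    ∀ u ∈ U, ∃ p ∈ autPlus α U, ∃ d ∈ autMinus α U, u = p * d := by
  intro u hu
  -- first, u ∈ P * Dm n for every n
  have hn : ∀ n : ℕ, ∃ p ∈ autPlus α U, ∃ d ∈ Dm α U n, u = p * d := by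
    intro n
    induction n with
    | zero => exact ⟨1, one_mem _, u, by rw [Dm_zero]; exact hu, (one_mul u).symm⟩
    | succ n ih =>
      obtain ⟨p, hp, d, hd, hud⟩ := ih
      obtain ⟨p', hp', d', hd', hdd'⟩ := Dm_step hα hU hta hd
      exact ⟨p * p', mul_mem hp hp', d', hd', by rw [hud, hdd', mul_assoc]⟩
  -- compactness
  set K : ℕ → Set G := fun n =>
    ((Dm α U n : Subgroup G) : Set G) ∩ {y | u * y⁻¹ ∈ ((autPlus α U : Subgroup G) : Set G)}
    with hK
  have hKcl : ∀ n, IsClosed (K n) := by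
    intro n
    refine (isClosed_Dm hU.1 hα' n).inter ?_
    exact IsClosed.preimage (continuous_const.mul continuous_inv)
      (isCompact_autPlus hU.1 hα).isClosed
  have hKne : ∀ n, (K n).Nonempty := by
    intro n
    obtain ⟨p, hp, d, hd, hud⟩ := hn n
    exact ⟨d, hd, by simpa [hud] using hp⟩
  have hKmono : ∀ n, K (n+1) ⊆ K n := fun n x hx => ⟨Dm_antitone hx.1, hx.2⟩
  have hK0 : IsCompact (K 0) :=
    hU.1.of_isClosed_subset (hKcl 0) (fun x hx => by
      have := hx.1; rw [Dm_zero] at this; exact this)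
  obtain ⟨y, hy⟩ := IsCompact.nonempty_iInter_of_sequence_nonempty_isCompact_isClosed
    K hKmono hKne hK0 hKcl
  simp only [Set.mem_iInter] at hy
  refine ⟨u * y⁻¹, (hy 0).2, y, mem_autMinus_of_forall_Dm (fun n => (hy n).1), by group⟩

lemma map_autMinus_le : (autMinus α U).map α.toMonoidHom ≤ autMinus α U := by
  intro x hx
  rw [mem_map_aut] at hx
  rw [mem_autMinus]
  intro n
  have := mem_autMinus.mp hx (n+1)
  rwa [pow_succ, show ((α ^ n * α : MulAut G)) (α⁻¹ x) = (α ^ n : MulAut G) x by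
    simp [MulAut.mul_apply]] at this

lemma map_pow_autMinus_le (n : ℕ) :
    (autMinus α U).map (α ^ n : MulAut G).toMonoidHom ≤ autMinus α U := by
  induction n with
  | zero => rw [pow_zero, map_aut_one]
  | succ n ih =>
    calc (autMinus α U).map (α ^ (n+1) : MulAut G).toMonoidHom
        = ((autMinus α U).map (α ^ n : MulAut G).toMonoidHom).map α.toMonoidHom := by
          rw [map_aut_map_aut, ← pow_succ']
      _ ≤ (autMinus α U).map α.toMonoidHom := Subgroup.map_mono ih
      _ ≤ autMinus α U := map_autMinus_le

lemma map_pow_autMinus_mono {N i : ℕ} (h : N ≤ i) :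
    (autMinus α U).map (α ^ i : MulAut G).toMonoidHom ≤
      (autMinus α U).map (α ^ N : MulAut G).toMonoidHom := by
  obtain ⟨j, rfl⟩ := Nat.exists_eq_add_of_le h
  calc (autMinus α U).map (α ^ (N + j) : MulAut G).toMonoidHom
      = ((autMinus α U).map (α ^ j : MulAut G).toMonoidHom).map (α ^ N : MulAut G).toMonoidHom := by
        rw [map_aut_map_aut, ← pow_add]
    _ ≤ (autMinus α U).map (α ^ N : MulAut G).toMonoidHom :=
        Subgroup.map_mono (map_pow_autMinus_le j)

end Aux3

lemma isCompact_autMinus [Group G] [TopologicalSpace G] [IsTopologicalGroup G] [T2Space G]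
    {α : MulAut G} {U : Subgroup G} (hUc : IsCompact (U : Set G)) (hα' : Continuous α.symm) :
    IsCompact ((autMinus α U : Subgroup G) : Set G) := by
  have hcl : IsClosed ((autMinus α U : Subgroup G) : Set G) := by
    rw [autMinus, Subgroup.coe_iInf]
    exact isClosed_iInter fun n => (isCompact_map_aut hUc (cont_inv_pow hα' n)).isClosed
  exact hUc.of_isClosed_subset hcl (autMinus_le (α := α))

theorem tidy_union_isOpen_isClosed'
    [Group G] [TopologicalSpace G] [IsTopologicalGroup G] [T2Space G]
    (α : MulAut G) (hα : Continuous α) (hα' : Continuous α.symm)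
    (U : Subgroup G) (hU : U.IsCompactOpen) (ht : AutTidy α U) :
    IsOpen (⋃ i : ℕ, ((U.map (α ^ i : MulAut G).toMonoidHom : Subgroup G) : Set G)) ∧
    IsClosed (⋃ i : ℕ, ((U.map (α ^ i : MulAut G).toMonoidHom : Subgroup G) : Set G)) := by
  set A : ℕ → Set G := fun i => ((U.map (α ^ i : MulAut G).toMonoidHom : Subgroup G) : Set G)
    with hA
  have hsymm : ∀ i : ℕ, Continuous ⇑(α ^ i : MulAut G).symm := by
    intro i
    have h := cont_inv_pow hα' i
    rwa [inv_pow, MulAut.inv_def] at h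
  have hAopen : ∀ i, IsOpen (A i) := fun i => isOpen_map_aut hU.2 (hsymm i)
  have hAcomp : ∀ i, IsCompact (A i) := fun i => isCompact_map_aut hU.1 (mulAut_cont hα i)
  refine ⟨isOpen_iUnion hAopen, ?_⟩
  -- the closed sets from tidiness below
  set PP : Set G :=
    ⋃ n : ℕ, (((autPlus α U).map (α ^ n : MulAut G).toMonoidHom : Subgroup G) : Set G) with hPP
  have hPPcl : IsClosed PP := ht.2.1
  set MB : ℕ → Set G := fun N =>
    (((autMinus α U).map (α ^ N : MulAut G).toMonoidHom : Subgroup G) : Set G) with hMB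
  have hMBcomp : ∀ N, IsCompact (MB N) :=
    fun N => isCompact_map_aut (isCompact_autMinus hU.1 hα') (mulAut_cont hα N)
  -- closedness
  refine isClosed_of_closure_subset ?_
  intro x hx
  by_contra hxS
  -- x is in the closure of every tail
  have hxT : ∀ N : ℕ, x ∈ closure (⋃ i : ℕ, A (i + (N+1))) := by
    intro N
    have hFcl : IsClosed (⋃ i ∈ Finset.range (N+1), A i) :=
      isClosed_biUnion_finset (fun i _ => (hAcomp i).isClosed)
    have hsplit : (⋃ i, A i) ⊆ (⋃ i ∈ Finset.range (N+1), A i) ∪ ⋃ i : ℕ, A (i + (N+1)) := by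
      intro a ha
      obtain ⟨i, hi⟩ := Set.mem_iUnion.mp ha
      rcases Nat.lt_or_ge i (N+1) with h | h
      · exact Or.inl (Set.mem_biUnion (Finset.mem_range.mpr h) hi)
      · refine Or.inr (Set.mem_iUnion.mpr ⟨i - (N+1), ?_⟩)
        rwa [Nat.sub_add_cancel h]
    have := closure_mono hsplit hx
    rw [closure_union, hFcl.closure_eq] at this
    rcases this with h | h
    · exact absurd (Set.mem_iUnion.mpr (by
        obtain ⟨i, _, hi⟩ := Set.mem_iUnion₂.mp h
        exact ⟨i, hi⟩)) hxS
    · exact h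
  -- x lies in every closed set PP * MB (N+1)
  have hxC : ∀ N : ℕ, x ∈ PP * MB (N+1) := by
    intro N
    have hTC : (⋃ i : ℕ, A (i + (N+1))) ⊆ PP * MB (N+1) := by
      intro a ha
      obtain ⟨i, hi⟩ := Set.mem_iUnion.mp ha
      obtain ⟨u, hu, rfl⟩ := hi
      obtain ⟨p, hp, d, hd, rfl⟩ := U_decomp hα hα' hU ht.1 u hu
      rw [map_mul]
      refine Set.mul_mem_mul ?_ ?_
      · exact Set.mem_iUnion.mpr ⟨i + (N+1), ⟨p, hp, rfl⟩⟩
      · exact map_pow_autMinus_mono (by omega) ⟨d, hd, rfl⟩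
    have hCcl : IsClosed (PP * MB (N+1)) :=
      IsClosed.mul_right_of_isCompact hPPcl (hMBcomp (N+1))
    have := closure_mono hTC (hxT N)
    rwa [hCcl.closure_eq] at this
  -- final compactness argument
  set K : ℕ → Set G := fun N => MB (N+1) ∩ {d | x * d⁻¹ ∈ PP} with hKdef
  have hKcl : ∀ N, IsClosed (K N) := fun N =>
    ((hMBcomp (N+1)).isClosed).inter
      (IsClosed.preimage (continuous_const.mul continuous_inv) hPPcl)
  have hKne : ∀ N, (K N).Nonempty := by
    intro N
    obtain ⟨p, hp, d, hd, hpd⟩ := Set.mem_mul.mp (hxC N)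
    exact ⟨d, hd, by simp only [Set.mem_setOf_eq, ← hpd]; group; simpa using hp⟩
  have hKmono : ∀ N, K (N+1) ⊆ K N := fun N d hd =>
    ⟨map_pow_autMinus_mono (by omega) hd.1, hd.2⟩
  have hK0 : IsCompact (K 0) := (hMBcomp 1).of_isClosed_subset (hKcl 0) Set.inter_subset_left
  obtain ⟨d, hd⟩ := IsCompact.nonempty_iInter_of_sequence_nonempty_isCompact_isClosed
    K hKmono hKne hK0 hKcl
  simp only [Set.mem_iInter] at hd
  obtain ⟨m, hm⟩ := Set.mem_iUnion.mp (hd 0).2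
  refine hxS (Set.mem_iUnion.mpr ⟨m, ?_⟩)
  have hdm : d ∈ U.map (α ^ m : MulAut G).toMonoidHom := by
    have h1 : d ∈ (autMinus α U).map (α ^ (m+1) : MulAut G).toMonoidHom := (hd m).1
    have h2 : d ∈ (autMinus α U).map (α ^ m : MulAut G).toMonoidHom :=
      map_pow_autMinus_mono (by omega) h1
    exact Subgroup.map_mono (autMinus_le) h2
  have hxdm : x * d⁻¹ ∈ U.map (α ^ m : MulAut G).toMonoidHom :=
    Subgroup.map_mono (autPlus_le) hm
  have : (x * d⁻¹) * d ∈ U.map (α ^ m : MulAut G).toMonoidHom := mul_mem hxdm hdm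
  simpa using this

/-- If `U` is tidy for a bicontinuous automorphism `α`, then
`U⋆ = ⋃_{i ≥ 0} αⁱ(U)` is open and closed in `G`. -/
theorem tidy_union_isOpen_isClosed
    [Group G] [TopologicalSpace G] [IsTopologicalGroup G] [LocallyCompactSpace G] [T2Space G]
    [TotallyDisconnectedSpace G]
    (α : MulAut G) (hα : Continuous α) (hα' : Continuous α.symm)
    (U : Subgroup G) (hU : U.IsCompactOpen) (ht : AutTidy α U) :
    IsOpen (⋃ i : ℕ, ((U.map (α ^ i : MulAut G).toMonoidHom : Subgroup G) : Set G)) ∧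
    IsClosed (⋃ i : ℕ, ((U.map (α ^ i : MulAut G).toMonoidHom : Subgroup G) : Set G)) := by
  exact tidy_union_isOpen_isClosed' α hα hα' U hU ht
end

section
/- Let G be a locally compact Hausdorff topological group with a left-invariant Haar measure μ, and let f be a bicontinuous group automorphism of G that is ergodic with respect to μ. Then G is σ-compact. -/
open MeasureTheory

variable {G : Type*}

/-- An automorphism `f` is ergodic with respect to `μ` if every measurable set `E` with
`μ(f⁻¹(E) Δ E) = 0` satisfies `μ(E) = 0` or `μ(Eᶜ) = 0`. -/
def IsErgodicAut [Group G] [TopologicalSpace G] [MeasurableSpace G]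
    (μ : Measure G) (f : MulAut G) : Prop :=
  ∀ E : Set G, MeasurableSet E → μ (symmDiff (⇑f ⁻¹' E) E) = 0 → μ E = 0 ∨ μ Eᶜ = 0

section Aux

open Set Pointwise

lemma aux_cont_pow [Group G] [TopologicalSpace G] (g : MulAut G) (hg : Continuous g) :
    ∀ n : ℕ, Continuous ⇑(g ^ n) := by
  intro n
  induction n with
  | zero => simpa using continuous_id
  | succ m ih =>
      rw [pow_succ, MulAut.coe_mul]
      exact ih.comp hg

lemma aux_cont_zpow [Group G] [TopologicalSpace G] (f : MulAut G)
    (hf : Continuous f) (hf' : Continuous f.symm) :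
    ∀ n : ℤ, Continuous ⇑(f ^ n) := by
  intro n
  cases n with
  | ofNat m => rw [Int.ofNat_eq_coe, zpow_natCast]; exact aux_cont_pow f hf m
  | negSucc m =>
      rw [zpow_negSucc, ← inv_pow]
      exact aux_cont_pow f⁻¹ (by rwa [MulAut.inv_def]) (m + 1)

end Aux

/-- A locally compact group with an ergodic bicontinuous automorphism is
σ-compact. -/
theorem sigmaCompact_of_ergodic_automorphism
    [Group G] [TopologicalSpace G] [IsTopologicalGroup G] [LocallyCompactSpace G] [T2Space G]
    [MeasurableSpace G] [BorelSpace G]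
    (μ : Measure G) [μ.IsHaarMeasure]
    (f : MulAut G) (hf : Continuous f) (hf' : Continuous f.symm)
    (herg : IsErgodicAut μ f) :
    SigmaCompactSpace G := by
  classical
  open Set Pointwise in
  -- a compact neighborhood of 1
  obtain ⟨K, hKc, hK1⟩ := exists_compact_mem_nhds (1 : G)
  -- symmetrize
  set L : Set G := K ∪ K⁻¹ with hL
  have hLc : IsCompact L := hKc.union hKc.inv
  have hLinv : L⁻¹ = L := by
    rw [hL, Set.union_inv, inv_inv, Set.union_comm]
  -- images under integer powers of f
  set Ln : ℤ → Set G := fun n => ⇑(f ^ n) '' L with hLndef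
  have hcont : ∀ n : ℤ, Continuous ⇑(f ^ n) := aux_cont_zpow f hf hf'
  have hLnc : ∀ n, IsCompact (Ln n) := fun n => hLc.image (hcont n)
  have hLninv : ∀ n, (Ln n)⁻¹ = Ln n := by
    intro n
    ext x
    simp only [hLndef, Set.mem_inv, Set.mem_image]
    constructor
    · rintro ⟨y, hy, hyx⟩
      refine ⟨y⁻¹, by rw [← hLinv]; exact Set.inv_mem_inv.2 hy, ?_⟩
      rw [map_inv, hyx, inv_inv]
    · rintro ⟨y, hy, hyx⟩
      refine ⟨y⁻¹, by rw [← hLinv]; exact Set.inv_mem_inv.2 hy, ?_⟩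
      rw [map_inv, hyx]
  -- products of images, indexed by lists of integers
  set C : List ℤ → Set G := fun w => (w.map Ln).prod with hCdef
  have hCnil : C [] = 1 := by simp [hCdef]
  have hCcons : ∀ n w, C (n :: w) = Ln n * C w := by intro n w; simp [hCdef]
  have hCsingle : ∀ n, C [n] = Ln n := by intro n; simp [hCdef]
  have hCappend : ∀ w₁ w₂, C (w₁ ++ w₂) = C w₁ * C w₂ := by
    intro w₁ w₂; simp [hCdef]
  have hCc : ∀ w, IsCompact (C w) := by
    intro w
    induction w with
    | nil => rw [hCnil]; exact isCompact_singleton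
    | cons n w ih => rw [hCcons]; exact (hLnc n).mul ih
  have hCinv : ∀ w, (C w)⁻¹ = C w.reverse := by
    intro w
    induction w with
    | nil => simp [hCnil]
    | cons n w ih =>
        rw [hCcons, mul_inv_rev, ih, hLninv, List.reverse_cons, hCappend, hCsingle]
  -- the invariant subgroup (as a set)
  set E : Set G := ⋃ w : List ℤ, C w with hEdef
  have h1E : (1 : G) ∈ E := Set.mem_iUnion.2 ⟨[], by rw [hCnil]; exact Set.mem_one.2 rfl⟩
  have hmulE : ∀ {a b : G}, a ∈ E → b ∈ E → a * b ∈ E := by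
    intro a b ha hb
    obtain ⟨w₁, hw₁⟩ := Set.mem_iUnion.1 ha
    obtain ⟨w₂, hw₂⟩ := Set.mem_iUnion.1 hb
    exact Set.mem_iUnion.2 ⟨w₁ ++ w₂, by rw [hCappend]; exact Set.mul_mem_mul hw₁ hw₂⟩
  have hinvE : ∀ {a : G}, a ∈ E → a⁻¹ ∈ E := by
    intro a ha
    obtain ⟨w, hw⟩ := Set.mem_iUnion.1 ha
    exact Set.mem_iUnion.2 ⟨w.reverse, by rw [← hCinv]; exact Set.inv_mem_inv.2 hw⟩
  set Esub : Subgroup G :=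
    { carrier := E
      one_mem' := h1E
      mul_mem' := fun ha hb => hmulE ha hb
      inv_mem' := fun ha => hinvE ha } with hEsub
  -- E is open (contains the neighborhood K of 1)
  have hKE : K ⊆ E := by
    intro x hx
    refine Set.mem_iUnion.2 ⟨[0], ?_⟩
    rw [hCsingle]
    exact ⟨x, Or.inl hx, by simp⟩
  have hEopen : IsOpen E :=
    Subgroup.isOpen_of_mem_nhds Esub (Filter.mem_of_superset hK1 hKE)
  have hEclosed : IsClosed E := Subgroup.isClosed_of_isOpen Esub hEopen
  -- E is f-invariant
  have hshift : ∀ w : List ℤ, ⇑f '' C w = C (w.map fun n => 1 + n) := by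
    intro w
    induction w with
    | nil => simp [hCnil, Set.image_one, Set.singleton_one]
    | cons n w ih =>
        rw [hCcons, List.map_cons, hCcons, Set.image_mul, ih]
        congr 1
        rw [hLndef]
        simp only
        rw [← Set.image_comp, ← MulAut.coe_mul, ← zpow_one_add]
  have hshift' : ∀ w : List ℤ, ⇑f.symm '' C w = C (w.map fun n => -1 + n) := by
    intro w
    induction w with
    | nil => simp [hCnil, Set.image_one, Set.singleton_one]
    | cons n w ih =>
        rw [hCcons, List.map_cons, hCcons, Set.image_mul f.symm, ih]
        congr 1
        rw [hLndef]
        simp only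
        rw [← Set.image_comp, ← MulAut.inv_def, ← MulAut.coe_mul, ← zpow_neg_one,
          ← zpow_add]
  have hpre : ⇑f ⁻¹' E = E := by
    apply Set.Subset.antisymm
    · intro x hx
      obtain ⟨w, hw⟩ := Set.mem_iUnion.1 hx
      have : x = f.symm (f x) := (f.symm_apply_apply x).symm
      rw [this]
      refine Set.mem_iUnion.2 ⟨w.map fun n => -1 + n, ?_⟩
      rw [← hshift']
      exact ⟨f x, hw, rfl⟩
    · intro x hx
      obtain ⟨w, hw⟩ := Set.mem_iUnion.1 hx
      refine Set.mem_iUnion.2 ⟨w.map fun n => 1 + n, ?_⟩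
      rw [← hshift]
      exact ⟨x, hw, rfl⟩
  -- E is measurable
  have hEmeas : MeasurableSet E :=
    MeasurableSet.iUnion fun w => ((hCc w).isClosed).measurableSet
  -- apply ergodicity
  have hsd : μ (symmDiff (⇑f ⁻¹' E) E) = 0 := by
    rw [hpre, symmDiff_self]
    simp
  rcases herg E hEmeas hsd with h0 | hc0
  · exact absurd h0 (hEopen.measure_ne_zero μ ⟨1, h1E⟩)
  · -- complement has measure zero and is open, hence empty
    have hEcompl : Eᶜ = ∅ := by
      by_contra h
      exact (hEclosed.isOpen_compl.measure_ne_zero μ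
        (Set.nonempty_iff_ne_empty.2 h)) hc0
    have hEuniv : E = Set.univ := by
      rw [← Set.compl_empty, ← hEcompl, compl_compl]
    rw [← isSigmaCompact_univ_iff, ← hEuniv]
    exact isSigmaCompact_iUnion_of_isCompact C hCc
end

section
/- Let p be a prime number, G = GL₂(ℚ_p) the group of invertible 2×2 matrices over the p-adic numbers with its p-adic topology, and g = diag(p, 1) ∈ G. Then the scale of g equals p, i.e., the minimum over all compact open subgroups U of G of the index [gUg⁻¹ : gUg⁻¹ ∩ U] is equal to p. -/
open MeasureTheory Pointwise

variable {G : Type*}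

/-- The scale `s(g) = min_U [gUg⁻¹ : gUg⁻¹ ∩ U]`, minimum over compact open subgroups. -/
noncomputable def scale [Group G] [TopologicalSpace G] (g : G) : ℕ :=
  sInf { n : ℕ | ∃ U : Subgroup G, U.IsCompactOpen ∧ n = U.relIndex (conjSubgroup g U) }

namespace ScaleGL2Aux

variable {p : ℕ} [Fact p.Prime]

local notation "Qp" => ℚ_[p]
local notation "Mat" => Matrix (Fin 2) (Fin 2) ℚ_[p]
local notation "GL2" => GL (Fin 2) ℚ_[p]

lemma hp_prime : p.Prime := Fact.out

lemma p_pos : (0 : ℝ) < (p : ℝ) := by exact_mod_cast (hp_prime (p := p)).pos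

lemma p_ne_zero : ((p : ℕ) : Qp) ≠ 0 :=
  Nat.cast_ne_zero.mpr (hp_prime (p := p)).ne_zero

lemma nadd_lt {a b : Qp} (ha : ‖a‖ < 1) (hb : ‖b‖ < 1) : ‖a + b‖ < 1 :=
  lt_of_le_of_lt (Padic.nonarchimedean a b) (max_lt ha hb)

lemma nsub_lt {a b : Qp} (ha : ‖a‖ < 1) (hb : ‖b‖ < 1) : ‖a - b‖ < 1 := by
  rw [sub_eq_add_neg]; exact nadd_lt ha (by simpa using hb)

lemma nmul_lt_of_lt_le {a b : Qp} (ha : ‖a‖ < 1) (hb : ‖b‖ ≤ 1) : ‖a * b‖ < 1 := by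
  rw [norm_mul]
  exact lt_of_le_of_lt (mul_le_of_le_one_right (norm_nonneg a) hb) ha

lemma nmul_lt_of_le_lt {a b : Qp} (ha : ‖a‖ ≤ 1) (hb : ‖b‖ < 1) : ‖a * b‖ < 1 := by
  rw [mul_comm]; exact nmul_lt_of_lt_le hb ha

lemma nmul_le {a b : Qp} (ha : ‖a‖ ≤ 1) (hb : ‖b‖ ≤ 1) : ‖a * b‖ ≤ 1 := by
  rw [norm_mul]; exact mul_le_one₀ ha (norm_nonneg b) hb

lemma nadd_le {a b : Qp} (ha : ‖a‖ ≤ 1) (hb : ‖b‖ ≤ 1) : ‖a + b‖ ≤ 1 :=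
  le_trans (Padic.nonarchimedean a b) (max_le ha hb)

lemma norm_le_one_of_sub_lt {a : Qp} (h : ‖a - 1‖ < 1) : ‖a‖ ≤ 1 := by
  have : a = (a - 1) + 1 := by ring
  rw [this]
  exact le_trans (Padic.nonarchimedean _ _) (max_le h.le (by simp))

lemma norm_eq_one_of_sub_lt {a : Qp} (h : ‖a - 1‖ < 1) : ‖a‖ = 1 := by
  refine le_antisymm (norm_le_one_of_sub_lt h) ?_
  by_contra hlt
  push_neg at hlt
  have h1 : (1 : Qp) = a - (a - 1) := by ring
  have : ‖(1 : Qp)‖ < 1 := by rw [h1]; exact nsub_lt hlt h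
  simp at this

lemma norm_lt_one_iff_le {a : Qp} : ‖a‖ < 1 ↔ ‖a‖ ≤ (p : ℝ)⁻¹ := by
  have := (Padic.norm_le_pow_iff_norm_lt_pow_add_one a (-1)).symm
  simpa [zpow_neg, zpow_one] using this

/-- entries of `m - 1` are small -/
def Cond (m : Mat) : Prop := ∀ i j, ‖m i j - (1 : Mat) i j‖ < 1

lemma cond_one : Cond (1 : Mat) := by intro i j; simp

lemma cond_bounded {m : Mat} (h : Cond m) : ∀ i j, ‖m i j‖ ≤ 1 := by
  intro i j
  have h' := h i j
  have e : m i j = (m i j - (1 : Mat) i j) + (1 : Mat) i j := by ring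
  rw [e]
  refine le_trans (Padic.nonarchimedean _ _) (max_le h'.le ?_)
  by_cases hij : i = j
  · subst hij; simp
  · simp [Matrix.one_apply_ne hij]

lemma cond_entries {m : Mat} (h : Cond m) :
    ‖m 0 0 - 1‖ < 1 ∧ ‖m 0 1‖ < 1 ∧ ‖m 1 0‖ < 1 ∧ ‖m 1 1 - 1‖ < 1 := by
  have h00 := h 0 0; have h11 := h 1 1; have h01 := h 0 1; have h10 := h 1 0
  simp only [Matrix.one_apply_eq] at h00 h11
  refine ⟨h00, ?_, ?_, h11⟩
  · simpa [Matrix.one_apply_ne] using h01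
  · simpa [Matrix.one_apply_ne] using h10

lemma cond_of_entries {m : Mat} (h00 : ‖m 0 0 - 1‖ < 1) (h01 : ‖m 0 1‖ < 1)
    (h10 : ‖m 1 0‖ < 1) (h11 : ‖m 1 1 - 1‖ < 1) : Cond m := by
  intro i j
  fin_cases i <;> fin_cases j
  · show ‖m 0 0 - (1 : Mat) 0 0‖ < 1
    simpa using h00
  · show ‖m 0 1 - (1 : Mat) 0 1‖ < 1
    rw [Matrix.one_apply_ne (by decide)]
    simpa using h01
  · show ‖m 1 0 - (1 : Mat) 1 0‖ < 1
    rw [Matrix.one_apply_ne (by decide)]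
    simpa using h10
  · show ‖m 1 1 - (1 : Mat) 1 1‖ < 1
    simpa using h11

lemma cond_mul {m n : Mat} (hm : Cond m) (hn : Cond n) : Cond (m * n) := by
  intro i j
  have key : (m * n) i j - (1 : Mat) i j
      = ((m - 1) * (n - 1)) i j + ((m - 1) i j + (n - 1) i j) := by
    have e : m * n - 1 = (m - 1) * (n - 1) + ((m - 1) + (n - 1)) := by noncomm_ring
    calc (m * n) i j - (1 : Mat) i j = (m * n - 1) i j := by simp [Matrix.sub_apply]
    _ = ((m - 1) * (n - 1)) i j + ((m - 1) i j + (n - 1) i j) := by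
        rw [e]; simp [Matrix.add_apply]
  rw [key]
  have hm' : ∀ i j, ‖(m - 1 : Mat) i j‖ < 1 := by
    intro i j; simpa [Matrix.sub_apply] using hm i j
  have hn' : ∀ i j, ‖(n - 1 : Mat) i j‖ < 1 := by
    intro i j; simpa [Matrix.sub_apply] using hn i j
  have hprod : ‖((m - 1) * (n - 1) : Mat) i j‖ < 1 := by
    rw [Matrix.mul_apply, Fin.sum_univ_two]
    exact nadd_lt (nmul_lt_of_lt_le (hm' i 0) (hn' 0 j).le)
      (nmul_lt_of_lt_le (hm' i 1) (hn' 1 j).le)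
  exact nadd_lt hprod (nadd_lt (hm' i j) (hn' i j))

lemma cond_det {m : Mat} (hm : Cond m) : ‖m.det‖ = 1 := by
  obtain ⟨h00, h01, h10, h11⟩ := cond_entries hm
  have key : m.det - 1 = (m 0 0 - 1) * (m 1 1 - 1) + ((m 0 0 - 1) + (m 1 1 - 1))
      - m 0 1 * m 1 0 := by
    rw [Matrix.det_fin_two]; ring
  have hlt : ‖m.det - 1‖ < 1 := by
    rw [key]
    exact nsub_lt (nadd_lt (nmul_lt_of_lt_le h00 h11.le) (nadd_lt h00 h11))
      (nmul_lt_of_lt_le h01 h10.le)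
  exact norm_eq_one_of_sub_lt hlt

lemma inv_entries (x : GL2) :
    (↑(x⁻¹) : Mat) = (Matrix.det (↑x : Mat))⁻¹ •
      !![(↑x : Mat) 1 1, -(↑x : Mat) 0 1; -(↑x : Mat) 1 0, (↑x : Mat) 0 0] := by
  rw [Matrix.coe_units_inv, Matrix.inv_def, Matrix.adjugate_fin_two, Ring.inverse_eq_inv']

lemma cond_inv {x : GL2} (hx : Cond (↑x : Mat)) : Cond (↑(x⁻¹) : Mat) := by
  set m : Mat := ↑x with hm
  set d : Qp := Matrix.det m with hd'
  have hd : ‖d‖ = 1 := cond_det hx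
  have hdinv : ‖d⁻¹‖ = 1 := by rw [norm_inv, hd]; norm_num
  have hdne : d ≠ 0 := by intro h; rw [h] at hd; simp at hd
  obtain ⟨h00, h01, h10, h11⟩ := cond_entries hx
  have hb := cond_bounded hx
  have e00 : (↑(x⁻¹) : Mat) 0 0 = d⁻¹ * m 1 1 := by rw [inv_entries]; simp [smul_eq_mul]; rfl
  have e01 : (↑(x⁻¹) : Mat) 0 1 = d⁻¹ * (-(m 0 1)) := by rw [inv_entries]; simp [smul_eq_mul]; rfl
  have e10 : (↑(x⁻¹) : Mat) 1 0 = d⁻¹ * (-(m 1 0)) := by rw [inv_entries]; simp [smul_eq_mul]; rfl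
  have e11 : (↑(x⁻¹) : Mat) 1 1 = d⁻¹ * m 0 0 := by rw [inv_entries]; simp [smul_eq_mul]; rfl
  apply cond_of_entries
  · rw [e00]
    have key : d⁻¹ * m 1 1 - 1 = d⁻¹ * (m 1 1 - d) := by field_simp
    rw [key, norm_mul, hdinv, one_mul]
    have e : m 1 1 - d = m 1 1 * (1 - m 0 0) + m 0 1 * m 1 0 := by
      rw [hd', Matrix.det_fin_two]; ring
    rw [e]
    refine nadd_lt (nmul_lt_of_le_lt (hb 1 1) ?_) (nmul_lt_of_lt_le h01 h10.le)
    rw [norm_sub_rev]; exact h00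
  · rw [e01, norm_mul, hdinv, one_mul, norm_neg]; exact h01
  · rw [e10, norm_mul, hdinv, one_mul, norm_neg]; exact h10
  · rw [e11]
    have key : d⁻¹ * m 0 0 - 1 = d⁻¹ * (m 0 0 - d) := by field_simp
    rw [key, norm_mul, hdinv, one_mul]
    have e : m 0 0 - d = m 0 0 * (1 - m 1 1) + m 0 1 * m 1 0 := by
      rw [hd', Matrix.det_fin_two]; ring
    rw [e]
    refine nadd_lt (nmul_lt_of_le_lt (hb 0 0) ?_) (nmul_lt_of_lt_le h01 h10.le)
    rw [norm_sub_rev]; exact h11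

/-- The principal congruence subgroup of level `p` in `GL₂(ℚ_p)`. -/
def U1 : Subgroup (GL (Fin 2) ℚ_[p]) where
  carrier := {x | Cond (↑x : Mat)}
  one_mem' := by simpa using cond_one (p := p)
  mul_mem' := by
    intro x y hx hy
    simpa [Units.val_mul] using cond_mul hx hy
  inv_mem' := by
    intro x hx
    exact cond_inv hx

lemma mem_U1 {x : GL2} : x ∈ (U1 : Subgroup GL2) ↔ Cond (↑x : Mat) := Iff.rfl



/-! ### U1 is compact open -/

lemma isOpen_cond : IsOpen {m : Mat | Cond m} := by
  have h : {m : Mat | Cond m} = ⋂ i, ⋂ j, {m : Mat | ‖m i j - (1 : Mat) i j‖ < 1} := by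
    ext m; simp [Cond, Set.mem_iInter]
  rw [h]
  refine isOpen_iInter_of_finite fun i => isOpen_iInter_of_finite fun j => ?_
  have hc : Continuous fun m : Mat => ‖m i j - (1 : Mat) i j‖ :=
    ((continuous_id.matrix_elem i j).sub continuous_const).norm
  exact isOpen_lt hc continuous_const

lemma isOpen_U1 : IsOpen ((U1 : Subgroup GL2) : Set GL2) := by
  have h : ((U1 : Subgroup GL2) : Set GL2) = Units.val ⁻¹' {m : Mat | Cond m} := rfl
  rw [h]; exact isOpen_cond.preimage Units.continuous_val

def Bset : Set Mat := {m | ∀ i j, ‖m i j - (1 : Mat) i j‖ ≤ (p : ℝ)⁻¹}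

lemma cond_iff_mem_Bset {m : Mat} : Cond m ↔ m ∈ (Bset : Set Mat) := by
  unfold Cond Bset
  simp only [Set.mem_setOf_eq]
  exact forall_congr' fun i => forall_congr' fun j => norm_lt_one_iff_le

lemma isCompact_Bset : IsCompact (Bset : Set Mat) := by
  have h : (Bset : Set Mat) = Set.univ.pi fun i : Fin 2 =>
      (Set.univ.pi fun j : Fin 2 => Metric.closedBall ((1 : Mat) i j) (p : ℝ)⁻¹) := by
    ext m
    simp only [Bset, Set.mem_setOf_eq]
    constructor
    · intro h
      refine Set.mem_univ_pi.mpr fun i => Set.mem_univ_pi.mpr fun j => ?_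
      rw [Metric.mem_closedBall, dist_eq_norm]
      exact h i j
    · intro h i j
      have h2 := Set.mem_univ_pi.mp (Set.mem_univ_pi.mp h i) j
      rwa [Metric.mem_closedBall, dist_eq_norm] at h2
  rw [h]
  exact isCompact_univ_pi fun i => isCompact_univ_pi fun j => isCompact_closedBall _ _

lemma isCompact_U1 : IsCompact ((U1 : Subgroup GL2) : Set GL2) := by
  rw [Units.isEmbedding_embedProduct.isCompact_iff]
  have himg : (Units.embedProduct Mat) '' ((U1 : Subgroup GL2) : Set GL2)
      = ((Bset : Set Mat) ×ˢ (MulOpposite.op '' (Bset : Set Mat))) ∩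
        {q : Mat × (Mat)ᵐᵒᵖ | q.1 * (MulOpposite.unop q.2) = 1 ∧
          (MulOpposite.unop q.2) * q.1 = 1} := by
    ext q
    constructor
    · rintro ⟨x, hx, rfl⟩
      have hxc : Cond (↑x : Mat) := hx
      have hxinv : Cond (↑(x⁻¹) : Mat) := cond_inv hxc
      refine ⟨⟨cond_iff_mem_Bset.mp hxc, ⟨_, cond_iff_mem_Bset.mp hxinv, rfl⟩⟩, ?_, ?_⟩ <;>
        simp only [Units.embedProduct_apply, MulOpposite.unop_op, ← Units.val_mul,
          mul_inv_cancel, inv_mul_cancel, Units.val_one]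
    · rintro ⟨⟨h1, h2⟩, h3, h4⟩
      refine ⟨⟨q.1, MulOpposite.unop q.2, h3, h4⟩, cond_iff_mem_Bset.mpr h1, ?_⟩
      simp [Units.embedProduct_apply]
  rw [himg]
  refine ((isCompact_Bset.prod (isCompact_Bset.image MulOpposite.continuous_op)).inter_right
    (IsClosed.inter ?_ ?_))
  · exact isClosed_eq (continuous_fst.mul (MulOpposite.continuous_unop.comp continuous_snd))
      continuous_const
  · exact isClosed_eq ((MulOpposite.continuous_unop.comp continuous_snd).mul continuous_fst)
      continuous_const

lemma U1_isCompactOpen : (U1 : Subgroup GL2).IsCompactOpen :=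
  ⟨isCompact_U1, isOpen_U1⟩



/-! ### lower unipotent elements -/

noncomputable def lmat (c : Qp) : Mat := !![1, 0; c, 1]

lemma lmat_mul (c d : Qp) : lmat c * lmat d = lmat (c + d) := by
  ext i j
  fin_cases i <;> fin_cases j <;>
    simp [lmat, Matrix.mul_apply, Fin.sum_univ_two]

lemma lmat_zero : lmat (0 : Qp) = 1 := by
  ext i j
  fin_cases i <;> fin_cases j <;> simp [lmat, Matrix.one_apply]

noncomputable def lunit (c : Qp) : GL2 :=
  ⟨lmat c, lmat (-c), by rw [lmat_mul]; simp [lmat_zero], by rw [lmat_mul]; simp [lmat_zero]⟩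

lemma lunit_val (c : Qp) : (↑(lunit c) : Mat) = lmat c := rfl

lemma lunit_mul (c d : Qp) : lunit c * lunit d = lunit (c + d) :=
  Units.ext (lmat_mul c d)

lemma lunit_zero : lunit (0 : Qp) = 1 := Units.ext lmat_zero

lemma lunit_inv (c : Qp) : (lunit c)⁻¹ = lunit (-c) := by
  apply inv_eq_of_mul_eq_one_right
  rw [lunit_mul]
  simp [lunit_zero]

lemma continuous_lunit : Continuous fun c : Qp => lunit c := by
  refine Units.continuous_iff.mpr ⟨?_, ?_⟩
  · show Continuous fun c : Qp => lmat c
    refine continuous_matrix fun i j => ?_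
    fin_cases i <;> fin_cases j <;>
      simp only [lmat, Matrix.cons_val', Matrix.cons_val_zero, Matrix.cons_val_one,
        Matrix.head_cons, Matrix.empty_val', Matrix.cons_val_fin_one, Matrix.head_fin_const,
        Matrix.of_apply, Fin.zero_eta, Fin.mk_one] <;>
      first | exact continuous_const | exact continuous_id
  · have h : (fun c : Qp => (↑(lunit c)⁻¹ : Mat)) = fun c : Qp => lmat (-c) := by
      funext c; rw [lunit_inv, lunit_val]
    rw [h]
    have h2 : Continuous fun c : Qp => lmat c := by
      refine continuous_matrix fun i j => ?_
      fin_cases i <;> fin_cases j <;>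
        simp only [lmat, Matrix.cons_val', Matrix.cons_val_zero, Matrix.cons_val_one,
          Matrix.head_cons, Matrix.empty_val', Matrix.cons_val_fin_one, Matrix.head_fin_const,
          Matrix.of_apply, Fin.zero_eta, Fin.mk_one] <;>
        first | exact continuous_const | exact continuous_id
    exact h2.comp continuous_neg

/-! ### conjugation by `g = diag(p,1)` -/

section gsec

variable (g : GL (Fin 2) ℚ_[p])
  (hg : (g : Matrix (Fin 2) (Fin 2) ℚ_[p]) = Matrix.diagonal ![(p : ℚ_[p]), 1])

include hg

lemma g_inv_val : (↑(g⁻¹) : Mat) = Matrix.diagonal ![((p : Qp))⁻¹, 1] := by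
  rw [Matrix.coe_units_inv, hg]
  apply Matrix.inv_eq_right_inv
  have hv : (fun i => ![(p : Qp), 1] i * ![((p : Qp))⁻¹, 1] i) = fun _ : Fin 2 => (1 : Qp) := by
    funext i; fin_cases i <;> simp [mul_inv_cancel₀ (p_ne_zero (p := p))]
  rw [Matrix.diagonal_mul_diagonal, hv]
  exact Matrix.diagonal_one

lemma conjdown_apply (x : GL2) (i j : Fin 2) :
    (↑(g⁻¹ * x * g) : Mat) i j = ![((p : Qp))⁻¹, 1] i * (↑x : Mat) i j * ![(p : Qp), 1] j := by
  have h : (↑(g⁻¹ * x * g) : Mat)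
      = Matrix.diagonal ![((p : Qp))⁻¹, 1] * (↑x : Mat) * Matrix.diagonal ![(p : Qp), 1] := by
    rw [Units.val_mul, Units.val_mul, g_inv_val g hg, hg]
  rw [h, Matrix.mul_diagonal, Matrix.diagonal_mul]

end gsec

lemma mem_conjSubgroup_iff (g : GL2) (U : Subgroup GL2) (x : GL2) :
    x ∈ conjSubgroup g U ↔ g⁻¹ * x * g ∈ U := by
  unfold conjSubgroup
  rw [Subgroup.mem_map]
  constructor
  · rintro ⟨u, hu, rfl⟩
    have e : g⁻¹ * ((MulAut.conj g).toMonoidHom u) * g = u := by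
      simp only [MulEquiv.coe_toMonoidHom, MulAut.conj_apply]
      group
    rwa [e]
  · intro h
    refine ⟨g⁻¹ * x * g, h, ?_⟩
    simp only [MulEquiv.coe_toMonoidHom, MulAut.conj_apply]
    group



/-! ### entry description of the conjugated subgroup -/

section gsec2

variable (g : GL (Fin 2) ℚ_[p])
  (hg : (g : Matrix (Fin 2) (Fin 2) ℚ_[p]) = Matrix.diagonal ![(p : ℚ_[p]), 1])

include hg

lemma norm_lt_p_iff {a : Qp} : ‖a‖ ≤ 1 ↔ ‖a‖ < (p : ℝ) := by
  have h := Padic.norm_le_pow_iff_norm_lt_pow_add_one a 0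
  simpa using h

omit hg in
lemma one_le_p_real : (1 : ℝ) ≤ (p : ℝ) := by
  exact_mod_cast (hp_prime (p := p)).one_lt.le

lemma K_entries {x : GL2} (hx : x ∈ conjSubgroup g U1) :
    ‖(↑x : Mat) 0 0 - 1‖ < 1 ∧ ‖(↑x : Mat) 0 1‖ < 1 ∧ ‖(↑x : Mat) 1 0‖ ≤ 1 ∧
      ‖(↑x : Mat) 1 1 - 1‖ < 1 := by
  rw [mem_conjSubgroup_iff] at hx
  obtain ⟨h00, h01, h10, h11⟩ := cond_entries (mem_U1.mp hx)
  rw [conjdown_apply g hg x 0 0] at h00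
  rw [conjdown_apply g hg x 0 1] at h01
  rw [conjdown_apply g hg x 1 0] at h10
  rw [conjdown_apply g hg x 1 1] at h11
  simp only [Matrix.cons_val_zero, Matrix.cons_val_one, Matrix.head_cons, one_mul,
    mul_one] at h00 h01 h10 h11
  have hp0 : (0 : ℝ) < (p : ℝ) := p_pos (p := p)
  refine ⟨?_, ?_, ?_, h11⟩
  · have e : ((p : Qp))⁻¹ * (↑x : Mat) 0 0 * (p : Qp) = (↑x : Mat) 0 0 := by
      rw [mul_comm, ← mul_assoc, mul_inv_cancel₀ (p_ne_zero (p := p)), one_mul]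
    rwa [e] at h00
  · have hn : ‖((p : Qp))⁻¹ * (↑x : Mat) 0 1‖ = (p : ℝ) * ‖(↑x : Mat) 0 1‖ := by
      rw [norm_mul, norm_inv, Padic.norm_p, inv_inv]
    rw [hn] at h01
    calc ‖(↑x : Mat) 0 1‖ ≤ (p : ℝ) * ‖(↑x : Mat) 0 1‖ :=
          le_mul_of_one_le_left (norm_nonneg _) one_le_p_real
    _ < 1 := h01
  · have hn : ‖(↑x : Mat) 1 0 * (p : Qp)‖ = ‖(↑x : Mat) 1 0‖ / (p : ℝ) := by
      rw [norm_mul, Padic.norm_p, div_eq_mul_inv]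
    rw [hn] at h10
    exact (norm_lt_p_iff g hg).mpr ((div_lt_one hp0).mp h10)

lemma mem_U1_of_mem_K {x : GL2} (hx : x ∈ conjSubgroup g U1)
    (hc : ‖(↑x : Mat) 1 0‖ < 1) : x ∈ (U1 : Subgroup GL2) := by
  obtain ⟨h00, h01, _, h11⟩ := K_entries g hg hx
  exact mem_U1.mpr (cond_of_entries h00 h01 hc h11)

end gsec2

/-! ### the homomorphism to `ZMod p` -/

lemma toZMod_eq_zero_iff (z : ℤ_[p]) : PadicInt.toZMod z = 0 ↔ ‖z‖ < 1 := by
  rw [← RingHom.mem_ker, PadicInt.ker_toZMod, IsLocalRing.mem_maximalIdeal,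
    PadicInt.mem_nonunits]

lemma toZMod_eq_of_sub_lt {a b : ℤ_[p]} (h : ‖a - b‖ < 1) :
    PadicInt.toZMod a = PadicInt.toZMod b := by
  have h2 : PadicInt.toZMod (a - b) = 0 := (toZMod_eq_zero_iff _).mpr h
  rwa [map_sub, sub_eq_zero] at h2

noncomputable def ψ (x : GL2) : ZMod p :=
  if h : ‖(↑x : Mat) 1 0‖ ≤ 1 then PadicInt.toZMod (⟨(↑x : Mat) 1 0, h⟩ : ℤ_[p]) else 0

lemma ψ_spec (x : GL2) (h : ‖(↑x : Mat) 1 0‖ ≤ 1) :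
    ψ x = PadicInt.toZMod (⟨(↑x : Mat) 1 0, h⟩ : ℤ_[p]) := dif_pos h

section gsec3

variable (g : GL (Fin 2) ℚ_[p])

lemma conjup_apply (hg : (g : Matrix (Fin 2) (Fin 2) ℚ_[p]) = Matrix.diagonal ![(p : ℚ_[p]), 1])
    (x : GL2) (i j : Fin 2) :
    (↑(g * x * g⁻¹) : Mat) i j = ![(p : Qp), 1] i * (↑x : Mat) i j * ![((p : Qp))⁻¹, 1] j := by
  have h : (↑(g * x * g⁻¹) : Mat)
      = Matrix.diagonal ![(p : Qp), 1] * (↑x : Mat) * Matrix.diagonal ![((p : Qp))⁻¹, 1] := by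
    rw [Units.val_mul, Units.val_mul, g_inv_val g hg, hg]
  rw [h, Matrix.mul_diagonal, Matrix.diagonal_mul]

lemma lmat_apply_00 (c : Qp) : lmat c 0 0 = 1 := rfl
lemma lmat_apply_01 (c : Qp) : lmat c 0 1 = 0 := rfl
lemma lmat_apply_10 (c : Qp) : lmat c 1 0 = c := rfl
lemma lmat_apply_11 (c : Qp) : lmat c 1 1 = 1 := rfl

lemma conj_lunit_down (hg : (g : Matrix (Fin 2) (Fin 2) ℚ_[p]) = Matrix.diagonal ![(p : ℚ_[p]), 1])
    (c : Qp) : g⁻¹ * lunit c * g = lunit (c * (p : Qp)) := by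
  apply Units.ext
  show (↑(g⁻¹ * lunit c * g) : Mat) = lmat (c * (p : Qp))
  ext i j
  rw [conjdown_apply g hg (lunit c) i j, lunit_val]
  fin_cases i <;> fin_cases j <;>
    simp only [Matrix.cons_val_zero, Matrix.cons_val_one, Matrix.head_cons, Fin.zero_eta,
      Fin.mk_one, lmat_apply_00, lmat_apply_01, lmat_apply_10, lmat_apply_11, one_mul, mul_one,
      mul_zero, zero_mul]
  · exact inv_mul_cancel₀ (p_ne_zero (p := p))

lemma conj_lunit_up (hg : (g : Matrix (Fin 2) (Fin 2) ℚ_[p]) = Matrix.diagonal ![(p : ℚ_[p]), 1])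
    (c : Qp) : g * lunit c * g⁻¹ = lunit (c * ((p : Qp))⁻¹) := by
  apply Units.ext
  show (↑(g * lunit c * g⁻¹) : Mat) = lmat (c * ((p : Qp))⁻¹)
  ext i j
  rw [conjup_apply g hg (lunit c) i j, lunit_val]
  fin_cases i <;> fin_cases j <;>
    simp only [Matrix.cons_val_zero, Matrix.cons_val_one, Matrix.head_cons, Fin.zero_eta,
      Fin.mk_one, lmat_apply_00, lmat_apply_01, lmat_apply_10, lmat_apply_11, one_mul, mul_one,
      mul_zero, zero_mul]
  · exact mul_inv_cancel₀ (p_ne_zero (p := p))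

lemma lunit_mem_U1 {c : Qp} (h : ‖c‖ < 1) : lunit c ∈ (U1 : Subgroup GL2) := by
  apply mem_U1.mpr
  apply cond_of_entries
  · rw [lunit_val, lmat_apply_00]; simp
  · rw [lunit_val, lmat_apply_01]; simp
  · rwa [lunit_val, lmat_apply_10]
  · rw [lunit_val, lmat_apply_11]; simp

/-- The homomorphism `gU₁g⁻¹ →* ZMod p` reading off the bottom-left entry mod `p`. -/
noncomputable def φ (hg : (g : Matrix (Fin 2) (Fin 2) ℚ_[p]) = Matrix.diagonal ![(p : ℚ_[p]), 1]) :
    ↥(conjSubgroup g U1) →* Multiplicative (ZMod p) where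
  toFun x := Multiplicative.ofAdd (ψ (↑x : GL2))
  map_one' := by
    show Multiplicative.ofAdd (ψ ((1 : ↥(conjSubgroup g U1)) : GL2)) = 1
    have h : ‖(↑((1 : ↥(conjSubgroup g U1)) : GL2) : Mat) 1 0‖ ≤ 1 := by
      simp [Matrix.one_apply_ne (show (1 : Fin 2) ≠ 0 by decide)]
    rw [ψ_spec _ h]
    have e : (⟨(↑((1 : ↥(conjSubgroup g U1)) : GL2) : Mat) 1 0, h⟩ : ℤ_[p]) = (0 : ℤ_[p]) := by
      apply Subtype.ext
      rw [PadicInt.coe_zero]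
      simp [Matrix.one_apply_ne (show (1 : Fin 2) ≠ 0 by decide)]
    rw [e, map_zero]
    rfl
  map_mul' := by
    intro x y
    obtain ⟨hx00, hx01, hx10, hx11⟩ := K_entries g hg x.2
    obtain ⟨hy00, hy01, hy10, hy11⟩ := K_entries g hg y.2
    have hm : (↑((↑(x * y) : GL2)) : Mat) 1 0
        = (↑(↑x : GL2) : Mat) 1 0 * (↑(↑y : GL2) : Mat) 0 0
          + (↑(↑x : GL2) : Mat) 1 1 * (↑(↑y : GL2) : Mat) 1 0 := by
      rw [Subgroup.coe_mul, Units.val_mul, Matrix.mul_apply, Fin.sum_univ_two]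
    have hsum : ‖(↑(↑x : GL2) : Mat) 1 0 * (↑(↑y : GL2) : Mat) 0 0
          + (↑(↑x : GL2) : Mat) 1 1 * (↑(↑y : GL2) : Mat) 1 0‖ ≤ 1 :=
      nadd_le (nmul_le hx10 (norm_le_one_of_sub_lt hy00))
        (nmul_le (norm_le_one_of_sub_lt hx11) hy10)
    have hxy : ‖(↑((↑(x * y) : GL2)) : Mat) 1 0‖ ≤ 1 := by rw [hm]; exact hsum
    show Multiplicative.ofAdd (ψ (↑(x * y) : GL2))
      = Multiplicative.ofAdd (ψ (↑x : GL2)) * Multiplicative.ofAdd (ψ (↑y : GL2))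
    rw [← ofAdd_add]
    congr 1
    set s : ℤ_[p] := ⟨_, hsum⟩ with hs
    set ax : ℤ_[p] := ⟨(↑(↑x : GL2) : Mat) 1 0, hx10⟩ with hax
    set ay : ℤ_[p] := ⟨(↑(↑y : GL2) : Mat) 1 0, hy10⟩ with hay
    rw [ψ_spec _ hxy, ψ_spec _ hx10, ψ_spec _ hy10]; refine Eq.trans ?_ (map_add PadicInt.toZMod ax ay)
    have e1 : (⟨(↑((↑(x * y) : GL2)) : Mat) 1 0, hxy⟩ : ℤ_[p]) = s := Subtype.ext hm
    refine (congrArg PadicInt.toZMod e1).trans ?_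
    apply toZMod_eq_of_sub_lt
    rw [PadicInt.norm_def]
    have hcoe : ((s - (ax + ay) : ℤ_[p]) : Qp)
        = (↑(↑x : GL2) : Mat) 1 0 * ((↑(↑y : GL2) : Mat) 0 0 - 1)
          + ((↑(↑x : GL2) : Mat) 1 1 - 1) * (↑(↑y : GL2) : Mat) 1 0 := by
      rw [PadicInt.coe_sub, PadicInt.coe_add, hs, hax, hay]
      ring
    rw [hcoe]
    exact nadd_lt (nmul_lt_of_le_lt hx10 hy00) (nmul_lt_of_lt_le hx11 hy10)

lemma ker_φ (hg : (g : Matrix (Fin 2) (Fin 2) ℚ_[p]) = Matrix.diagonal ![(p : ℚ_[p]), 1]) :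
    (U1 : Subgroup GL2).subgroupOf (conjSubgroup g U1) = (φ g hg).ker := by
  ext x
  rw [Subgroup.mem_subgroupOf, MonoidHom.mem_ker]
  obtain ⟨h00, h01, h10, h11⟩ := K_entries g hg x.2
  have hφ : φ g hg x = Multiplicative.ofAdd (ψ (↑x : GL2)) := rfl
  rw [hφ, ψ_spec _ h10]
  rw [show (Multiplicative.ofAdd (PadicInt.toZMod (⟨(↑(↑x : GL2) : Mat) 1 0, h10⟩ : ℤ_[p])) = 1)
      ↔ PadicInt.toZMod (⟨(↑(↑x : GL2) : Mat) 1 0, h10⟩ : ℤ_[p]) = 0 from ofAdd_eq_one]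
  rw [show (PadicInt.toZMod (⟨(↑(↑x : GL2) : Mat) 1 0, h10⟩ : ℤ_[p]) = 0) ↔ _ from toZMod_eq_zero_iff _]; change _ ↔ ‖(↑(↑x : GL2) : Mat) 1 0‖ < 1
  constructor
  · intro hU
    exact (cond_entries (mem_U1.mp hU)).2.2.1
  · intro hc
    exact mem_U1_of_mem_K g hg x.2 hc

lemma φ_surjective (hg : (g : Matrix (Fin 2) (Fin 2) ℚ_[p]) = Matrix.diagonal ![(p : ℚ_[p]), 1]) :
    Function.Surjective (φ g hg) := by
  haveI : NeZero p := ⟨(hp_prime (p := p)).ne_zero⟩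
  intro z
  set n : ℕ := (Multiplicative.toAdd z).val with hn
  have hnorm1 : ‖((n : ℕ) : Qp)‖ ≤ 1 := by
    have h1 : ‖((n : ℤ) : Qp)‖ ≤ 1 := Padic.norm_int_le_one _
    rwa [show ((n : ℤ) : Qp) = ((n : ℕ) : Qp) by push_cast; ring] at h1
  have hmemK : lunit ((n : Qp)) ∈ conjSubgroup g U1 := by
    rw [mem_conjSubgroup_iff, conj_lunit_down g hg]
    apply lunit_mem_U1
    rw [norm_mul, Padic.norm_p]
    have hp0 : (0 : ℝ) < (p : ℝ) := p_pos (p := p)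
    have hinv : (p : ℝ)⁻¹ < 1 := by
      rw [inv_lt_one_iff₀]
      right
      exact_mod_cast (hp_prime (p := p)).one_lt
    calc ‖((n : ℕ) : Qp)‖ * (p : ℝ)⁻¹ ≤ 1 * (p : ℝ)⁻¹ :=
          mul_le_mul_of_nonneg_right hnorm1 (by positivity)
    _ = (p : ℝ)⁻¹ := one_mul _
    _ < 1 := hinv
  refine ⟨⟨lunit ((n : Qp)), hmemK⟩, ?_⟩
  have hnorm : ‖(↑(lunit ((n : Qp))) : Mat) 1 0‖ ≤ 1 := by
    rw [lunit_val, lmat_apply_10]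
    exact hnorm1
  have hφ : φ g hg ⟨lunit ((n : Qp)), hmemK⟩ = Multiplicative.ofAdd (ψ (lunit ((n : Qp)))) := rfl
  rw [hφ, ψ_spec _ hnorm]
  have e : (⟨(↑(lunit ((n : Qp))) : Mat) 1 0, hnorm⟩ : ℤ_[p]) = ((n : ℕ) : ℤ_[p]) := by
    apply Subtype.ext
    rw [PadicInt.coe_natCast]
    show (↑(lunit ((n : Qp))) : Mat) 1 0 = (n : Qp)
    rw [lunit_val, lmat_apply_10]
  rw [e, map_natCast]
  have h2 : ((n : ℕ) : ZMod p) = Multiplicative.toAdd z := ZMod.natCast_rightInverse _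
  rw [h2]
  exact ofAdd_toAdd z

lemma relindex_U1 (hg : (g : Matrix (Fin 2) (Fin 2) ℚ_[p]) = Matrix.diagonal ![(p : ℚ_[p]), 1]) :
    (U1 : Subgroup GL2).relIndex (conjSubgroup g U1) = p := by
  haveI : NeZero p := ⟨(hp_prime (p := p)).ne_zero⟩
  show ((U1 : Subgroup GL2).subgroupOf (conjSubgroup g U1)).index = p
  rw [ker_φ g hg, Subgroup.index_ker]
  have hr : (φ g hg).range = ⊤ := MonoidHom.range_eq_top.mpr (φ_surjective g hg)
  rw [hr, Subgroup.card_top]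
  rw [Nat.card_congr (Multiplicative.toAdd (α := ZMod p))]
  exact Nat.card_zmod p

end gsec3



/-! ### lower bound -/

/-- The additive subgroup of `ℚ_p` of lower-unipotent parameters lying in `U`. -/
def Asub (U : Subgroup GL2) : AddSubgroup Qp where
  carrier := {c | lunit c ∈ U}
  zero_mem' := by
    show lunit (0 : Qp) ∈ U
    rw [lunit_zero]
    exact U.one_mem
  add_mem' := by
    intro a b ha hb
    show lunit (a + b) ∈ U
    rw [← lunit_mul]
    exact U.mul_mem ha hb
  neg_mem' := by
    intro a ha
    show lunit (-a) ∈ U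
    rw [← lunit_inv]
    exact U.inv_mem ha

lemma mem_Asub {U : Subgroup GL2} {c : Qp} : c ∈ Asub U ↔ lunit c ∈ U := Iff.rfl

lemma p_inv_lt_one : ((p : ℝ))⁻¹ < 1 := by
  rw [inv_lt_one_iff₀]
  right
  exact_mod_cast (hp_prime (p := p)).one_lt

lemma relindex_ge (g : GL (Fin 2) ℚ_[p])
    (hg : (g : Matrix (Fin 2) (Fin 2) ℚ_[p]) = Matrix.diagonal ![(p : ℚ_[p]), 1])
    (U : Subgroup GL2) (hU : U.IsCompactOpen) :
    p ≤ U.relIndex (conjSubgroup g U) := by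
  obtain ⟨hUc, hUo⟩ := hU
  set A := Asub U with hA
  have hpre : ((A : AddSubgroup Qp) : Set Qp) = (fun c : Qp => lunit c) ⁻¹' (U : Set GL2) := rfl
  have hAopen : IsOpen ((A : AddSubgroup Qp) : Set Qp) := by
    rw [hpre]; exact hUo.preimage continuous_lunit
  have hAclosed : IsClosed ((A : AddSubgroup Qp) : Set Qp) := by
    rw [hpre]; exact (Subgroup.isClosed_of_isOpen U hUo).preimage continuous_lunit
  have himg : IsCompact ((fun x : GL2 => (↑x : Mat) 1 0) '' (U : Set GL2)) :=
    hUc.image (Continuous.matrix_elem Units.continuous_val 1 0)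
  have hAsub : ((A : AddSubgroup Qp) : Set Qp)
      ⊆ (fun x : GL2 => (↑x : Mat) 1 0) '' (U : Set GL2) := by
    intro c hc
    exact ⟨lunit c, hc, by show (↑(lunit c) : Mat) 1 0 = c; rw [lunit_val, lmat_apply_10]⟩
  have hAcomp : IsCompact ((A : AddSubgroup Qp) : Set Qp) :=
    himg.of_isClosed_subset hAclosed hAsub
  -- `A` contains a small power of `p`
  have h0 : (0 : Qp) ∈ ((A : AddSubgroup Qp) : Set Qp) := A.zero_mem
  obtain ⟨ε, hε, hball⟩ := Metric.isOpen_iff.mp hAopen 0 h0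
  obtain ⟨m, hm⟩ : ∃ m : ℕ, ((p : ℝ)⁻¹) ^ m < ε :=
    exists_pow_lt_of_lt_one hε (p_inv_lt_one (p := p))
  have hpm : ((p : Qp) ^ m) ∈ A := by
    apply hball
    rw [Metric.mem_ball, dist_zero_right, norm_pow, Padic.norm_p]
    exact hm
  have hpm_ne : ((p : Qp) ^ m) ≠ 0 := pow_ne_zero _ (p_ne_zero (p := p))
  -- a maximal-norm element of `A`
  obtain ⟨a, haA, hamax⟩ := hAcomp.exists_isMaxOn ⟨_, hpm⟩ continuous_norm.continuousOn
  have ha_pos : (0 : ℝ) < ‖a‖ := lt_of_lt_of_le (norm_pos_iff.mpr hpm_ne) (hamax hpm)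
  -- the conjugate subgroup is compact, and `U ∩ K` is open in it
  set K := conjSubgroup g U with hK
  have hKc : IsCompact ((K : Subgroup GL2) : Set GL2) := by
    have hset : ((K : Subgroup GL2) : Set GL2)
        = (fun x : GL2 => g * x * g⁻¹) '' (U : Set GL2) := by
      rw [hK]
      show ((U.map (MulAut.conj g).toMonoidHom : Subgroup GL2) : Set GL2) = _
      rw [Subgroup.coe_map]
      rfl
    rw [hset]
    exact hUc.image ((continuous_const.mul continuous_id).mul continuous_const)
  haveI : CompactSpace (K : Subgroup GL2) := isCompact_iff_compactSpace.mp hKc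
  set H := U.subgroupOf K with hH
  have hHopen : IsOpen ((H : Subgroup K) : Set K) := by
    have hset : ((H : Subgroup K) : Set K) = (Subtype.val) ⁻¹' (U : Set GL2) := by
      ext y
      exact Subgroup.mem_subgroupOf
    rw [hset]
    exact hUo.preimage continuous_subtype_val
  haveI hfin : Finite ((K : Subgroup GL2) ⧸ H) := Subgroup.quotient_finite_of_isOpen H hHopen
  -- p pairwise distinct cosets
  have hmemK : ∀ j : ℕ, (g * lunit ((j : Qp) * a) * g⁻¹) ∈ K := by
    intro j
    rw [hK, mem_conjSubgroup_iff]
    have e : g⁻¹ * (g * lunit ((j : Qp) * a) * g⁻¹) * g = lunit ((j : Qp) * a) := by group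
    rw [e]
    have hja : ((j : Qp) * a) ∈ A := by
      have hsm := AddSubgroup.nsmul_mem A haA j
      rwa [nsmul_eq_mul] at hsm
    exact hja
  set F : Fin p → ((K : Subgroup GL2) ⧸ H) :=
    fun j => QuotientGroup.mk (⟨g * lunit (((j : ℕ) : Qp) * a) * g⁻¹, hmemK (j : ℕ)⟩ : K) with hF
  have hFinj : Function.Injective F := by
    intro j k hjk
    rw [hF] at hjk
    simp only at hjk
    rw [QuotientGroup.eq] at hjk
    rw [hH, Subgroup.mem_subgroupOf] at hjk
    have hjk' : ((g * lunit (((j : ℕ) : Qp) * a) * g⁻¹)⁻¹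
        * (g * lunit (((k : ℕ) : Qp) * a) * g⁻¹)) ∈ U := by
      simpa using hjk
    have e : (g * lunit (((j : ℕ) : Qp) * a) * g⁻¹)⁻¹ * (g * lunit (((k : ℕ) : Qp) * a) * g⁻¹)
        = g * lunit (((((k : ℕ) : Qp)) - ((j : ℕ) : Qp)) * a) * g⁻¹ := by
      rw [show ((((k : ℕ) : Qp)) - ((j : ℕ) : Qp)) * a
          = -(((j : ℕ) : Qp) * a) + ((k : ℕ) : Qp) * a by ring, ← lunit_mul, ← lunit_inv]
      group
    rw [e, conj_lunit_up g hg] at hjk'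
    have hmem : ((((k : ℕ) : Qp) - ((j : ℕ) : Qp)) * a * ((p : Qp))⁻¹) ∈ A := hjk'
    have hle : ‖(((k : ℕ) : Qp) - ((j : ℕ) : Qp)) * a * ((p : Qp))⁻¹‖ ≤ ‖a‖ := hamax hmem
    rw [norm_mul, norm_mul, norm_inv, Padic.norm_p, inv_inv] at hle
    have hp1 : (1 : ℝ) < (p : ℝ) := by exact_mod_cast (hp_prime (p := p)).one_lt
    have hnn : (0 : ℝ) ≤ ‖(((k : ℕ) : Qp) - ((j : ℕ) : Qp))‖ := norm_nonneg _
    have hlt1 : ‖(((k : ℕ) : Qp) - ((j : ℕ) : Qp))‖ < 1 := by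
      by_contra hge
      push_neg at hge
      have h4 : ‖a‖ < ‖a‖ * (p : ℝ) := lt_mul_of_one_lt_right ha_pos hp1
      have h3 : (1 : ℝ) * (‖a‖ * (p : ℝ))
          ≤ ‖(((k : ℕ) : Qp) - ((j : ℕ) : Qp))‖ * (‖a‖ * (p : ℝ)) :=
        mul_le_mul_of_nonneg_right hge (by positivity)
      rw [one_mul, ← mul_assoc] at h3
      linarith
    have hcast : (((k : ℕ) : Qp) - ((j : ℕ) : Qp))
        = ((((k : ℕ) : ℤ) - ((j : ℕ) : ℤ) : ℤ) : Qp) := by push_cast; ring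
    rw [hcast] at hlt1
    have hdvd : (p : ℤ) ∣ (((k : ℕ) : ℤ) - ((j : ℕ) : ℤ)) :=
      (Padic.norm_intCast_lt_one_iff).mp hlt1
    have hmodeq : (j : ℕ) ≡ (k : ℕ) [MOD p] := by
      rw [Nat.modEq_iff_dvd]
      exact_mod_cast hdvd
    exact Fin.ext (hmodeq.eq_of_lt_of_lt j.isLt k.isLt)
  have hcard : p ≤ Nat.card ((K : Subgroup GL2) ⧸ H) := by
    have h1 : Nat.card (Fin p) = p := by simp
    calc p = Nat.card (Fin p) := h1.symm
    _ ≤ Nat.card ((K : Subgroup GL2) ⧸ H) := Nat.card_le_card_of_injective F hFinj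
  show p ≤ (U.subgroupOf K).index
  rw [Subgroup.index_eq_card]
  exact hcard

end ScaleGL2Aux

/-- The scale of `g = diag(p, 1)` in `GL₂(ℚ_p)` equals `p`. -/
theorem scale_diagonal_GL2_Qp (p : ℕ) [Fact p.Prime]
    (g : GL (Fin 2) ℚ_[p])
    (hg : (g : Matrix (Fin 2) (Fin 2) ℚ_[p]) = Matrix.diagonal ![(p : ℚ_[p]), 1]) :
    scale g = p := by
  unfold scale
  apply le_antisymm
  · exact Nat.sInf_le ⟨ScaleGL2Aux.U1, ScaleGL2Aux.U1_isCompactOpen,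
      (ScaleGL2Aux.relindex_U1 g hg).symm⟩
  · refine le_csInf ⟨p, ⟨ScaleGL2Aux.U1, ScaleGL2Aux.U1_isCompactOpen,
      (ScaleGL2Aux.relindex_U1 g hg).symm⟩⟩ ?_
    rintro n ⟨U, hU, rfl⟩
    exact ScaleGL2Aux.relindex_ge g hg U hU
end
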